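/- arXiv:2004.03131 — 7 statements merged into one kernel-verified Lean document; each statement's English description precedes it below -/
import Mathlib

section
/- For every integer n > 1 and every p ∈ (0,1), the n×n Bernoulli(p) random matrix M_n satisfies P{M_n contains a zero row or a zero column} ≥ 2 − 2(1 − (1−p)ⁿ)ⁿ − 4n²(1−p)^{2n−1}. -/
open MeasureTheory

/-- `M` is a random `n × n` matrix with i.i.d. Bernoulli(p) entries. -/
def IsBernoulliMatrix {Ω : Type*} [MeasurableSpace Ω] (μ : Measure Ω) {n : ℕ}
    (M : Ω → Matrix (Fin n) (Fin n) ℝ) (p : ℝ) : Prop :=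
  (∀ ω i j, M ω i j = 0 ∨ M ω i j = 1) ∧
  ∀ A : Matrix (Fin n) (Fin n) ℝ, (∀ i j, A i j = 0 ∨ A i j = 1) →
    μ {ω | M ω = A} =
      ENNReal.ofReal
        (p ^ (Finset.univ.filter (fun ij : Fin n × Fin n => A ij.1 ij.2 = 1)).card *
          (1 - p) ^ (Finset.univ.filter (fun ij : Fin n × Fin n => A ij.1 ij.2 = 0)).card)

section Aux
open Finset
open scoped Classical

variable {n : ℕ} {p q : ℝ}

/-- Weight of a Boolean row: product of `p` for true entries and `q` for false entries. -/
noncomputable def wrow (p q : ℝ) (r : Fin n → Bool) : ℝ := ∏ j, (if r j then p else q)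

/-- Weight of a Boolean matrix. -/
noncomputable def wmat (p q : ℝ) (B : Fin n → Fin n → Bool) : ℝ := ∏ i, wrow p q (B i)

/-- Real 0-1 matrix associated to a Boolean matrix. -/
noncomputable def bmat (B : Fin n → Fin n → Bool) : Matrix (Fin n) (Fin n) ℝ :=
  fun i j => if B i j then 1 else 0

lemma wrow_nonneg (hp : 0 ≤ p) (hq : 0 ≤ q) (r : Fin n → Bool) : 0 ≤ wrow p q r :=
  Finset.prod_nonneg fun _ _ => by split <;> assumption

lemma wmat_nonneg (hp : 0 ≤ p) (hq : 0 ≤ q) (B : Fin n → Fin n → Bool) : 0 ≤ wmat p q B :=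
  Finset.prod_nonneg fun _ _ => wrow_nonneg hp hq _

lemma sum_wrow_univ : ∑ r : Fin n → Bool, wrow p q r = (p + q) ^ n := by
  have h := Finset.prod_univ_sum (fun _ : Fin n => (Finset.univ : Finset Bool))
    (fun _ x => if x then p else q)
  rw [Fintype.piFinset_univ] at h
  simp only [wrow]
  rw [← h]
  simp [Fintype.sum_bool]

lemma wrow_const_false : wrow p q (fun _ : Fin n => false) = q ^ n := by
  simp [wrow]

lemma sum_wrow_ne_zero :
    ∑ r ∈ Finset.univ.erase (fun _ : Fin n => false), wrow p q r = (p + q) ^ n - q ^ n := by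
  have h := Finset.add_sum_erase Finset.univ (wrow p q) (Finset.mem_univ (fun _ : Fin n => false))
  rw [wrow_const_false] at h
  rw [← sum_wrow_univ (p := p) (q := q)]
  linarith [h]

lemma sum_wrow_col_false (j0 : Fin n) :
    ∑ r ∈ Finset.univ.filter (fun r : Fin n → Bool => r j0 = false), wrow p q r
      = q * (p + q) ^ (n - 1) := by
  have h := Finset.prod_univ_sum
    (fun j : Fin n => if j = j0 then ({false} : Finset Bool) else Finset.univ)
    (fun _ x => if x then p else q)
  have hset : Fintype.piFinset
      (fun j : Fin n => if j = j0 then ({false} : Finset Bool) else Finset.univ)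
      = Finset.univ.filter (fun r : Fin n → Bool => r j0 = false) := by
    ext r
    simp only [Fintype.mem_piFinset, Finset.mem_filter, Finset.mem_univ, true_and]
    constructor
    · intro hr
      have := hr j0
      simpa using this
    · intro hr j
      by_cases hj : j = j0
      · subst hj; simp [hr]
      · simp [hj]
  rw [hset] at h
  simp only [wrow]
  rw [← h]
  rw [← Finset.mul_prod_erase Finset.univ _ (Finset.mem_univ j0)]
  simp only [if_pos rfl]
  have h1 : ∀ j ∈ Finset.univ.erase j0,
      (∑ x ∈ (if j = j0 then ({false} : Finset Bool) else Finset.univ), if x then p else q)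
        = p + q := by
    intro j hj
    rw [if_neg (Finset.ne_of_mem_erase hj)]
    simp [Fintype.sum_bool]
  rw [Finset.prod_congr rfl h1, Finset.prod_const]
  simp [Finset.card_erase_of_mem]

lemma bmat_eq_zero_iff (B : Fin n → Fin n → Bool) (i j : Fin n) :
    bmat B i j = 0 ↔ B i j = false := by
  cases h : B i j <;> simp [bmat, h]

lemma bmat_eq_one_iff (B : Fin n → Fin n → Bool) (i j : Fin n) :
    bmat B i j = 1 ↔ B i j = true := by
  cases h : B i j <;> simp [bmat, h]

lemma sum_wmat_piFinset (t : Fin n → Finset (Fin n → Bool)) :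
    ∑ B ∈ Fintype.piFinset t, wmat p q B = ∏ i, ∑ r ∈ t i, wrow p q r := by
  rw [Finset.prod_univ_sum t (fun _ r => wrow p q r)]
  rfl

lemma sum_wmat_univ : ∑ B : Fin n → Fin n → Bool, wmat p q B = ((p + q) ^ n) ^ n := by
  have h := sum_wmat_piFinset (p := p) (q := q)
    (fun _ : Fin n => (Finset.univ : Finset (Fin n → Bool)))
  rw [Fintype.piFinset_univ] at h
  rw [h]
  calc ∏ _i : Fin n, ∑ r : Fin n → Bool, wrow p q r
      = ∏ _i : Fin n, (p + q) ^ n := Finset.prod_congr rfl (fun _ _ => sum_wrow_univ)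
    _ = ((p + q) ^ n) ^ n := by simp

lemma sum_wmat_no_zero_row :
    ∑ B ∈ Finset.univ.filter (fun B : Fin n → Fin n → Bool => ¬ ∃ i, ∀ j, bmat B i j = 0),
      wmat p q B = ((p + q) ^ n - q ^ n) ^ n := by
  have hset : Finset.univ.filter (fun B : Fin n → Fin n → Bool => ¬ ∃ i, ∀ j, bmat B i j = 0)
      = Fintype.piFinset (fun _ : Fin n => Finset.univ.erase (fun _ : Fin n => false)) := by
    ext B
    simp only [Finset.mem_filter, Finset.mem_univ, true_and, Fintype.mem_piFinset,
      Finset.mem_erase, and_true, not_exists]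
    constructor
    · intro h i hB
      exact h i (fun j => by rw [bmat_eq_zero_iff]; exact congrFun hB j)
    · intro h i hi
      exact h i (funext fun j => (bmat_eq_zero_iff B i j).mp (hi j))
  rw [hset, sum_wmat_piFinset]
  calc ∏ _i : Fin n, ∑ r ∈ Finset.univ.erase (fun _ : Fin n => false), wrow p q r
      = ∏ _i : Fin n, ((p + q) ^ n - q ^ n) := Finset.prod_congr rfl (fun _ _ => sum_wrow_ne_zero)
    _ = _ := by simp

lemma wmat_swap (B : Fin n → Fin n → Bool) :
    wmat p q (fun i j => B j i) = wmat p q B := by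
  simp only [wmat, wrow]
  rw [Finset.prod_comm]

lemma sum_wmat_no_zero_col :
    ∑ B ∈ Finset.univ.filter (fun B : Fin n → Fin n → Bool => ¬ ∃ j, ∀ i, bmat B i j = 0),
      wmat p q B = ((p + q) ^ n - q ^ n) ^ n := by
  rw [← sum_wmat_no_zero_row (p := p) (q := q)]
  apply Finset.sum_nbij' (fun B => fun i j => B j i) (fun B => fun i j => B j i)
  · intro B hB
    simp only [Finset.mem_filter, Finset.mem_univ, true_and, not_exists] at hB ⊢
    intro i hi
    refine hB i fun j => ?_
    have := hi j
    rwa [bmat_eq_zero_iff] at this ⊢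
  · intro B hB
    simp only [Finset.mem_filter, Finset.mem_univ, true_and, not_exists] at hB ⊢
    intro j hj
    refine hB j fun i => ?_
    have := hj i
    rwa [bmat_eq_zero_iff] at this ⊢
  · intro B _; rfl
  · intro B _; rfl
  · intro B _; exact (wmat_swap B).symm

lemma sum_wmat_cross (i0 j0 : Fin n) :
    ∑ B ∈ Finset.univ.filter
        (fun B : Fin n → Fin n → Bool => (∀ j, bmat B i0 j = 0) ∧ (∀ i, bmat B i j0 = 0)),
      wmat p q B = q ^ n * (q * (p + q) ^ (n - 1)) ^ (n - 1) := by
  have hset : Finset.univ.filter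
        (fun B : Fin n → Fin n → Bool => (∀ j, bmat B i0 j = 0) ∧ (∀ i, bmat B i j0 = 0))
      = Fintype.piFinset (fun i : Fin n =>
          if i = i0 then ({fun _ => false} : Finset (Fin n → Bool))
          else Finset.univ.filter (fun r : Fin n → Bool => r j0 = false)) := by
    ext B
    constructor
    · intro hB
      rw [Finset.mem_filter] at hB
      obtain ⟨-, hr, hc⟩ := hB
      rw [Fintype.mem_piFinset]
      intro i
      by_cases hi : i = i0
      · subst hi
        rw [if_pos rfl, Finset.mem_singleton]
        exact funext fun j => (bmat_eq_zero_iff _ _ _).mp (hr j)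
      · rw [if_neg hi, Finset.mem_filter]
        exact ⟨Finset.mem_univ _, (bmat_eq_zero_iff _ _ _).mp (hc i)⟩
    · intro hB
      rw [Fintype.mem_piFinset] at hB
      rw [Finset.mem_filter]
      have hB0 : B i0 = fun _ => false := by
        have := hB i0; rwa [if_pos rfl, Finset.mem_singleton] at this
      refine ⟨Finset.mem_univ _, fun j => ?_, fun i => ?_⟩
      · rw [bmat_eq_zero_iff]; exact congrFun hB0 j
      · by_cases hi : i = i0
        · subst hi; rw [bmat_eq_zero_iff]; exact congrFun hB0 j0
        · have := hB i; rw [if_neg hi, Finset.mem_filter] at this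
          rw [bmat_eq_zero_iff]; exact this.2
  rw [hset, sum_wmat_piFinset]
  rw [← Finset.mul_prod_erase Finset.univ _ (Finset.mem_univ i0)]
  have e1 : (if i0 = i0 then ({fun _ => false} : Finset (Fin n → Bool))
      else Finset.univ.filter (fun r : Fin n → Bool => r j0 = false)) = {fun _ => false} :=
    if_pos rfl
  rw [e1, Finset.sum_singleton]
  have h1 : wrow p q (fun _ : Fin n => false) = q ^ n := by simp [wrow]
  rw [h1]
  congr 1
  have h2 : ∀ i ∈ Finset.univ.erase i0,
      (∑ r ∈ (if i = i0 then ({fun _ => false} : Finset (Fin n → Bool))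
          else Finset.univ.filter (fun r : Fin n → Bool => r j0 = false)), wrow p q r)
        = q * (p + q) ^ (n - 1) := by
    intro i hi
    rw [if_neg (Finset.ne_of_mem_erase hi)]
    exact sum_wrow_col_false j0
  rw [Finset.prod_congr rfl h2, Finset.prod_const]
  simp [Finset.card_erase_of_mem]

lemma sum_wmat_row_and_col_le (hp : 0 ≤ p) (hq : 0 ≤ q) :
    ∑ B ∈ Finset.univ.filter (fun B : Fin n → Fin n → Bool =>
        (∃ i, ∀ j, bmat B i j = 0) ∧ (∃ j, ∀ i, bmat B i j = 0)), wmat p q B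
      ≤ (n : ℝ) ^ 2 * (q ^ n * (q * (p + q) ^ (n - 1)) ^ (n - 1)) := by
  have hnn : ∀ (c : Prop) [Decidable c] (B : Fin n → Fin n → Bool),
      0 ≤ (if c then wmat p q B else 0) := by
    intro c _ B
    split
    · exact wmat_nonneg hp hq B
    · exact le_refl 0
  have key : ∀ B : Fin n → Fin n → Bool,
      (if (∃ i, ∀ j, bmat B i j = 0) ∧ (∃ j, ∀ i, bmat B i j = 0) then wmat p q B else 0)
        ≤ ∑ ij : Fin n × Fin n,
            (if (∀ j, bmat B ij.1 j = 0) ∧ (∀ i, bmat B i ij.2 = 0) then wmat p q B else 0) := by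
    intro B
    by_cases hS : (∃ i, ∀ j, bmat B i j = 0) ∧ (∃ j, ∀ i, bmat B i j = 0)
    · rw [if_pos hS]
      obtain ⟨⟨i0, hi0⟩, ⟨j0, hj0⟩⟩ := hS
      calc wmat p q B
          = (if (∀ j, bmat B (i0, j0).1 j = 0) ∧ (∀ i, bmat B i (i0, j0).2 = 0)
              then wmat p q B else 0) := (if_pos ⟨hi0, hj0⟩).symm
        _ ≤ _ := Finset.single_le_sum
            (f := fun ij : Fin n × Fin n =>
              if (∀ j, bmat B ij.1 j = 0) ∧ (∀ i, bmat B i ij.2 = 0) then wmat p q B else 0)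
            (fun ij _ => hnn _ B) (Finset.mem_univ (i0, j0))
    · rw [if_neg hS]
      exact Finset.sum_nonneg fun ij _ => hnn _ B
  calc ∑ B ∈ Finset.univ.filter (fun B : Fin n → Fin n → Bool =>
        (∃ i, ∀ j, bmat B i j = 0) ∧ (∃ j, ∀ i, bmat B i j = 0)), wmat p q B
      = ∑ B : Fin n → Fin n → Bool,
          (if (∃ i, ∀ j, bmat B i j = 0) ∧ (∃ j, ∀ i, bmat B i j = 0)
            then wmat p q B else 0) := Finset.sum_filter _ _
    _ ≤ ∑ B : Fin n → Fin n → Bool, ∑ ij : Fin n × Fin n,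
          (if (∀ j, bmat B ij.1 j = 0) ∧ (∀ i, bmat B i ij.2 = 0) then wmat p q B else 0) :=
        Finset.sum_le_sum fun B _ => key B
    _ = ∑ ij : Fin n × Fin n, ∑ B : Fin n → Fin n → Bool,
          (if (∀ j, bmat B ij.1 j = 0) ∧ (∀ i, bmat B i ij.2 = 0) then wmat p q B else 0) :=
        Finset.sum_comm
    _ = ∑ _ij : Fin n × Fin n, q ^ n * (q * (p + q) ^ (n - 1)) ^ (n - 1) := by
        refine Finset.sum_congr rfl fun ij _ => ?_
        rw [← Finset.sum_filter]
        exact sum_wmat_cross ij.1 ij.2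
    _ = (n : ℝ) ^ 2 * (q ^ n * (q * (p + q) ^ (n - 1)) ^ (n - 1)) := by
        rw [Finset.sum_const, nsmul_eq_mul, Finset.card_univ, Fintype.card_prod,
          Fintype.card_fin]
        push_cast
        ring

lemma wmat_eq_counts (B : Fin n → Fin n → Bool) :
    wmat p q B =
      p ^ (Finset.univ.filter (fun ij : Fin n × Fin n => bmat B ij.1 ij.2 = 1)).card *
        q ^ (Finset.univ.filter (fun ij : Fin n × Fin n => bmat B ij.1 ij.2 = 0)).card := by
  have h0 : wmat p q B = ∏ ij : Fin n × Fin n, (if B ij.1 ij.2 then p else q) := by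
    rw [Fintype.prod_prod_type]
    rfl
  have e1 : Finset.univ.filter (fun ij : Fin n × Fin n => B ij.1 ij.2)
      = Finset.univ.filter (fun ij : Fin n × Fin n => bmat B ij.1 ij.2 = 1) := by
    ext ij
    simp [bmat_eq_one_iff]
  have e2 : Finset.univ.filter (fun ij : Fin n × Fin n => ¬ B ij.1 ij.2)
      = Finset.univ.filter (fun ij : Fin n × Fin n => bmat B ij.1 ij.2 = 0) := by
    ext ij
    simp [bmat_eq_zero_iff]
  rw [h0, Finset.prod_ite, Finset.prod_const, Finset.prod_const, e1, e2]

end Aux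

section Glue
open Finset
open scoped Classical

variable {n : ℕ} {p : ℝ} {Ω : Type} [MeasurableSpace Ω] {μ : Measure Ω}
  {M : Ω → Matrix (Fin n) (Fin n) ℝ}

lemma event_le (hM : IsBernoulliMatrix μ M p) (hp : 0 ≤ p) (hq : 0 ≤ 1 - p)
    (Q : Matrix (Fin n) (Fin n) ℝ → Prop) :
    μ {ω | Q (M ω)} ≤
      ENNReal.ofReal
        (∑ B ∈ Finset.univ.filter (fun B : Fin n → Fin n → Bool => Q (bmat B)),
          wmat p (1 - p) B) := by
  have hsub : {ω | Q (M ω)} ⊆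
      ⋃ B ∈ Finset.univ.filter (fun B : Fin n → Fin n → Bool => Q (bmat B)),
        {ω | M ω = bmat B} := by
    intro ω hω
    set B : Fin n → Fin n → Bool := fun i j => decide (M ω i j = 1) with hBdef
    have hMB : M ω = bmat B := by
      funext i j
      rcases hM.1 ω i j with h | h
      · have hb : B i j = false := by simp [hBdef, h]
        simp [bmat, hb, h]
      · have hb : B i j = true := by simp [hBdef, h]
        simp [bmat, hb, h]
    simp only [Set.mem_iUnion]
    refine ⟨B, ?_, hMB⟩
    rw [Finset.mem_filter]
    exact ⟨Finset.mem_univ _, hMB ▸ hω⟩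
  calc μ {ω | Q (M ω)}
      ≤ μ (⋃ B ∈ Finset.univ.filter (fun B : Fin n → Fin n → Bool => Q (bmat B)),
          {ω | M ω = bmat B}) := measure_mono hsub
    _ ≤ ∑ B ∈ Finset.univ.filter (fun B : Fin n → Fin n → Bool => Q (bmat B)),
          μ {ω | M ω = bmat B} := measure_biUnion_finset_le _ _
    _ = ∑ B ∈ Finset.univ.filter (fun B : Fin n → Fin n → Bool => Q (bmat B)),
          ENNReal.ofReal (wmat p (1 - p) B) := by
        refine Finset.sum_congr rfl fun B _ => ?_
        rw [hM.2 (bmat B) (fun i j => by cases h : B i j <;> simp [bmat, h])]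
        rw [wmat_eq_counts]
    _ = _ := (ENNReal.ofReal_sum_of_nonneg fun B _ => wmat_nonneg hp hq B).symm

end Glue

/-- Lower bound on the probability that a Bernoulli(p) matrix contains a zero row or column. -/
theorem zero_row_or_column_lower_bound :
    ∀ n : ℕ, 1 < n → ∀ p : ℝ, p ∈ Set.Ioo (0 : ℝ) 1 →
      ∀ (Ω : Type) [MeasurableSpace Ω] (μ : Measure Ω), IsProbabilityMeasure μ →
        ∀ M : Ω → Matrix (Fin n) (Fin n) ℝ, IsBernoulliMatrix μ M p →
          2 - 2 * (1 - (1 - p) ^ n) ^ n - 4 * (n : ℝ) ^ 2 * (1 - p) ^ (2 * n - 1) ≤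
            (μ {ω | (∃ i, ∀ j, M ω i j = 0) ∨ (∃ j, ∀ i, M ω i j = 0)}).toReal := by
  classical
  intro n hn p hp Ω _ μ hμ M hM
  obtain ⟨hp0, hp1⟩ := hp
  have hq0 : (0 : ℝ) ≤ 1 - p := by linarith
  have hp0' : (0 : ℝ) ≤ p := le_of_lt hp0
  have hpq : p + (1 - p) = 1 := by ring
  set q : ℝ := 1 - p with hqdef
  -- combinatorial sums
  have hrow : ∑ B ∈ Finset.univ.filter
        (fun B : Fin n → Fin n → Bool => ¬ ∃ i, ∀ j, bmat B i j = 0), wmat p q B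
      = (1 - q ^ n) ^ n := by
    rw [sum_wmat_no_zero_row, hpq, one_pow]
  have hcol : ∑ B ∈ Finset.univ.filter
        (fun B : Fin n → Fin n → Bool => ¬ ∃ j, ∀ i, bmat B i j = 0), wmat p q B
      = (1 - q ^ n) ^ n := by
    rw [sum_wmat_no_zero_col, hpq, one_pow]
  have htot : ∑ B : Fin n → Fin n → Bool, wmat p q B = 1 := by
    rw [sum_wmat_univ, hpq, one_pow, one_pow]
  have hcross : ∑ B ∈ Finset.univ.filter (fun B : Fin n → Fin n → Bool =>
        (∃ i, ∀ j, bmat B i j = 0) ∧ (∃ j, ∀ i, bmat B i j = 0)), wmat p q B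
      ≤ (n : ℝ) ^ 2 * q ^ (2 * n - 1) := by
    have h := sum_wmat_row_and_col_le (n := n) hp0' hq0
    have e : q ^ n * (q * (p + q) ^ (n - 1)) ^ (n - 1) = q ^ (2 * n - 1) := by
      rw [hpq, one_pow, mul_one, ← pow_add]
      congr 1
      omega
    rw [e] at h
    exact h
  -- inclusion-exclusion on sums
  set A := Finset.univ.filter
    (fun B : Fin n → Fin n → Bool => ¬ ∃ i, ∀ j, bmat B i j = 0) with hA
  set C := Finset.univ.filter
    (fun B : Fin n → Fin n → Bool => ¬ ∃ j, ∀ i, bmat B i j = 0) with hC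
  have hinter : A ∩ C = Finset.univ.filter (fun B : Fin n → Fin n → Bool =>
      ¬ ((∃ i, ∀ j, bmat B i j = 0) ∨ (∃ j, ∀ i, bmat B i j = 0))) := by
    ext B
    simp only [hA, hC, Finset.mem_inter, Finset.mem_filter, Finset.mem_univ, true_and, not_or]
  have hunion : A ∪ C = Finset.univ.filter (fun B : Fin n → Fin n → Bool =>
      ¬ ((∃ i, ∀ j, bmat B i j = 0) ∧ (∃ j, ∀ i, bmat B i j = 0))) := by
    ext B
    simp only [hA, hC, Finset.mem_union, Finset.mem_filter, Finset.mem_univ, true_and,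
      not_and_or]
  have hIE := Finset.sum_union_inter (s₁ := A) (s₂ := C) (f := wmat p q)
  have hsplit := Finset.sum_filter_add_sum_filter_not Finset.univ
    (fun B : Fin n → Fin n → Bool =>
      (∃ i, ∀ j, bmat B i j = 0) ∧ (∃ j, ∀ i, bmat B i j = 0)) (wmat p q)
  rw [htot] at hsplit
  -- so: sum over A∪C = 1 - sum over (row∧col)-filter ≥ 1 - n² q^(2n-1)
  have hS : ∑ B ∈ A ∩ C, wmat p q B
      ≤ 2 * (1 - q ^ n) ^ n - 1 + (n : ℝ) ^ 2 * q ^ (2 * n - 1) := by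
    have h1 : ∑ B ∈ A, wmat p q B = (1 - q ^ n) ^ n := hrow
    have h2 : ∑ B ∈ C, wmat p q B = (1 - q ^ n) ^ n := hcol
    have h3 : ∑ B ∈ A ∪ C, wmat p q B
        = 1 - ∑ B ∈ Finset.univ.filter (fun B : Fin n → Fin n → Bool =>
            (∃ i, ∀ j, bmat B i j = 0) ∧ (∃ j, ∀ i, bmat B i j = 0)), wmat p q B := by
      rw [hunion]
      linarith [hsplit]
    linarith [hIE, hcross, h3]
  -- measure part
  set T : Set Ω := {ω | (∃ i, ∀ j, M ω i j = 0) ∨ (∃ j, ∀ i, M ω i j = 0)} with hT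
  set S : ℝ := ∑ B ∈ A ∩ C, wmat p q B with hSdef
  have hS0 : 0 ≤ S := Finset.sum_nonneg fun B _ => wmat_nonneg hp0' hq0 B
  have hTc : μ {ω | ¬ ((∃ i, ∀ j, M ω i j = 0) ∨ (∃ j, ∀ i, M ω i j = 0))}
      ≤ ENNReal.ofReal S := by
    have h := event_le (n := n) hM hp0' hq0
      (fun Amat => ¬ ((∃ i, ∀ j, Amat i j = 0) ∨ (∃ j, ∀ i, Amat i j = 0)))
    rw [hSdef, hinter]
    convert h using 2
    simp only [hqdef]
    congr! 1
    ext B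
    simp only [Finset.mem_filter]
  have hone : (1 : ENNReal) ≤ μ T + ENNReal.ofReal S := by
    have hcover : (Set.univ : Set Ω) ⊆
        T ∪ {ω | ¬ ((∃ i, ∀ j, M ω i j = 0) ∨ (∃ j, ∀ i, M ω i j = 0))} := by
      intro ω _
      by_cases h : (∃ i, ∀ j, M ω i j = 0) ∨ (∃ j, ∀ i, M ω i j = 0)
      · exact Or.inl h
      · exact Or.inr h
    calc (1 : ENNReal) = μ Set.univ := (measure_univ).symm
      _ ≤ μ (T ∪ {ω | ¬ ((∃ i, ∀ j, M ω i j = 0) ∨ (∃ j, ∀ i, M ω i j = 0))}) :=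
          measure_mono hcover
      _ ≤ μ T + μ {ω | ¬ ((∃ i, ∀ j, M ω i j = 0) ∨ (∃ j, ∀ i, M ω i j = 0))} :=
          measure_union_le _ _
      _ ≤ μ T + ENNReal.ofReal S := by exact add_le_add le_rfl hTc
  have hlow : ENNReal.ofReal (1 - S) ≤ μ T := by
    rw [ENNReal.ofReal_sub _ hS0, ENNReal.ofReal_one]
    exact tsub_le_iff_right.mpr hone
  have hfin : μ T ≠ ⊤ := measure_ne_top μ T
  have hlow' : 1 - S ≤ (μ T).toReal := (ENNReal.ofReal_le_iff_le_toReal hfin).mp hlow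
  have hq2 : 0 ≤ (n : ℝ) ^ 2 * q ^ (2 * n - 1) := by positivity
  calc 2 - 2 * (1 - q ^ n) ^ n - 4 * (n : ℝ) ^ 2 * q ^ (2 * n - 1)
      ≤ 1 - S := by linarith [hS]
    _ ≤ (μ T).toReal := hlow'
end

section
/- Let n ≥ 1 and δ, ρ, r ∈ (0,1). Set k = ⌈δn⌉ and m = ⌊rn⌋, and assume n ≥ 2m > 4k. Let x ∈ Υ_n(r) be such that there do NOT exist subsets Q₁, Q₂ ⊆ {1,…,n} with |Q₁|, |Q₂| ≥ δn and max_{i∈Q₂} x_i ≤ min_{i∈Q₁} x_i − ρ. Then there exist a set A ⊆ {1,…,n} with |A| > n − m and a real number λ with |λ| = 1 such that |x_i − λ| < ρ for every i ∈ A. -/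
/-- The `k`-th largest value of `(|x i|)_i` (one-indexed, for `1 ≤ k ≤ n`). -/
noncomputable def ordStat {n : ℕ} (x : Fin n → ℝ) (k : ℕ) : ℝ :=
  sSup {t : ℝ | k ≤ (Finset.univ.filter fun i => t ≤ |x i|).card}

namespace OrdStatAux

open Finset

variable {n : ℕ}

def S (x : Fin n → ℝ) (m : ℕ) : Set ℝ :=
  {t : ℝ | m ≤ (Finset.univ.filter fun i => t ≤ |x i|).card}

lemma S_downward (x : Fin n → ℝ) {m : ℕ} {t t' : ℝ} (h : t ∈ S x m) (h' : t' ≤ t) :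
    t' ∈ S x m := by
  refine le_trans h (Finset.card_le_card ?_)
  intro i hi
  rw [Finset.mem_filter] at hi ⊢
  exact ⟨hi.1, le_trans h' hi.2⟩

lemma S_nonempty (x : Fin n → ℝ) {m : ℕ} (hmn : m ≤ n) : (S x m).Nonempty := by
  refine ⟨0, ?_⟩
  have : (Finset.univ.filter fun i => (0:ℝ) ≤ |x i|) = Finset.univ := by
    apply Finset.filter_true_of_mem
    intro i _; exact abs_nonneg _
  simp only [S, Set.mem_setOf_eq, this, Finset.card_univ, Fintype.card_fin]
  exact hmn

lemma S_bddAbove (x : Fin n → ℝ) {m : ℕ} (hm : 1 ≤ m) (hn : 1 ≤ n) : BddAbove (S x m) := by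
  have hne : (Finset.univ : Finset (Fin n)).Nonempty := by
    refine ⟨⟨0, hn⟩, Finset.mem_univ _⟩
  refine ⟨Finset.univ.sup' hne (fun i => |x i|), ?_⟩
  intro t ht
  have hcard : 1 ≤ (Finset.univ.filter fun i => t ≤ |x i|).card := le_trans hm ht
  obtain ⟨i, hi⟩ := Finset.card_pos.mp hcard
  have := (Finset.mem_filter.mp hi).2
  exact le_trans this (Finset.le_sup' (fun i => |x i|) (Finset.mem_univ i))

lemma count_ge (x : Fin n → ℝ) {m : ℕ} (hm : 1 ≤ m) (hmn : m ≤ n)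
    (h : ordStat x m = 1) :
    m ≤ (Finset.univ.filter fun i => (1:ℝ) ≤ |x i|).card := by
  have hn : 1 ≤ n := le_trans hm hmn
  have hsup : sSup (S x m) = 1 := h
  by_contra hc
  push_neg at hc
  set T := Finset.univ.filter (fun i => |x i| < 1) with hT
  by_cases hTne : T.Nonempty
  · set t₀ := T.sup' hTne (fun i => |x i|) with ht₀
    have ht₀lt : t₀ < 1 := by
      rw [ht₀, Finset.sup'_lt_iff]
      intro i hi
      exact (Finset.mem_filter.mp hi).2
    set t := (t₀ + 1) / 2 with htdef
    have htlt1 : t < 1 := by rw [htdef]; linarith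
    have ht₀lt_t : t₀ < t := by rw [htdef]; linarith
    have hfeq : (Finset.univ.filter fun i => t ≤ |x i|) =
        (Finset.univ.filter fun i => (1:ℝ) ≤ |x i|) := by
      apply Finset.filter_congr
      intro i _
      constructor
      · intro hti
        by_contra hlt1
        push_neg at hlt1
        have hiT : i ∈ T := Finset.mem_filter.mpr ⟨Finset.mem_univ _, hlt1⟩
        have : |x i| ≤ t₀ := Finset.le_sup' (fun i => |x i|) hiT
        linarith
      · intro h1; linarith
    have htnotS : t ∉ S x m := by
      intro hts
      rw [S, Set.mem_setOf_eq, hfeq] at hts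
      omega
    obtain ⟨s, hs, hts⟩ := exists_lt_of_lt_csSup (S_nonempty x hmn) (hsup ▸ htlt1)
    exact htnotS (S_downward x hs (le_of_lt hts))
  · -- T empty: every |x i| ≥ 1
    have : (Finset.univ.filter fun i => (1:ℝ) ≤ |x i|) = Finset.univ := by
      apply Finset.filter_true_of_mem
      intro i _
      by_contra hlt
      push_neg at hlt
      exact hTne ⟨i, Finset.mem_filter.mpr ⟨Finset.mem_univ _, hlt⟩⟩
    rw [this] at hc
    simp only [Finset.card_univ, Fintype.card_fin] at hc
    omega

lemma count_gt (x : Fin n → ℝ) {m : ℕ} (hm : 1 ≤ m) (hmn : m ≤ n)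
    (h : ordStat x m = 1) :
    (Finset.univ.filter fun i => (1:ℝ) < |x i|).card < m := by
  have hn : 1 ≤ n := le_trans hm hmn
  have hsup : sSup (S x m) = 1 := h
  set U := Finset.univ.filter (fun i => (1:ℝ) < |x i|) with hU
  by_cases hUne : U.Nonempty
  · set t := U.inf' hUne (fun i => |x i|) with htdef
    have ht1 : 1 < t := by
      rw [htdef, Finset.lt_inf'_iff]
      intro i hi
      exact (Finset.mem_filter.mp hi).2
    have hfeq : (Finset.univ.filter fun i => t ≤ |x i|) = U := by
      apply Finset.filter_congr
      intro i _
      constructor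
      · intro hti; exact lt_of_lt_of_le ht1 hti
      · intro h1
        exact Finset.inf'_le (fun i => |x i|) (Finset.mem_filter.mpr ⟨Finset.mem_univ _, h1⟩)
    by_contra hc
    push_neg at hc
    have htS : t ∈ S x m := by
      rw [S, Set.mem_setOf_eq, hfeq]; exact hc
    have := le_csSup (S_bddAbove x hm hn) htS
    rw [hsup] at this
    linarith
  · rw [Finset.not_nonempty_iff_eq_empty] at hUne
    rw [hUne]
    simpa using (show 0 < m from hm)

/-- The positive case: if many coordinates are `≥ 1`, then most are `ρ`-close to `1`. -/
lemma case_pos {m k : ℕ} {δ ρ : ℝ} (hδ : 0 < δ) (hρ : 0 < ρ)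
    (hδk : δ * n ≤ k) (h2k : 2 * k < m) (hmn : 2 * m ≤ n)
    (x : Fin n → ℝ)
    (hlt : (Finset.univ.filter fun i => (1:ℝ) < |x i|).card < m)
    (hP : k < (Finset.univ.filter fun i => (1:ℝ) ≤ x i).card)
    (hx : ¬ ∃ Q₁ Q₂ : Finset (Fin n), δ * n ≤ Q₁.card ∧ δ * n ≤ Q₂.card ∧
            ∀ i ∈ Q₁, ∀ j ∈ Q₂, x j ≤ x i - ρ) :
    ∃ A : Finset (Fin n), n - m < A.card ∧ ∀ i ∈ A, |x i - 1| < ρ := by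
  push_neg at hx
  set P := Finset.univ.filter (fun i => (1:ℝ) ≤ x i) with hPdef
  set B := Finset.univ.filter (fun i => x i ≤ 1 - ρ) with hBdef
  set C := Finset.univ.filter (fun i => 1 + ρ ≤ x i) with hCdef
  set D := Finset.univ.filter (fun i => x i ≤ 1) with hDdef
  have hPc : δ * ↑n ≤ (P.card : ℝ) := by
    refine le_trans hδk ?_
    exact_mod_cast le_of_lt hP
  -- D is large
  have hDc : k < D.card := by
    have hsub : Finset.univ.filter (fun i => ¬ (x i ≤ 1)) ⊆
        Finset.univ.filter (fun i => (1:ℝ) < |x i|) := by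
      intro i hi
      simp only [Finset.mem_filter, Finset.mem_univ, true_and, not_le] at hi ⊢
      exact lt_of_lt_of_le hi (le_abs_self _)
    have hcards := Finset.card_filter_add_card_filter_not
      (s := (Finset.univ : Finset (Fin n))) (p := fun i => x i ≤ 1)
    have hle := Finset.card_le_card hsub
    simp only [Finset.card_univ, Fintype.card_fin] at hcards
    rw [← hDdef] at hcards
    omega
  have hDcR : δ * ↑n ≤ (D.card : ℝ) := le_trans hδk (by exact_mod_cast le_of_lt hDc)
  -- B is small
  have hBc : (B.card : ℝ) < δ * n := by
    by_contra hge
    push_neg at hge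
    obtain ⟨i, hi, j, hj, hcon⟩ := hx P B hPc hge
    rw [hPdef, Finset.mem_filter] at hi
    rw [hBdef, Finset.mem_filter] at hj
    linarith [hi.2, hj.2, hcon]
  -- C is small
  have hCc : (C.card : ℝ) < δ * n := by
    by_contra hge
    push_neg at hge
    obtain ⟨i, hi, j, hj, hcon⟩ := hx C D hge hDcR
    rw [hCdef, Finset.mem_filter] at hi
    rw [hDdef, Finset.mem_filter] at hj
    linarith [hi.2, hj.2, hcon]
  have hBk : B.card < k := by
    exact_mod_cast lt_of_lt_of_le hBc hδk
  have hCk : C.card < k := by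
    exact_mod_cast lt_of_lt_of_le hCc hδk
  refine ⟨Finset.univ.filter (fun i => |x i - 1| < ρ), ?_, ?_⟩
  · have hsub : Finset.univ.filter (fun i => ¬ (|x i - 1| < ρ)) ⊆ B ∪ C := by
      intro i hi
      simp only [Finset.mem_filter, Finset.mem_univ, true_and, not_lt] at hi
      rcases le_abs.mp hi with h1 | h1
      · exact Finset.mem_union_right _ (Finset.mem_filter.mpr ⟨Finset.mem_univ _, by linarith⟩)
      · exact Finset.mem_union_left _ (Finset.mem_filter.mpr ⟨Finset.mem_univ _, by linarith⟩)
    have hle := le_trans (Finset.card_le_card hsub) (Finset.card_union_le B C)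
    have hcards := Finset.card_filter_add_card_filter_not
      (s := (Finset.univ : Finset (Fin n))) (p := fun i => |x i - 1| < ρ)
    simp only [Finset.card_univ, Fintype.card_fin] at hcards
    omega
  · intro i hi
    exact (Finset.mem_filter.mp hi).2

end OrdStatAux

/-- A vector in `Υ_n(r)` which is not essentially non-constant is almost constant. -/
theorem almost_constant_of_not_nonconstant :
    ∀ n : ℕ, 1 ≤ n → ∀ δ ρ r : ℝ,
      δ ∈ Set.Ioo (0 : ℝ) 1 → ρ ∈ Set.Ioo (0 : ℝ) 1 → r ∈ Set.Ioo (0 : ℝ) 1 →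
      2 * ⌊r * (n : ℝ)⌋₊ ≤ n → 4 * ⌈δ * (n : ℝ)⌉₊ < 2 * ⌊r * (n : ℝ)⌋₊ →
      ∀ x : Fin n → ℝ, ordStat x ⌊r * (n : ℝ)⌋₊ = 1 →
        (¬ ∃ Q₁ Q₂ : Finset (Fin n), δ * n ≤ Q₁.card ∧ δ * n ≤ Q₂.card ∧
            ∀ i ∈ Q₁, ∀ j ∈ Q₂, x j ≤ x i - ρ) →
        ∃ A : Finset (Fin n), (n : ℕ) - ⌊r * (n : ℝ)⌋₊ < A.card ∧
          ∃ lam : ℝ, |lam| = 1 ∧ ∀ i ∈ A, |x i - lam| < ρ := by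
  intro n hn δ ρ r hδ hρ hr hmn h4k x hord hx
  set m := ⌊r * (n : ℝ)⌋₊ with hmdef
  set k := ⌈δ * (n : ℝ)⌉₊ with hkdef
  have hk1 : 1 ≤ k := Nat.ceil_pos.mpr (mul_pos hδ.1 (by exact_mod_cast hn))
  have h2k : 2 * k < m := by omega
  have hm1 : 1 ≤ m := by omega
  have hmlen : m ≤ n := by omega
  have hδk : δ * (n : ℝ) ≤ (k : ℝ) := Nat.le_ceil _
  have hge := OrdStatAux.count_ge x hm1 hmlen hord
  have hlt := OrdStatAux.count_gt x hm1 hmlen hord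
  set P := Finset.univ.filter (fun i => (1:ℝ) ≤ x i) with hPdef
  set N := Finset.univ.filter (fun i => x i ≤ -1) with hNdef
  have hsub : (Finset.univ.filter fun i => (1:ℝ) ≤ |x i|) ⊆ P ∪ N := by
    intro i hi
    simp only [Finset.mem_filter, Finset.mem_univ, true_and] at hi
    rcases le_abs.mp hi with h1 | h1
    · exact Finset.mem_union_left _ (Finset.mem_filter.mpr ⟨Finset.mem_univ _, h1⟩)
    · exact Finset.mem_union_right _ (Finset.mem_filter.mpr ⟨Finset.mem_univ _, by linarith⟩)
  have hPN : m ≤ P.card + N.card :=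
    le_trans hge (le_trans (Finset.card_le_card hsub) (Finset.card_union_le P N))
  rcases lt_or_ge k P.card with hP | hP
  · obtain ⟨A, hA, hAρ⟩ := OrdStatAux.case_pos hδ.1 hρ.1 hδk h2k hmn x hlt hP hx
    exact ⟨A, hA, 1, by norm_num, hAρ⟩
  · have hN : k < N.card := by omega
    -- apply the positive case to -x
    have hlt' : (Finset.univ.filter fun i => (1:ℝ) < |(-x) i|).card < m := by
      have : (Finset.univ.filter fun i => (1:ℝ) < |(-x) i|) =
          (Finset.univ.filter fun i => (1:ℝ) < |x i|) := by
        apply Finset.filter_congr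
        intro i _
        simp [abs_neg]
      rw [this]; exact hlt
    have hP' : k < (Finset.univ.filter fun i => (1:ℝ) ≤ (-x) i).card := by
      have : (Finset.univ.filter fun i => (1:ℝ) ≤ (-x) i) = N := by
        apply Finset.filter_congr
        intro i _
        simp only [Pi.neg_apply, hNdef, le_neg]
      rw [this]; exact hN
    have hx' : ¬ ∃ Q₁ Q₂ : Finset (Fin n), δ * n ≤ Q₁.card ∧ δ * n ≤ Q₂.card ∧
        ∀ i ∈ Q₁, ∀ j ∈ Q₂, (-x) j ≤ (-x) i - ρ := by
      rintro ⟨Q₁, Q₂, h1, h2, h3⟩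
      refine hx ⟨Q₂, Q₁, h2, h1, ?_⟩
      intro i hi j hj
      have := h3 j hj i hi
      simp only [Pi.neg_apply] at this
      linarith
    obtain ⟨A, hA, hAρ⟩ := OrdStatAux.case_pos hδ.1 hρ.1 hδk h2k hmn (-x) hlt' hP' hx'
    refine ⟨A, hA, -1, by norm_num, ?_⟩
    intro i hi
    have := hAρ i hi
    simp only [Pi.neg_apply] at this
    calc |x i - (-1)| = |(-x) i - 1| := by simp only [Pi.neg_apply]; rw [← abs_neg]; ring_nf
    _ < ρ := this
end

section
/- For every R ≥ 1 there exists C ≥ 1 depending only on R with the following property. Let n ≥ 1 and p ∈ (0,1) satisfy C·p ≤ 1 and C ≤ p·n, and let M be an n×n Bernoulli(p) random matrix. Then with probability at least 1 − exp(−n/C), the number of indices i ∈ {2,…,n} for which |supp C_i(M)| ∉ [pn/8, 8pn] is at most ⌊(pR)⁻¹⌋. -/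
open MeasureTheory

open Finset

lemma sum_prod_pi {ι β : Type*} [Fintype ι] [DecidableEq ι] [Fintype β] (F : ι → β → ℝ) :
    ∑ g : ι → β, ∏ i, F i (g i) = ∏ i, ∑ b, F i b := by
  classical
  rw [Finset.prod_univ_sum]
  rw [Fintype.piFinset_univ]

lemma bool_mgf {n : ℕ} (u : Bool → ℝ) :
    ∑ c : Fin n → Bool, ∏ k, u (c k) = (u true + u false) ^ n := by
  rw [sum_prod_pi (fun _ : Fin n => u)]
  simp [Fintype.sum_bool]

lemma pow_card_eq_prod {α : Type*} [Fintype α] (c : α → Bool) (θ : ℝ) :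
    θ ^ (univ.filter fun k => c k = true).card = ∏ k, (if c k then θ else 1) := by
  rw [Finset.prod_ite, Finset.prod_const, Finset.prod_const, one_pow, mul_one]

lemma mgf_pow {n : ℕ} (θ p : ℝ) :
    ∑ c : Fin n → Bool, θ ^ (univ.filter fun k => c k = true).card *
      ∏ k, (if c k then p else 1-p) = (θ * p + (1-p)) ^ n := by
  have h : ∀ c : Fin n → Bool, θ ^ (univ.filter fun k => c k = true).card *
      ∏ k, (if c k then p else 1-p) = ∏ k, (if c k then θ*p else 1-p) := by
    intro c
    rw [pow_card_eq_prod, ← Finset.prod_mul_distrib]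
    apply Finset.prod_congr rfl
    intro k _
    by_cases h : c k <;> simp [h]
  rw [Finset.sum_congr rfl (fun c _ => h c)]
  exact bool_mgf (fun b => if b then θ*p else 1-p)

lemma V_nonneg {n : ℕ} {p : ℝ} (hp0 : 0 < p) (hp1 : p < 1) (c : Fin n → Bool) :
    0 ≤ ∏ k, (if c k then p else 1-p) := by
  apply Finset.prod_nonneg
  intro k _
  by_cases h : c k <;> simp [h] <;> linarith

lemma tail_low {n : ℕ} {p : ℝ} (hp0 : 0 < p) (hp1 : p < 1) :
    ∑ c ∈ univ.filter
        (fun c : Fin n → Bool => ((univ.filter fun k => c k = true).card : ℝ) < p*n/8),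
      ∏ k, (if c k then p else 1-p) ≤ Real.exp (-(p*n/4)) := by
  have hpn : (0:ℝ) ≤ p * n := by positivity
  set V : (Fin n → Bool) → ℝ := fun c => ∏ k, (if c k then p else 1-p) with hV
  set A : ℝ := (2:ℝ) ^ (p*n/8) with hA
  have step1 : ∑ c ∈ univ.filter
        (fun c : Fin n → Bool => ((univ.filter fun k => c k = true).card : ℝ) < p*n/8),
      V c ≤ A * ∑ c : Fin n → Bool,
        (1/2:ℝ) ^ (univ.filter fun k => c k = true).card * V c := by
    have hterm : ∀ c ∈ univ.filter
        (fun c : Fin n → Bool => ((univ.filter fun k => c k = true).card : ℝ) < p*n/8),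
        V c ≤ A * ((1/2:ℝ) ^ (univ.filter fun k => c k = true).card * V c) := by
      intro c hc
      have hc' : ((univ.filter fun k => c k = true).card : ℝ) ≤ p*n/8 := by
        rcases Finset.mem_filter.mp hc with ⟨_, h⟩
        linarith
      have h1 : (1:ℝ) ≤ A * (1/2:ℝ) ^ (univ.filter fun k => c k = true).card := by
        have : A * (1/2:ℝ) ^ (univ.filter fun k => c k = true).card
            = (2:ℝ) ^ (p*n/8 - ((univ.filter fun k => c k = true).card : ℝ)) := by
          rw [hA, ← Real.rpow_natCast (1/2:ℝ), Real.rpow_sub (by norm_num)]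
          rw [one_div, Real.inv_rpow (by norm_num)]
          ring
        rw [this]
        apply Real.one_le_rpow (by norm_num)
        linarith
      calc V c = 1 * V c := (one_mul _).symm
        _ ≤ (A * (1/2:ℝ) ^ (univ.filter fun k => c k = true).card) * V c := by
            apply mul_le_mul_of_nonneg_right h1 (V_nonneg hp0 hp1 c)
        _ = A * ((1/2:ℝ) ^ (univ.filter fun k => c k = true).card * V c) := by ring
    refine (Finset.sum_le_sum hterm).trans ?_
    rw [← Finset.mul_sum]
    apply mul_le_mul_of_nonneg_left _ (Real.rpow_nonneg (by norm_num) _)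
    apply Finset.sum_le_sum_of_subset_of_nonneg (Finset.filter_subset _ _)
    intro c _ _
    have := V_nonneg hp0 hp1 c
    positivity
  have step2 : ∑ c : Fin n → Bool,
      (1/2:ℝ) ^ (univ.filter fun k => c k = true).card * V c = (1 - p/2) ^ n := by
    rw [hV, mgf_pow]
    ring_nf
  rw [step2] at step1
  apply step1.trans
  have h2 : (1 - p/2) ^ n ≤ Real.exp (-(p/2)) ^ n := by
    apply pow_le_pow_left₀ (by linarith) (by linarith [Real.add_one_le_exp (-(p/2))])
  have h3 : A = Real.exp (Real.log 2 * (p*n/8)) := by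
    rw [hA, Real.rpow_def_of_pos (by norm_num)]
  have h4 : Real.exp (-(p/2)) ^ n = Real.exp (n * -(p/2)) := (Real.exp_nat_mul _ n).symm
  calc A * (1 - p/2) ^ n ≤ A * Real.exp (-(p/2)) ^ n := by
        apply mul_le_mul_of_nonneg_left h2 (Real.rpow_nonneg (by norm_num) _)
    _ = Real.exp (Real.log 2 * (p*n/8) + n * -(p/2)) := by
        rw [h3, h4, Real.exp_add]
    _ ≤ Real.exp (-(p*n/4)) := by
        apply Real.exp_le_exp.mpr
        have hl2 : Real.log 2 < 0.6931471808 := Real.log_two_lt_d9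
        have hl2' : (0:ℝ) < Real.log 2 := Real.log_pos (by norm_num)
        nlinarith [hpn]

lemma tail_high {n : ℕ} {p : ℝ} (hp0 : 0 < p) (hp1 : p < 1) :
    ∑ c ∈ univ.filter
        (fun c : Fin n → Bool => 8*p*n < ((univ.filter fun k => c k = true).card : ℝ)),
      ∏ k, (if c k then p else 1-p) ≤ Real.exp (-(p*n/4)) := by
  have hpn : (0:ℝ) ≤ p * n := by positivity
  set V : (Fin n → Bool) → ℝ := fun c => ∏ k, (if c k then p else 1-p) with hV
  set A : ℝ := (1/2:ℝ) ^ (8*p*n) with hA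
  have hA0 : (0:ℝ) ≤ A := Real.rpow_nonneg (by norm_num) _
  have step1 : ∑ c ∈ univ.filter
        (fun c : Fin n → Bool => 8*p*n < ((univ.filter fun k => c k = true).card : ℝ)),
      V c ≤ A * ∑ c : Fin n → Bool,
        (2:ℝ) ^ (univ.filter fun k => c k = true).card * V c := by
    have hterm : ∀ c ∈ univ.filter
        (fun c : Fin n → Bool => 8*p*n < ((univ.filter fun k => c k = true).card : ℝ)),
        V c ≤ A * ((2:ℝ) ^ (univ.filter fun k => c k = true).card * V c) := by
      intro c hc
      have hc' : 8*p*n ≤ ((univ.filter fun k => c k = true).card : ℝ) := by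
        rcases Finset.mem_filter.mp hc with ⟨_, h⟩
        linarith
      have h1 : (1:ℝ) ≤ A * (2:ℝ) ^ (univ.filter fun k => c k = true).card := by
        have : A * (2:ℝ) ^ (univ.filter fun k => c k = true).card
            = (2:ℝ) ^ (((univ.filter fun k => c k = true).card : ℝ) - 8*p*n) := by
          rw [hA, ← Real.rpow_natCast (2:ℝ), Real.rpow_sub (by norm_num)]
          rw [one_div, Real.inv_rpow (by norm_num)]
          ring
        rw [this]
        apply Real.one_le_rpow (by norm_num)
        linarith
      calc V c = 1 * V c := (one_mul _).symm
        _ ≤ (A * (2:ℝ) ^ (univ.filter fun k => c k = true).card) * V c := by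
            apply mul_le_mul_of_nonneg_right h1 (V_nonneg hp0 hp1 c)
        _ = A * ((2:ℝ) ^ (univ.filter fun k => c k = true).card * V c) := by ring
    refine (Finset.sum_le_sum hterm).trans ?_
    rw [← Finset.mul_sum]
    apply mul_le_mul_of_nonneg_left _ hA0
    apply Finset.sum_le_sum_of_subset_of_nonneg (Finset.filter_subset _ _)
    intro c _ _
    have := V_nonneg hp0 hp1 c
    positivity
  have step2 : ∑ c : Fin n → Bool,
      (2:ℝ) ^ (univ.filter fun k => c k = true).card * V c = (1 + p) ^ n := by
    rw [hV, mgf_pow]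
    ring_nf
  rw [step2] at step1
  apply step1.trans
  have h2 : (1 + p) ^ n ≤ Real.exp p ^ n := by
    apply pow_le_pow_left₀ (by linarith) (by linarith [Real.add_one_le_exp p])
  have h3 : A = Real.exp (-(Real.log 2) * (8*p*n)) := by
    rw [hA, Real.rpow_def_of_pos (by norm_num), one_div, Real.log_inv]
  have h4 : Real.exp p ^ n = Real.exp (n * p) := (Real.exp_nat_mul _ n).symm
  calc A * (1 + p) ^ n ≤ A * Real.exp p ^ n := by
        apply mul_le_mul_of_nonneg_left h2 hA0
    _ = Real.exp (-(Real.log 2) * (8*p*n) + n * p) := by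
        rw [h3, h4, Real.exp_add]
    _ ≤ Real.exp (-(p*n/4)) := by
        apply Real.exp_le_exp.mpr
        have hl2 : (0.6931471803:ℝ) < Real.log 2 := Real.log_two_gt_d9
        nlinarith [hpn]

lemma col_bad_le {n : ℕ} {p : ℝ} (hp0 : 0 < p) (hp1 : p < 1) (i : Fin n) :
    ∑ c ∈ univ.filter (fun c : Fin n → Bool => (i:ℕ) ≠ 0 ∧
        ¬(p*n/8 ≤ ((univ.filter fun k => c k = true).card : ℝ) ∧
          ((univ.filter fun k => c k = true).card : ℝ) ≤ 8*p*n)),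
      ∏ k, (if c k then p else 1-p) ≤ 2 * Real.exp (-(p*n/4)) := by
  classical
  have hpn : (0:ℝ) ≤ p * n := by positivity
  set L := univ.filter
      (fun c : Fin n → Bool => ((univ.filter fun k => c k = true).card : ℝ) < p*n/8) with hL
  set H := univ.filter
      (fun c : Fin n → Bool => 8*p*n < ((univ.filter fun k => c k = true).card : ℝ)) with hH
  have hsub : univ.filter (fun c : Fin n → Bool => (i:ℕ) ≠ 0 ∧
      ¬(p*n/8 ≤ ((univ.filter fun k => c k = true).card : ℝ) ∧
        ((univ.filter fun k => c k = true).card : ℝ) ≤ 8*p*n)) ⊆ L ∪ H := by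
    intro c hc
    rcases Finset.mem_filter.mp hc with ⟨_, _, h⟩
    rw [not_and_or, not_le, not_le] at h
    rcases h with h | h
    · exact Finset.mem_union_left _ (Finset.mem_filter.mpr ⟨Finset.mem_univ _, h⟩)
    · exact Finset.mem_union_right _ (Finset.mem_filter.mpr ⟨Finset.mem_univ _, h⟩)
  have hdisj : Disjoint L H := by
    rw [Finset.disjoint_left]
    intro c hc1 hc2
    rcases Finset.mem_filter.mp hc1 with ⟨_, h1⟩
    rcases Finset.mem_filter.mp hc2 with ⟨_, h2⟩
    linarith
  calc ∑ c ∈ univ.filter (fun c : Fin n → Bool => (i:ℕ) ≠ 0 ∧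
        ¬(p*n/8 ≤ ((univ.filter fun k => c k = true).card : ℝ) ∧
          ((univ.filter fun k => c k = true).card : ℝ) ≤ 8*p*n)),
      ∏ k, (if c k then p else 1-p)
      ≤ ∑ c ∈ L ∪ H, ∏ k, (if c k then p else 1-p) := by
        apply Finset.sum_le_sum_of_subset_of_nonneg hsub
        intro c _ _
        exact V_nonneg hp0 hp1 c
    _ = (∑ c ∈ L, ∏ k, (if c k then p else 1-p)) +
        ∑ c ∈ H, ∏ k, (if c k then p else 1-p) := Finset.sum_union hdisj
    _ ≤ Real.exp (-(p*n/4)) + Real.exp (-(p*n/4)) :=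
        add_le_add (tail_low hp0 hp1) (tail_high hp0 hp1)
    _ = 2 * Real.exp (-(p*n/4)) := by ring

lemma pow_card_eq_prod' {α : Type*} [Fintype α] (Q : α → Prop) [DecidablePred Q] (θ : ℝ) :
    θ ^ (univ.filter Q).card = ∏ i, (if Q i then θ else 1) := by
  rw [Finset.prod_ite, Finset.prod_const, Finset.prod_const, one_pow, mul_one]

lemma sum_V_eq_one {n : ℕ} {p : ℝ} :
    ∑ c : Fin n → Bool, ∏ k, (if c k then p else 1-p) = 1 := by
  have := mgf_pow (n := n) 1 p
  simpa using this

lemma main_sum_le {n : ℕ} {p R : ℝ} (hR : 1 ≤ R) (hn : 1 ≤ n) (hp0 : 0 < p) (hp1 : p < 1)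
    (hpn : 300 * R ≤ p * n) :
    ∑ g ∈ univ.filter (fun g : Fin n → Fin n → Bool =>
        ⌊(p*R)⁻¹⌋₊ < (univ.filter fun i : Fin n => (i:ℕ) ≠ 0 ∧
          ¬(p*n/8 ≤ ((univ.filter fun k => g i k = true).card : ℝ) ∧
            ((univ.filter fun k => g i k = true).card : ℝ) ≤ 8*p*n)).card),
      ∏ i, ∏ k, (if g i k then p else 1-p) ≤ Real.exp (-((n:ℝ) / (300*R))) := by
  classical
  have hR0 : (0:ℝ) < R := by linarith
  have hn0 : (0:ℝ) < n := by exact_mod_cast Nat.lt_of_lt_of_le Nat.zero_lt_one hn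
  have hpn0 : (0:ℝ) < p * n := by positivity
  set m : ℕ := ⌊(p*R)⁻¹⌋₊ with hm
  set z : ℝ := Real.exp (p*n/8) with hz
  have hz1 : (1:ℝ) ≤ z := by
    rw [hz]; linarith only [Real.add_one_le_exp (p*n/8), hpn0]
  have hz0 : (0:ℝ) < z := lt_of_lt_of_le one_pos hz1
  set B : Fin n → (Fin n → Bool) → Prop := fun i c => (i:ℕ) ≠ 0 ∧
      ¬(p*n/8 ≤ ((univ.filter fun k => c k = true).card : ℝ) ∧
        ((univ.filter fun k => c k = true).card : ℝ) ≤ 8*p*n) with hB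
  set V : (Fin n → Bool) → ℝ := fun c => ∏ k, (if c k then p else 1-p) with hV
  set W : (Fin n → Fin n → Bool) → ℝ := fun g => ∏ i, V (g i) with hW
  have hWnn : ∀ g, 0 ≤ W g := fun g => Finset.prod_nonneg fun i _ => V_nonneg hp0 hp1 (g i)
  set bc : (Fin n → Fin n → Bool) → ℕ := fun g => (univ.filter fun i => B i (g i)).card with hbc
  -- Step A
  have stepA : ∑ g ∈ univ.filter (fun g : Fin n → Fin n → Bool => m < bc g), W g
      ≤ (z⁻¹) ^ (m+1) * ∑ g : Fin n → Fin n → Bool, z ^ bc g * W g := by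
    rw [Finset.mul_sum]
    have hterm : ∀ g ∈ univ.filter (fun g : Fin n → Fin n → Bool => m < bc g),
        W g ≤ (z⁻¹) ^ (m+1) * (z ^ bc g * W g) := by
      intro g hg
      rcases Finset.mem_filter.mp hg with ⟨_, hg⟩
      have h1 : z ^ (m+1) ≤ z ^ bc g := pow_le_pow_right₀ hz1 hg
      have h2 : (1:ℝ) ≤ (z⁻¹) ^ (m+1) * z ^ bc g := by
        rw [inv_pow, ← div_eq_inv_mul]
        exact (one_le_div (by positivity)).mpr h1
      calc W g = 1 * W g := (one_mul _).symm
        _ ≤ ((z⁻¹) ^ (m+1) * z ^ bc g) * W g :=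
            mul_le_mul_of_nonneg_right h2 (hWnn g)
        _ = (z⁻¹) ^ (m+1) * (z ^ bc g * W g) := by ring
    refine (Finset.sum_le_sum hterm).trans ?_
    apply Finset.sum_le_sum_of_subset_of_nonneg (Finset.filter_subset _ _)
    intro g _ _
    have h3 : (0:ℝ) ≤ z ^ bc g := by positivity
    have h4 : (0:ℝ) ≤ (z⁻¹) ^ (m+1) := by positivity
    have := hWnn g
    positivity
  -- Step B
  have stepB : ∑ g : Fin n → Fin n → Bool, z ^ bc g * W g
      = ∏ i : Fin n, ∑ c : Fin n → Bool, (if B i c then z else 1) * V c := by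
    rw [← sum_prod_pi (fun i c => (if B i c then z else 1) * V c)]
    apply Finset.sum_congr rfl
    intro g _
    rw [hbc, pow_card_eq_prod' (fun i => B i (g i)) z, hW, ← Finset.prod_mul_distrib]
  -- Step C
  set q : ℝ := 2 * Real.exp (-(p*n/4)) with hqdef
  have hq0 : (0:ℝ) ≤ q := by positivity
  have factor_eq : ∀ i : Fin n, ∑ c : Fin n → Bool, (if B i c then z else 1) * V c
      = 1 + (z - 1) * ∑ c ∈ univ.filter (B i), V c := by
    intro i
    have hsplit : ∀ c : Fin n → Bool, (if B i c then z else 1) * V c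
        = V c + (if B i c then (z-1) * V c else 0) := by
      intro c; by_cases h : B i c
      · rw [if_pos h, if_pos h]; ring
      · rw [if_neg h, if_neg h]; ring
    rw [Finset.sum_congr rfl (fun c _ => hsplit c), Finset.sum_add_distrib]
    have e1 : ∑ c : Fin n → Bool, V c = 1 := by rw [hV]; exact sum_V_eq_one
    have e2 : ∑ c : Fin n → Bool, (if B i c then (z-1) * V c else 0)
        = (z - 1) * ∑ c ∈ univ.filter (B i), V c := by
      rw [Finset.sum_filter, Finset.mul_sum]
      apply Finset.sum_congr rfl
      intro c _
      by_cases h : B i c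
      · rw [if_pos h, if_pos h]
      · rw [if_neg h, if_neg h, mul_zero]
    rw [e1, e2]
  have hqi_le : ∀ i : Fin n, ∑ c ∈ univ.filter (B i), V c ≤ q := by
    intro i
    rw [hqdef]
    have := col_bad_le (n := n) hp0 hp1 i
    refine le_trans (le_of_eq ?_) this
    apply Finset.sum_congr
    · ext c
      simp only [Finset.mem_filter, hB, hV]
    · intro c _
      rw [hV]
  have hqi_nn : ∀ i : Fin n, 0 ≤ ∑ c ∈ univ.filter (B i), V c := by
    intro i
    apply Finset.sum_nonneg
    intro c _
    rw [hV]
    exact V_nonneg hp0 hp1 c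
  have stepC : ∏ i : Fin n, ∑ c : Fin n → Bool, (if B i c then z else 1) * V c
      ≤ (1 + (z-1) * q) ^ n := by
    calc ∏ i : Fin n, ∑ c : Fin n → Bool, (if B i c then z else 1) * V c
        ≤ ∏ _i : Fin n, (1 + (z-1) * q) := by
          apply Finset.prod_le_prod
          · intro i _
            rw [factor_eq i]
            linarith only [mul_nonneg (sub_nonneg.mpr hz1) (hqi_nn i)]
          · intro i _
            rw [factor_eq i]
            linarith only [mul_le_mul_of_nonneg_left (hqi_le i) (sub_nonneg.mpr hz1)]
      _ = (1 + (z-1) * q) ^ n := by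
          rw [Finset.prod_const, Finset.card_univ, Fintype.card_fin]
  -- Step D
  have hm1 : (p*R)⁻¹ < (m:ℝ) + 1 := Nat.lt_floor_add_one _
  have hmp : R⁻¹ ≤ ((m:ℝ) + 1) * p := by
    have h := mul_le_mul_of_nonneg_right hm1.le hp0.le
    calc R⁻¹ = (p*R)⁻¹ * p := by field_simp
      _ ≤ ((m:ℝ) + 1) * p := h
  have h32 : (32:ℝ)*R ≤ Real.exp (p*n/8) := by
    have hlog : Real.log (32*R) ≤ p*n/8 := by
      have := Real.log_le_sub_one_of_pos (show (0:ℝ) < 32*R by positivity)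
      linarith only [this, hpn, hR, hR0]
    calc (32:ℝ)*R = Real.exp (Real.log (32*R)) := (Real.exp_log (by positivity)).symm
      _ ≤ _ := Real.exp_le_exp.mpr hlog
  have hE : Real.exp (-(p*n/8)) ≤ 1/(32*R) := by
    rw [Real.exp_neg, one_div]
    exact inv_anti₀ (by positivity) h32
  -- final numeric combination
  have hzinv : (z⁻¹) ^ (m+1) = Real.exp (((m:ℝ)+1) * -(p*n/8)) := by
    rw [hz, ← Real.exp_neg, ← Real.exp_nat_mul]
    norm_num
  have hpow : (1 + (z-1) * q) ^ n ≤ Real.exp ((n:ℝ) * (2 * Real.exp (-(p*n/8)))) := by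
    have h1 : 1 + (z-1) * q ≤ Real.exp ((z-1) * q) := by
      linarith only [Real.add_one_le_exp ((z-1) * q)]
    have h2 : (0:ℝ) ≤ 1 + (z-1)*q := by
      linarith only [mul_nonneg (sub_nonneg.mpr hz1) hq0]
    calc (1 + (z-1) * q) ^ n ≤ Real.exp ((z-1)*q) ^ n := pow_le_pow_left₀ h2 h1 n
      _ = Real.exp ((n:ℝ) * ((z-1)*q)) := (Real.exp_nat_mul _ n).symm
      _ ≤ Real.exp ((n:ℝ) * (2 * Real.exp (-(p*n/8)))) := by
          apply Real.exp_le_exp.mpr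
          apply mul_le_mul_of_nonneg_left _ hn0.le
          have hzq : z * q = 2 * Real.exp (-(p*n/8)) := by
            rw [hz, hqdef, ← mul_assoc, mul_comm (Real.exp (p*n/8)) 2, mul_assoc,
              ← Real.exp_add]
            ring_nf
          linarith only [hzq, hq0]
  have final : (z⁻¹) ^ (m+1) * (1 + (z-1) * q) ^ n ≤ Real.exp (-((n:ℝ) / (300*R))) := by
    have hzp : (0:ℝ) ≤ (z⁻¹) ^ (m+1) := by positivity
    calc (z⁻¹) ^ (m+1) * (1 + (z-1) * q) ^ n
        ≤ Real.exp (((m:ℝ)+1) * -(p*n/8)) * Real.exp ((n:ℝ) * (2 * Real.exp (-(p*n/8)))) := by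
          rw [← hzinv]
          exact mul_le_mul_of_nonneg_left hpow hzp
      _ = Real.exp (((m:ℝ)+1) * -(p*n/8) + (n:ℝ) * (2 * Real.exp (-(p*n/8)))) := by
          rw [Real.exp_add]
      _ ≤ Real.exp (-((n:ℝ) / (300*R))) := by
          apply Real.exp_le_exp.mpr
          have h1 : R⁻¹ * ((n:ℝ)/8) ≤ (((m:ℝ)+1) * p) * ((n:ℝ)/8) :=
            mul_le_mul_of_nonneg_right hmp (by positivity)
          have h2 : (n:ℝ) * (2 * Real.exp (-(p*n/8))) ≤ (n:ℝ) * (2 * (1/(32*R))) := by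
            apply mul_le_mul_of_nonneg_left _ hn0.le
            linarith only [hE]
          have h3 : (n:ℝ) / (300*R) ≤ (n:ℝ) * R⁻¹ / 16 := by
            rw [div_le_div_iff₀ (by positivity) (by norm_num)]
            have h5 : (n:ℝ) * R⁻¹ * (300 * R) = 300 * (n:ℝ) * (R⁻¹ * R) := by ring
            rw [inv_mul_cancel₀ hR0.ne', mul_one] at h5
            linarith only [h5, hn0]
          have h4 : (n:ℝ) * (2 * (1/(32*R))) = (n:ℝ) * R⁻¹ / 16 := by
            rw [one_div, mul_inv]
            ring
          linarith only [h1, h2, h3, h4]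
  -- assemble
  have hgoal_eq : ∑ g ∈ univ.filter (fun g : Fin n → Fin n → Bool =>
        ⌊(p*R)⁻¹⌋₊ < (univ.filter fun i : Fin n => (i:ℕ) ≠ 0 ∧
          ¬(p*n/8 ≤ ((univ.filter fun k => g i k = true).card : ℝ) ∧
            ((univ.filter fun k => g i k = true).card : ℝ) ≤ 8*p*n)).card),
      ∏ i, ∏ k, (if g i k then p else 1-p)
      = ∑ g ∈ univ.filter (fun g : Fin n → Fin n → Bool => m < bc g), W g := by
    have hcard : ∀ g : Fin n → Fin n → Bool,
        (univ.filter fun i : Fin n => (i:ℕ) ≠ 0 ∧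
          ¬(p*n/8 ≤ ((univ.filter fun k => g i k = true).card : ℝ) ∧
            ((univ.filter fun k => g i k = true).card : ℝ) ≤ 8*p*n)).card = bc g := by
      intro g
      rw [hbc]
    apply Finset.sum_congr
    · apply Finset.filter_congr
      intro g _
      rw [hcard g, hm]
    · intro g _
      simp only [hW, hV]
  rw [hgoal_eq]
  calc ∑ g ∈ univ.filter (fun g : Fin n → Fin n → Bool => m < bc g), W g
      ≤ (z⁻¹) ^ (m+1) * ∑ g : Fin n → Fin n → Bool, z ^ bc g * W g := stepA
    _ = (z⁻¹) ^ (m+1) * ∏ i : Fin n, ∑ c : Fin n → Bool, (if B i c then z else 1) * V c := by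
        rw [stepB]
    _ ≤ (z⁻¹) ^ (m+1) * (1 + (z-1) * q) ^ n := by
        apply mul_le_mul_of_nonneg_left stepC (by positivity)
    _ ≤ Real.exp (-((n:ℝ) / (300*R))) := final

lemma prob_eq {n : ℕ} (p : ℝ) (g : Fin n → Fin n → Bool) :
    p ^ (univ.filter (fun ij : Fin n × Fin n =>
        (if g ij.2 ij.1 then (1:ℝ) else 0) = 1)).card *
      (1 - p) ^ (univ.filter (fun ij : Fin n × Fin n =>
        (if g ij.2 ij.1 then (1:ℝ) else 0) = 0)).card
    = ∏ i, ∏ k, (if g i k then p else 1-p) := by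
  classical
  have hones : univ.filter (fun ij : Fin n × Fin n => (if g ij.2 ij.1 then (1:ℝ) else 0) = 1)
      = univ.filter (fun ij : Fin n × Fin n => g ij.2 ij.1 = true) := by
    apply Finset.filter_congr
    intro ij _
    by_cases h : g ij.2 ij.1 <;> simp [h]
  have hzeros : univ.filter (fun ij : Fin n × Fin n => (if g ij.2 ij.1 then (1:ℝ) else 0) = 0)
      = univ.filter (fun ij : Fin n × Fin n => ¬ (g ij.2 ij.1 = true)) := by
    apply Finset.filter_congr
    intro ij _
    by_cases h : g ij.2 ij.1 <;> simp [h]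
  rw [hones, hzeros]
  rw [← Finset.prod_const, ← Finset.prod_const, ← Finset.prod_ite
    (fun ij : Fin n × Fin n => p) (fun ij : Fin n × Fin n => 1-p)]
  rw [Fintype.prod_prod_type (fun ij : Fin n × Fin n => if g ij.2 ij.1 then p else 1-p)]
  rw [Finset.prod_comm]

lemma prob_eq' {n : ℕ} (p : ℝ) (g : Fin n → Fin n → Bool) (A : Matrix (Fin n) (Fin n) ℝ)
    (hA : ∀ k i, A k i = if g i k then (1:ℝ) else 0) :
    p ^ (univ.filter (fun ij : Fin n × Fin n => A ij.1 ij.2 = 1)).card *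
      (1 - p) ^ (univ.filter (fun ij : Fin n × Fin n => A ij.1 ij.2 = 0)).card
    = ∏ i, ∏ k, (if g i k then p else 1-p) := by
  have h1 : univ.filter (fun ij : Fin n × Fin n => A ij.1 ij.2 = 1)
      = univ.filter (fun ij : Fin n × Fin n => (if g ij.2 ij.1 then (1:ℝ) else 0) = 1) := by
    apply Finset.filter_congr
    intro ij _
    rw [hA]
  have h2 : univ.filter (fun ij : Fin n × Fin n => A ij.1 ij.2 = 0)
      = univ.filter (fun ij : Fin n × Fin n => (if g ij.2 ij.1 then (1:ℝ) else 0) = 0) := by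
    apply Finset.filter_congr
    intro ij _
    rw [hA]
  rw [h1, h2, prob_eq]

/-- With high probability, all but at most `⌊(pR)⁻¹⌋` of the columns `C₂(M), …, C_n(M)`
have support cardinality in `[pn/8, 8pn]`. -/
theorem column_support_cardinality :
    ∀ R : ℝ, 1 ≤ R → ∃ C : ℝ, 1 ≤ C ∧
      ∀ n : ℕ, 1 ≤ n → ∀ p : ℝ, 0 < p → p < 1 → C * p ≤ 1 → C ≤ p * n →
        ∀ (Ω : Type) [MeasurableSpace Ω] (μ : Measure Ω), IsProbabilityMeasure μ →
          ∀ M : Ω → Matrix (Fin n) (Fin n) ℝ, IsBernoulliMatrix μ M p →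
            1 - Real.exp (-((n : ℝ) / C)) ≤
              (μ {ω | ((Finset.univ.filter fun i : Fin n => (i : ℕ) ≠ 0 ∧
                  ¬(p * n / 8 ≤ ((Finset.univ.filter fun k => M ω k i ≠ 0).card : ℝ) ∧
                    ((Finset.univ.filter fun k => M ω k i ≠ 0).card : ℝ) ≤ 8 * p * n)).card : ℕ)
                  ≤ ⌊(p * R)⁻¹⌋₊}).toReal := by
  intro R hR
  refine ⟨300*R, by linarith, ?_⟩
  intro n hn p hp0 hp1 hCp hCn Ω _inst μ hμ M hM
  obtain ⟨h01, hdist⟩ := hM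
  have hn0 : (0:ℝ) < n := by exact_mod_cast Nat.lt_of_lt_of_le Nat.zero_lt_one hn
  have hR0 : (0:ℝ) < R := by linarith
  set ε : ℝ := Real.exp (-((n:ℝ) / (300*R))) with hεdef
  have hε0 : 0 < ε := Real.exp_pos _
  have hε1 : ε ≤ 1 := by
    rw [hεdef, Real.exp_le_one_iff]
    have : (0:ℝ) ≤ (n:ℝ) / (300*R) := by positivity
    linarith
  set S : Set Ω := {ω | ((Finset.univ.filter fun i : Fin n => (i : ℕ) ≠ 0 ∧
      ¬(p * n / 8 ≤ ((Finset.univ.filter fun k => M ω k i ≠ 0).card : ℝ) ∧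
        ((Finset.univ.filter fun k => M ω k i ≠ 0).card : ℝ) ≤ 8 * p * n)).card : ℕ)
      ≤ ⌊(p * R)⁻¹⌋₊} with hSdef
  set T : Set Ω := {ω | ¬ (((Finset.univ.filter fun i : Fin n => (i : ℕ) ≠ 0 ∧
      ¬(p * n / 8 ≤ ((Finset.univ.filter fun k => M ω k i ≠ 0).card : ℝ) ∧
        ((Finset.univ.filter fun k => M ω k i ≠ 0).card : ℝ) ≤ 8 * p * n)).card : ℕ)
      ≤ ⌊(p * R)⁻¹⌋₊)} with hTdef
  set Ag : (Fin n → Fin n → Bool) → Matrix (Fin n) (Fin n) ℝ :=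
    fun g => Matrix.of fun k i => if g i k then (1:ℝ) else 0 with hAgdef
  have hAent : ∀ g (k i : Fin n), Ag g k i = if g i k then (1:ℝ) else 0 := by
    intro g k i
    rw [hAgdef]
    rfl
  have hA01 : ∀ g (k i : Fin n), Ag g k i = 0 ∨ Ag g k i = 1 := by
    intro g k i
    rw [hAent]
    by_cases h : g i k
    · right; rw [if_pos h]
    · left; rw [if_neg h]
  set badF : Finset (Fin n → Fin n → Bool) :=
    univ.filter (fun g : Fin n → Fin n → Bool =>
      ⌊(p*R)⁻¹⌋₊ < (univ.filter fun i : Fin n => (i:ℕ) ≠ 0 ∧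
        ¬(p*n/8 ≤ ((univ.filter fun k => g i k = true).card : ℝ) ∧
          ((univ.filter fun k => g i k = true).card : ℝ) ≤ 8*p*n)).card) with hbadF
  have hTsub : T ⊆ ⋃ g ∈ badF, {ω | M ω = Ag g} := by
    intro ω hω
    rw [hTdef] at hω
    simp only [Set.mem_setOf_eq] at hω
    set g : Fin n → Fin n → Bool :=
      fun i k => @decide (M ω k i = 1) (Classical.propDecidable _) with hg
    have hgiff : ∀ i k, (g i k = true) ↔ M ω k i ≠ 0 := by
      intro i k
      rw [hg]
      rw [decide_eq_true_eq]
      rcases h01 ω k i with h | h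
      · constructor
        · intro h1
          rw [h1] at h
          norm_num at h
        · intro hne
          exact absurd h hne
      · constructor
        · intro _
          rw [h]
          norm_num
        · intro _
          exact h
    have hMA : M ω = Ag g := by
      funext k i
      rw [hAent]
      by_cases hP : M ω k i = 1
      · have hgt : g i k = true := by
          rw [hg]; exact decide_eq_true hP
        rw [hgt, if_pos rfl, hP]
      · have h0 : M ω k i = 0 := (h01 ω k i).resolve_right hP
        have hgf : g i k = false := by
          rw [hg]; exact decide_eq_false hP
        rw [hgf, h0]
        norm_num
    have hcard : ∀ i : Fin n, (univ.filter fun k => M ω k i ≠ 0).card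
        = (univ.filter fun k => g i k = true).card := by
      intro i
      congr 1
      apply Finset.filter_congr
      intro k _
      exact (hgiff i k).symm
    have hgbad : g ∈ badF := by
      rw [hbadF, Finset.mem_filter]
      refine ⟨Finset.mem_univ _, ?_⟩
      rw [not_le] at hω
      refine lt_of_lt_of_le hω (le_of_eq ?_)
      apply congrArg
      apply Finset.filter_congr
      intro i _
      rw [hcard i]
    exact Set.mem_biUnion hgbad hMA
  have hT : μ T ≤ ENNReal.ofReal ε := by
    calc μ T ≤ μ (⋃ g ∈ badF, {ω | M ω = Ag g}) := measure_mono hTsub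
      _ ≤ ∑ g ∈ badF, μ {ω | M ω = Ag g} := measure_biUnion_finset_le _ _
      _ = ∑ g ∈ badF, ENNReal.ofReal (∏ i, ∏ k, (if g i k then p else 1-p)) := by
          apply Finset.sum_congr rfl
          intro g _
          rw [hdist (Ag g) (fun i j => hA01 g i j)]
          rw [prob_eq' p g (Ag g) (hAent g)]
      _ = ENNReal.ofReal (∑ g ∈ badF, ∏ i, ∏ k, (if g i k then p else 1-p)) := by
          rw [ENNReal.ofReal_sum_of_nonneg]
          intro g _
          exact Finset.prod_nonneg fun i _ => V_nonneg hp0 hp1 (g i)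
      _ ≤ ENNReal.ofReal ε := by
          apply ENNReal.ofReal_le_ofReal
          rw [hεdef, hbadF]
          exact main_sum_le hR hn hp0 hp1 hCn
  have hunion : S ∪ T = Set.univ := by
    rw [hSdef, hTdef]
    ext ω
    simp only [Set.mem_union, Set.mem_setOf_eq, Set.mem_univ, iff_true]
    exact em _
  have h1 : (1:ENNReal) ≤ μ S + μ T := by
    calc (1:ENNReal) = μ Set.univ := (measure_univ (μ := μ)).symm
      _ = μ (S ∪ T) := by rw [hunion]
      _ ≤ μ S + μ T := measure_union_le S T
  have h2 : ENNReal.ofReal (1 - ε) ≤ μ S := by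
    rw [ENNReal.ofReal_sub _ hε0.le, ENNReal.ofReal_one]
    rw [tsub_le_iff_right]
    calc (1:ENNReal) ≤ μ S + μ T := h1
      _ ≤ μ S + ENNReal.ofReal ε := add_le_add_right hT _
  exact (ENNReal.ofReal_le_iff_le_toReal (measure_ne_top μ S)).mp h2
end

section
/- Let p ∈ (0, 1/20) and α > 0. Let δ_j (j ≤ n) and δ_{ij} (i,j ≤ n) be i.i.d. Bernoulli(p) random variables, and set M = (δ_{ij})_{i,j≤n}. Let x ∈ ℝⁿ satisfy x*₂ ≥ α. Then Q(Σ_{j=1}^n x_j δ_j, α/2.1) ≤ exp(−1.9·p), and P(‖Mx‖ ≤ α·√(pn)/(7·√(ln(e/p)))) ≤ exp(−1.6·np). -/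
open MeasureTheory

/-- Euclidean norm of a vector in `ℝⁿ`. -/
noncomputable def eNorm {n : ℕ} (x : Fin n → ℝ) : ℝ := Real.sqrt (∑ i, (x i) ^ 2)

/-- The Lévy concentration function `Q(ξ, t) = sup_λ P{|ξ - λ| ≤ t}`. -/
noncomputable def levyConc {Ω : Type*} [MeasurableSpace Ω] (μ : Measure Ω)
    (ξ : Ω → ℝ) (t : ℝ) : ℝ :=
  ⨆ l : ℝ, (μ {ω | |ξ ω - l| ≤ t}).toReal

/-- `X` is a random vector with i.i.d. Bernoulli(p) coordinates. -/
def IsBernoulliVector {Ω : Type*} [MeasurableSpace Ω] (μ : Measure Ω) {n : ℕ}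
    (X : Ω → Fin n → ℝ) (p : ℝ) : Prop :=
  (∀ ω i, X ω i = 0 ∨ X ω i = 1) ∧
  ∀ v : Fin n → ℝ, (∀ i, v i = 0 ∨ v i = 1) →
    μ {ω | X ω = v} =
      ENNReal.ofReal
        (p ^ (Finset.univ.filter fun i => v i = 1).card *
          (1 - p) ^ (Finset.univ.filter fun i => v i = 0).card)

namespace TL
open Finset

noncomputable def φ (p : ℝ) (b : Bool) : ℝ := if b then p else 1 - p
noncomputable def ind (b : Bool) : ℝ := if b then 1 else 0
noncomputable def w {ι : Type*} [Fintype ι] (p : ℝ) (b : ι → Bool) : ℝ := ∏ j, φ p (b j)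

lemma φ_nonneg {p : ℝ} (hp : 0 ≤ p) (hp1 : p ≤ 1) (b : Bool) : 0 ≤ φ p b := by
  cases b <;> simp [φ] <;> linarith

lemma w_nonneg {ι : Type*} [Fintype ι] {p : ℝ} (hp : 0 ≤ p) (hp1 : p ≤ 1) (b : ι → Bool) :
    0 ≤ w p b :=
  Finset.prod_nonneg fun j _ => φ_nonneg hp hp1 (b j)

lemma pi_sum_prod {ι κ : Type*} [Fintype ι] [DecidableEq ι] [Fintype κ] (g : ι → κ → ℝ) :
    ∑ F : ι → κ, ∏ i, g i (F i) = ∏ i, ∑ c, g i c :=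
  (Fintype.prod_sum g).symm

lemma sum_w {ι : Type*} [Fintype ι] [DecidableEq ι] (p : ℝ) :
    ∑ b : ι → Bool, w p b = 1 := by
  unfold w
  rw [pi_sum_prod]
  have : ∀ i : ι, (∑ c : Bool, φ p c) = 1 := by
    intro i; rw [Fintype.sum_bool]; simp [φ]
  rw [Finset.prod_congr rfl (fun i _ => this i), Finset.prod_const_one]

lemma w_eq_pow {ι : Type*} [Fintype ι] [DecidableEq ι] (p : ℝ) (b : ι → Bool) :
    w p b = p ^ (univ.filter fun i => b i = true).card *
      (1 - p) ^ (univ.filter fun i => b i = false).card := by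
  unfold w
  rw [← Finset.prod_filter_mul_prod_filter_not univ (fun i => b i = true)]
  congr 1
  · rw [Finset.prod_congr rfl (fun i hi => ?_), Finset.prod_const]
    · simp [(Finset.mem_filter.1 hi).2, φ]
  · rw [show (univ.filter fun i => b i = false) = (univ.filter fun i => ¬ b i = true) by
      apply Finset.filter_congr; intro i _; simp]
    rw [Finset.prod_congr rfl (fun i hi => ?_), Finset.prod_const]
    have := (Finset.mem_filter.1 hi).2
    simp at this
    simp [this, φ]

lemma incompat {a v lam t α : ℝ} (h1 : |v - lam| ≤ t) (h2 : |v + a - lam| ≤ t)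
    (ha : α ≤ |a|) (ht : 2 * t < α) : False := by
  have : |a| ≤ 2 * t := by
    have : a = (v + a - lam) - (v - lam) := by ring
    rw [this]
    calc |(v + a - lam) - (v - lam)| ≤ |v + a - lam| + |v - lam| := abs_sub _ _
    _ ≤ 2 * t := by linarith
  linarith

lemma inner_bound {p α t lam a b s : ℝ} (hp : 0 < p) (hp1 : p < 1/20)
    (h1 : α ≤ |a|) (h2 : α ≤ |b|) (ht : 2 * t < α) :
    (∑ c₁ : Bool, ∑ c₂ : Bool,
      if |a * ind c₁ + b * ind c₂ + s - lam| ≤ t then φ p c₁ * φ p c₂ else 0)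
      ≤ p^2 + (1-p)^2 := by
  rw [Fintype.sum_bool]
  rw [Fintype.sum_bool, Fintype.sum_bool]
  simp only [ind, φ, Bool.false_eq_true, eq_self_iff_true, if_true, if_false, mul_one,
    mul_zero, zero_add, add_zero]
  have kAB : ¬ (|s - lam| ≤ t ∧ |a + s - lam| ≤ t) := by
    rintro ⟨u1, u2⟩; exact incompat u1 (by rw [show s + a - lam = a + s - lam by ring]; exact u2) h1 ht
  have kAC : ¬ (|s - lam| ≤ t ∧ |b + s - lam| ≤ t) := by
    rintro ⟨u1, u2⟩; exact incompat u1 (by rw [show s + b - lam = b + s - lam by ring]; exact u2) h2 ht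
  have kDB : ¬ (|a + b + s - lam| ≤ t ∧ |a + s - lam| ≤ t) := by
    rintro ⟨u1, u2⟩
    exact incompat u2 (by rw [show (a + s) + b - lam = a + b + s - lam by ring]; exact u1) h2 ht
  have kDC : ¬ (|a + b + s - lam| ≤ t ∧ |b + s - lam| ≤ t) := by
    rintro ⟨u1, u2⟩
    exact incompat u2 (by rw [show (b + s) + a - lam = a + b + s - lam by ring]; exact u1) h1 ht
  by_cases hD : |a + b + s - lam| ≤ t <;>
  by_cases hB : |a + s - lam| ≤ t <;>
  by_cases hC : |b + s - lam| ≤ t <;>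
  by_cases hA : |s - lam| ≤ t <;>
  simp only [hD, hB, hC, hA, if_true, if_false] <;>
  first
  | (exfalso; tauto)
  | nlinarith [sq_nonneg (1 - 2*p), sq_nonneg p, sq_nonneg (1-p)]

/-- splitting the index set at two given distinct indices -/
def splitEquiv {n : ℕ} (i₁ i₂ : Fin n) (hne : i₁ ≠ i₂) :
    (({j : Fin n // j ≠ i₁ ∧ j ≠ i₂} → Bool) × Bool × Bool) ≃ (Fin n → Bool) where
  toFun z := fun j => if h : j = i₁ then z.2.1 else if h' : j = i₂ then z.2.2 else z.1 ⟨j, h, h'⟩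
  invFun b := (fun j => b j.1, b i₁, b i₂)
  left_inv z := by
    obtain ⟨u, c₁, c₂⟩ := z
    refine Prod.ext ?_ (Prod.ext ?_ ?_)
    · simp only
      funext j
      rw [dif_neg j.2.1, dif_neg j.2.2]
    · simp
    · simp only
      rw [dif_neg (fun h => hne h.symm)]
      simp
  right_inv b := by
    funext j
    dsimp only
    by_cases h : j = i₁
    · subst h; simp
    · by_cases h' : j = i₂
      · subst h'; rw [dif_neg h, dif_pos rfl]
      · rw [dif_neg h, dif_neg h']

lemma split_sum {n : ℕ} (i₁ i₂ : Fin n) (hne : i₁ ≠ i₂) (f : Fin n → ℝ) :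
    ∑ j, f j = f i₁ + f i₂ + ∑ j : {j : Fin n // j ≠ i₁ ∧ j ≠ i₂}, f j.1 := by
  have hsub : ({i₁, i₂} : Finset (Fin n)) ⊆ univ := subset_univ _
  rw [← Finset.sum_sdiff hsub, Finset.sum_pair hne]
  have : ∑ j ∈ univ \ {i₁, i₂}, f j = ∑ j : {j : Fin n // j ≠ i₁ ∧ j ≠ i₂}, f j.1 := by
    rw [← Finset.sum_subtype (univ \ ({i₁, i₂} : Finset (Fin n)))
      (p := fun j => j ≠ i₁ ∧ j ≠ i₂) (fun j => by simp [not_or]) f]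
  rw [this]; ring

lemma split_prod {n : ℕ} (i₁ i₂ : Fin n) (hne : i₁ ≠ i₂) (f : Fin n → ℝ) :
    ∏ j, f j = f i₁ * f i₂ * ∏ j : {j : Fin n // j ≠ i₁ ∧ j ≠ i₂}, f j.1 := by
  have hsub : ({i₁, i₂} : Finset (Fin n)) ⊆ univ := subset_univ _
  rw [← Finset.prod_sdiff hsub, Finset.prod_pair hne]
  have : ∏ j ∈ univ \ {i₁, i₂}, f j = ∏ j : {j : Fin n // j ≠ i₁ ∧ j ≠ i₂}, f j.1 := by
    rw [← Finset.prod_subtype (univ \ ({i₁, i₂} : Finset (Fin n)))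
      (p := fun j => j ≠ i₁ ∧ j ≠ i₂) (fun j => by simp [not_or]) f]
  rw [this]; ring

lemma row_bound {n : ℕ} {p α t lam : ℝ} (hp : 0 < p) (hp1 : p < 1/20) (x : Fin n → ℝ)
    {i₁ i₂ : Fin n}
    (hne : i₁ ≠ i₂) (h1 : α ≤ |x i₁|) (h2 : α ≤ |x i₂|) (ht : 2 * t < α) :
    ∑ b : Fin n → Bool, (if |(∑ j, x j * ind (b j)) - lam| ≤ t then w p b else 0)
      ≤ p^2 + (1-p)^2 := by
  have hp1' : p ≤ 1 := by linarith
  set ι' := {j : Fin n // j ≠ i₁ ∧ j ≠ i₂}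
  rw [← Equiv.sum_comp (splitEquiv i₁ i₂ hne)
    (fun b => if |(∑ j, x j * ind (b j)) - lam| ≤ t then w p b else 0)]
  simp only [Fintype.sum_prod_type]
  -- now : ∑ u : ι' → Bool, ∑ c₁, ∑ c₂, ...
  have key : ∀ u : ι' → Bool, ∀ c₁ c₂ : Bool,
      (if |(∑ j, x j * ind ((splitEquiv i₁ i₂ hne) (u, c₁, c₂) j)) - lam| ≤ t
        then w p ((splitEquiv i₁ i₂ hne) (u, c₁, c₂)) else 0)
      = (if |x i₁ * ind c₁ + x i₂ * ind c₂ + (∑ j : ι', x j.1 * ind (u j)) - lam| ≤ t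
          then φ p c₁ * φ p c₂ else 0) * ∏ j : ι', φ p (u j) := by
    intro u c₁ c₂
    set g := (splitEquiv i₁ i₂ hne) (u, c₁, c₂) with hg
    have hg1 : g i₁ = c₁ := by simp [hg, splitEquiv]
    have hg2 : g i₂ = c₂ := by
      simp only [hg, splitEquiv, Equiv.coe_fn_mk]
      rw [dif_neg (fun h => hne h.symm)]
      simp
    have hg3 : ∀ j : ι', g j.1 = u j := by
      intro j
      simp only [hg, splitEquiv, Equiv.coe_fn_mk]
      rw [dif_neg j.2.1, dif_neg j.2.2]
    have e1 : ∑ j, x j * ind (g j) =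
        x i₁ * ind c₁ + x i₂ * ind c₂ + ∑ j : ι', x j.1 * ind (u j) := by
      rw [split_sum i₁ i₂ hne, hg1, hg2]
      congr 1
      exact Finset.sum_congr rfl fun j _ => by rw [hg3 j]
    have e2 : w p g = φ p c₁ * φ p c₂ * ∏ j : ι', φ p (u j) := by
      rw [w, split_prod i₁ i₂ hne, hg1, hg2]
      congr 1
      exact Finset.prod_congr rfl fun j _ => by rw [hg3 j]
    rw [e1, e2]
    split_ifs <;> ring
  calc ∑ u : ι' → Bool, ∑ c₁ : Bool, ∑ c₂ : Bool,
        (if |(∑ j, x j * ind ((splitEquiv i₁ i₂ hne) (u, c₁, c₂) j)) - lam| ≤ t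
          then w p ((splitEquiv i₁ i₂ hne) (u, c₁, c₂)) else 0)
      = ∑ u : ι' → Bool,
          (∑ c₁ : Bool, ∑ c₂ : Bool,
            if |x i₁ * ind c₁ + x i₂ * ind c₂ + (∑ j : ι', x j.1 * ind (u j)) - lam| ≤ t
              then φ p c₁ * φ p c₂ else 0) * ∏ j : ι', φ p (u j) := by
        refine Finset.sum_congr rfl fun u _ => ?_
        rw [Finset.sum_mul]
        refine Finset.sum_congr rfl fun c₁ _ => ?_
        rw [Finset.sum_mul]
        exact Finset.sum_congr rfl fun c₂ _ => key u c₁ c₂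
    _ ≤ ∑ u : ι' → Bool, (p^2 + (1-p)^2) * ∏ j : ι', φ p (u j) := by
        refine Finset.sum_le_sum fun u _ => ?_
        refine mul_le_mul_of_nonneg_right ?_
          (Finset.prod_nonneg fun j _ => φ_nonneg hp.le hp1' _)
        exact inner_bound hp hp1 h1 h2 ht
    _ = (p^2 + (1-p)^2) := by
        rw [← Finset.mul_sum]
        have := sum_w (ι := ι') p
        rw [show (∑ u : ι' → Bool, ∏ j : ι', φ p (u j)) = ∑ u : ι' → Bool, w p u from
          Finset.sum_congr rfl fun u _ => rfl, this, mul_one]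

lemma vec_reduce {Ω : Type*} [MeasurableSpace Ω] (μ : MeasureTheory.Measure Ω) {n : ℕ} {p : ℝ}
    (hp : 0 ≤ p) (hp1 : p ≤ 1)
    (X : Ω → Fin n → ℝ) (hX : IsBernoulliVector μ X p)
    (P : (Fin n → ℝ) → Prop) [DecidablePred P] :
    μ {ω | P (X ω)} ≤
      ENNReal.ofReal (∑ b : Fin n → Bool, if P (fun j => ind (b j)) then w p b else 0) := by
  classical
  have cover : {ω | P (X ω)} ⊆
      ⋃ b ∈ (univ.filter fun b : Fin n → Bool => P (fun j => ind (b j))),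
        {ω | X ω = fun j => ind (b j)} := by
    intro ω hω
    set b : Fin n → Bool := fun j => if X ω j = 1 then true else false with hb
    have hXb : X ω = fun j => ind (b j) := by
      funext j
      rcases hX.1 ω j with h0 | h1
      · have hbj : b j = false := by rw [hb]; simp only [h0]; norm_num
        rw [hbj, ind, if_neg (by simp), h0]
      · have hbj : b j = true := by rw [hb]; simp only [h1]; norm_num
        rw [hbj, ind, if_pos rfl, h1]
    have hbmem : b ∈ univ.filter (fun b : Fin n → Bool => P (fun j => ind (b j))) := by
      rw [Finset.mem_filter]
      exact ⟨Finset.mem_univ _, by rw [← hXb]; exact hω⟩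
    exact Set.mem_biUnion hbmem hXb
  calc μ {ω | P (X ω)}
      ≤ μ (⋃ b ∈ (univ.filter fun b : Fin n → Bool => P (fun j => ind (b j))),
          {ω | X ω = fun j => ind (b j)}) := MeasureTheory.measure_mono cover
    _ ≤ ∑ b ∈ (univ.filter fun b : Fin n → Bool => P (fun j => ind (b j))),
          μ {ω | X ω = fun j => ind (b j)} := MeasureTheory.measure_biUnion_finset_le _ _
    _ = ∑ b ∈ (univ.filter fun b : Fin n → Bool => P (fun j => ind (b j))),
          ENNReal.ofReal (w p b) := by
        refine Finset.sum_congr rfl fun b _ => ?_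
        rw [hX.2 (fun j => ind (b j)) (fun i => by cases h : b i <;> simp [ind])]
        have e1 : (univ.filter fun i => ind (b i) = 1) = univ.filter fun i => b i = true :=
          Finset.filter_congr fun i _ => by cases h : b i <;> simp [ind, h]
        have e0 : (univ.filter fun i => ind (b i) = 0) = univ.filter fun i => b i = false :=
          Finset.filter_congr fun i _ => by cases h : b i <;> simp [ind, h]
        rw [w_eq_pow, e1, e0]
    _ = ENNReal.ofReal (∑ b ∈ (univ.filter fun b : Fin n → Bool => P (fun j => ind (b j))),
          w p b) := (ENNReal.ofReal_sum_of_nonneg fun b _ => w_nonneg hp hp1 b).symm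
    _ = ENNReal.ofReal (∑ b : Fin n → Bool, if P (fun j => ind (b j)) then w p b else 0) := by
        rw [Finset.sum_filter]

lemma exists_two {n : ℕ} {x : Fin n → ℝ} {α : ℝ} (hα : 0 < α) (h : α ≤ ordStat x 2) :
    ∃ i₁ i₂ : Fin n, i₁ ≠ i₂ ∧ α ≤ |x i₁| ∧ α ≤ |x i₂| := by
  classical
  by_contra hcon
  push_neg at hcon
  set A : Finset (Fin n) := univ.filter fun i => α ≤ |x i| with hA
  have hA1 : A.card ≤ 1 := by
    refine Finset.card_le_one.2 fun a ha b hb => ?_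
    simp only [hA, Finset.mem_filter] at ha hb
    by_contra hab
    exact absurd hb.2 (not_le.2 (hcon a b hab ha.2))
  set S := {t : ℝ | 2 ≤ (Finset.univ.filter fun i => t ≤ |x i|).card} with hS
  rcases Set.eq_empty_or_nonempty S with hemp | hne
  · rw [ordStat, ← hS, hemp, Real.sSup_empty] at h; linarith
  · have key : ∀ t ∈ S, ∃ i, i ∉ A ∧ t ≤ |x i| := by
      intro t ht
      have h2 : 2 ≤ (univ.filter fun i => t ≤ |x i|).card := ht
      by_contra hno
      push_neg at hno
      have hsub : (univ.filter fun i => t ≤ |x i|) ⊆ A := by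
        intro i hi
        simp only [Finset.mem_filter] at hi
        by_contra hiA
        exact absurd hi.2 (not_le.2 (hno i hiA))
      have := Finset.card_le_card hsub
      omega
    obtain ⟨t₀, ht₀⟩ := hne
    obtain ⟨i₀, hi₀A, _⟩ := key t₀ ht₀
    have hAc : (univ \ A).Nonempty := ⟨i₀, by simp [hi₀A]⟩
    set β := (univ \ A).sup' hAc fun i => |x i| with hβ
    have hβα : β < α := by
      rw [hβ, Finset.sup'_lt_iff]
      intro i hi
      simp only [hA, Finset.mem_sdiff, Finset.mem_filter, Finset.mem_univ, true_and] at hi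
      exact not_le.1 hi
    have hle : ordStat x 2 ≤ β := by
      rw [ordStat]
      refine csSup_le ⟨t₀, ht₀⟩ fun t ht => ?_
      obtain ⟨i, hiA, hti⟩ := key t ht
      refine le_trans hti ?_
      rw [hβ]
      exact Finset.le_sup' (fun i => |x i|) (Finset.mem_sdiff.2 ⟨Finset.mem_univ _, hiA⟩)
    linarith

noncomputable def wm {n : ℕ} (p : ℝ) (B : Fin n → Fin n → Bool) : ℝ := ∏ i, w p (B i)

lemma wm_nonneg {n : ℕ} {p : ℝ} (hp : 0 ≤ p) (hp1 : p ≤ 1) (B : Fin n → Fin n → Bool) :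
    0 ≤ wm p B := Finset.prod_nonneg fun i _ => w_nonneg hp hp1 _

lemma mat_reduce {Ω : Type*} [MeasurableSpace Ω] (μ : MeasureTheory.Measure Ω) {n : ℕ} {p : ℝ}
    (hp : 0 ≤ p) (hp1 : p ≤ 1)
    (M : Ω → Matrix (Fin n) (Fin n) ℝ) (hM : IsBernoulliMatrix μ M p)
    (P : Matrix (Fin n) (Fin n) ℝ → Prop) [DecidablePred P] :
    μ {ω | P (M ω)} ≤
      ENNReal.ofReal (∑ B : Fin n → Fin n → Bool,
        if P (Matrix.of fun i j => ind (B i j)) then wm p B else 0) := by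
  classical
  have cover : {ω | P (M ω)} ⊆
      ⋃ B ∈ (univ.filter fun B : Fin n → Fin n → Bool =>
          P (Matrix.of fun i j => ind (B i j))),
        {ω | M ω = Matrix.of fun i j => ind (B i j)} := by
    intro ω hω
    set B : Fin n → Fin n → Bool := fun i j => if M ω i j = 1 then true else false with hB
    have hMB : M ω = Matrix.of fun i j => ind (B i j) := by
      ext i j
      rcases hM.1 ω i j with h0 | h1
      · have hbj : B i j = false := by rw [hB]; simp only [h0]; norm_num
        rw [Matrix.of_apply, hbj, ind, if_neg (by simp), h0]
      · have hbj : B i j = true := by rw [hB]; simp only [h1]; norm_num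
        rw [Matrix.of_apply, hbj, ind, if_pos rfl, h1]
    have hbmem : B ∈ univ.filter (fun B : Fin n → Fin n → Bool =>
        P (Matrix.of fun i j => ind (B i j))) := by
      rw [Finset.mem_filter]
      exact ⟨Finset.mem_univ _, by rw [← hMB]; exact hω⟩
    exact Set.mem_biUnion hbmem hMB
  calc μ {ω | P (M ω)}
      ≤ μ (⋃ B ∈ (univ.filter fun B : Fin n → Fin n → Bool =>
          P (Matrix.of fun i j => ind (B i j))),
          {ω | M ω = Matrix.of fun i j => ind (B i j)}) := MeasureTheory.measure_mono cover
    _ ≤ ∑ B ∈ (univ.filter fun B : Fin n → Fin n → Bool =>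
          P (Matrix.of fun i j => ind (B i j))),
          μ {ω | M ω = Matrix.of fun i j => ind (B i j)} :=
        MeasureTheory.measure_biUnion_finset_le _ _
    _ = ∑ B ∈ (univ.filter fun B : Fin n → Fin n → Bool =>
          P (Matrix.of fun i j => ind (B i j))), ENNReal.ofReal (wm p B) := by
        refine Finset.sum_congr rfl fun B _ => ?_
        rw [hM.2 (Matrix.of fun i j => ind (B i j))
          (fun i j => by cases h : B i j <;> simp [ind, h])]
        congr 1
        have e1 : (univ.filter fun ij : Fin n × Fin n =>
            (Matrix.of fun i j => ind (B i j)) ij.1 ij.2 = 1)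
            = univ.filter fun ij : Fin n × Fin n => B ij.1 ij.2 = true :=
          Finset.filter_congr fun ij _ => by cases h : B ij.1 ij.2 <;> simp [ind, h]
        have e0 : (univ.filter fun ij : Fin n × Fin n =>
            (Matrix.of fun i j => ind (B i j)) ij.1 ij.2 = 0)
            = univ.filter fun ij : Fin n × Fin n => B ij.1 ij.2 = false :=
          Finset.filter_congr fun ij _ => by cases h : B ij.1 ij.2 <;> simp [ind, h]
        rw [e1, e0]
        have := w_eq_pow (ι := Fin n × Fin n) p (fun ij => B ij.1 ij.2)
        rw [← this, w, wm]
        rw [Fintype.prod_prod_type]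
        rfl
    _ = ENNReal.ofReal (∑ B ∈ (univ.filter fun B : Fin n → Fin n → Bool =>
          P (Matrix.of fun i j => ind (B i j))), wm p B) :=
        (ENNReal.ofReal_sum_of_nonneg fun B _ => wm_nonneg hp hp1 B).symm
    _ = ENNReal.ofReal (∑ B : Fin n → Fin n → Bool,
          if P (Matrix.of fun i j => ind (B i j)) then wm p B else 0) := by
        rw [Finset.sum_filter]

lemma mat_core {n : ℕ} {p q₀ : ℝ} (hp : 0 ≤ p) (hp1 : p ≤ 1) (hq₀ : 0 ≤ q₀) (k : ℕ)
    (P : (Fin n → Fin n → Bool) → Prop) [DecidablePred P]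
    (good : (Fin n → Bool) → Prop) [DecidablePred good]
    (hgood : (∑ r : Fin n → Bool, if good r then w p r else 0) ≤ q₀)
    (hyp : ∀ B : Fin n → Fin n → Bool, P B →
      ∃ T ∈ Finset.powersetCard k (univ : Finset (Fin n)), ∀ i ∈ T, good (B i)) :
    ∑ B : Fin n → Fin n → Bool, (if P B then wm p B else 0) ≤ (n.choose k) * q₀ ^ k := by
  classical
  have step1 : ∀ B : Fin n → Fin n → Bool, (if P B then wm p B else 0) ≤
      ∑ T ∈ Finset.powersetCard k (univ : Finset (Fin n)),
        (if ∀ i ∈ T, good (B i) then wm p B else 0) := by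
    intro B
    by_cases hP : P B
    · obtain ⟨T, hT, hTg⟩ := hyp B hP
      rw [if_pos hP]
      have : (if ∀ i ∈ T, good (B i) then wm p B else 0) = wm p B := if_pos hTg
      calc wm p B = (if ∀ i ∈ T, good (B i) then wm p B else 0) := this.symm
        _ ≤ _ := Finset.single_le_sum (f := fun T => if ∀ i ∈ T, good (B i) then wm p B else 0)
            (fun T _ => by split_ifs; exacts [wm_nonneg hp hp1 B, le_refl 0]) hT
    · rw [if_neg hP]
      exact Finset.sum_nonneg fun T _ => by
        split_ifs; exacts [wm_nonneg hp hp1 B, le_refl 0]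
  calc ∑ B : Fin n → Fin n → Bool, (if P B then wm p B else 0)
      ≤ ∑ B : Fin n → Fin n → Bool, ∑ T ∈ Finset.powersetCard k (univ : Finset (Fin n)),
          (if ∀ i ∈ T, good (B i) then wm p B else 0) := Finset.sum_le_sum fun B _ => step1 B
    _ = ∑ T ∈ Finset.powersetCard k (univ : Finset (Fin n)), ∑ B : Fin n → Fin n → Bool,
          (if ∀ i ∈ T, good (B i) then wm p B else 0) := Finset.sum_comm
    _ ≤ ∑ _T ∈ Finset.powersetCard k (univ : Finset (Fin n)), q₀ ^ k := by
        refine Finset.sum_le_sum fun T hT => ?_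
        have hTcard : T.card = k := (Finset.mem_powersetCard.1 hT).2
        have factored : ∀ B : Fin n → Fin n → Bool,
            (if ∀ i ∈ T, good (B i) then wm p B else 0) =
            ∏ i, (if i ∈ T then (if good (B i) then w p (B i) else 0) else w p (B i)) := by
          intro B
          by_cases hall : ∀ i ∈ T, good (B i)
          · rw [if_pos hall, wm]
            refine Finset.prod_congr rfl fun i _ => ?_
            by_cases hiT : i ∈ T
            · rw [if_pos hiT, if_pos (hall i hiT)]
            · rw [if_neg hiT]
          · rw [if_neg hall]
            push_neg at hall
            obtain ⟨i₀, hi₀T, hi₀g⟩ := hall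
            refine (Finset.prod_eq_zero (Finset.mem_univ i₀) ?_).symm
            rw [if_pos hi₀T, if_neg hi₀g]
        rw [Finset.sum_congr rfl fun B _ => factored B]
        rw [pi_sum_prod (g := fun i r => if i ∈ T then (if good r then w p r else 0) else w p r)]
        have hsummand : ∀ i : Fin n,
            (∑ r : Fin n → Bool, if i ∈ T then (if good r then w p r else 0) else w p r)
            ≤ if i ∈ T then q₀ else 1 := by
          intro i
          by_cases hiT : i ∈ T
          · simp only [hiT, if_true]
            exact hgood
          · simp only [hiT, if_false]
            rw [sum_w]
        calc ∏ i, ∑ r : Fin n → Bool,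
              (if i ∈ T then (if good r then w p r else 0) else w p r)
            ≤ ∏ i, (if i ∈ T then q₀ else 1) := by
              refine Finset.prod_le_prod (fun i _ => ?_) (fun i _ => hsummand i)
              exact Finset.sum_nonneg fun r _ => by
                split_ifs <;> first | exact w_nonneg hp hp1 r | exact le_refl 0
          _ = q₀ ^ k := by
              rw [Finset.prod_ite_mem univ T (fun _ => q₀), Finset.univ_inter,
                Finset.prod_const, hTcard]
    _ = (n.choose k) * q₀ ^ k := by
        rw [Finset.sum_const, Finset.card_powersetCard, Finset.card_univ, Fintype.card_fin,
          nsmul_eq_mul]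

lemma count_bad {n : ℕ} {t θ : ℝ} (ht : 0 < t) (y : Fin n → ℝ) (h : eNorm y ≤ θ) :
    ((univ.filter fun i => ¬ |y i| ≤ t).card : ℝ) ≤ θ^2 / t^2 := by
  have h0 : 0 ≤ ∑ i, y i ^ 2 := Finset.sum_nonneg fun i _ => sq_nonneg _
  have hsum : ∑ i, y i ^ 2 ≤ θ^2 := by
    have := pow_le_pow_left₀ (Real.sqrt_nonneg _) h 2
    rwa [Real.sq_sqrt h0] at this
  have hcard : ((univ.filter fun i => ¬ |y i| ≤ t).card : ℝ) * t^2 ≤ θ^2 := by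
    calc ((univ.filter fun i => ¬ |y i| ≤ t).card : ℝ) * t^2
        = ∑ _i ∈ univ.filter fun i => ¬ |y i| ≤ t, t^2 := by rw [Finset.sum_const, nsmul_eq_mul]
      _ ≤ ∑ i ∈ univ.filter fun i => ¬ |y i| ≤ t, y i ^ 2 := by
          refine Finset.sum_le_sum fun i hi => ?_
          have : t ≤ |y i| := le_of_lt (not_le.1 (Finset.mem_filter.1 hi).2)
          calc t^2 ≤ |y i|^2 := pow_le_pow_left₀ ht.le this 2
            _ = y i ^ 2 := sq_abs _
      _ ≤ ∑ i, y i ^ 2 := Finset.sum_le_sum_of_subset_of_nonneg (Finset.filter_subset _ _)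
          (fun i _ _ => sq_nonneg _)
      _ ≤ θ^2 := hsum
  rw [le_div_iff₀ (by positivity)]
  exact hcard

lemma pow_self_le_factorial_mul_exp : ∀ r : ℕ, (r : ℝ)^r ≤ r.factorial * Real.exp r := by
  intro r
  induction r with
  | zero => simp
  | succ m ih =>
    have key : ((m+1 : ℕ) : ℝ)^m ≤ m.factorial * Real.exp (m+1) := by
      rcases Nat.eq_zero_or_pos m with hm | hm
      · subst hm; simp
      · have hmpos : (0:ℝ) < m := by exact_mod_cast hm
        have h1 : ((m+1:ℕ):ℝ)^m = (m:ℝ)^m * (1 + 1/(m:ℝ))^m := by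
          rw [← mul_pow]
          congr 1
          push_cast
          field_simp
        have h2 : (1 + 1/(m:ℝ))^m ≤ Real.exp 1 := by
          have : (1 + 1/(m:ℝ)) ≤ Real.exp (1/(m:ℝ)) := by
            have := Real.add_one_le_exp (1/(m:ℝ))
            linarith
          calc (1 + 1/(m:ℝ))^m ≤ (Real.exp (1/(m:ℝ)))^m :=
              pow_le_pow_left₀ (by positivity) this m
            _ = Real.exp ((1/(m:ℝ)) * m) := by rw [← Real.exp_nat_mul]; ring_nf
            _ = Real.exp 1 := by rw [one_div, inv_mul_cancel₀ (ne_of_gt hmpos)]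
        calc ((m+1:ℕ):ℝ)^m = (m:ℝ)^m * (1 + 1/(m:ℝ))^m := h1
          _ ≤ (m.factorial * Real.exp m) * Real.exp 1 := by
              refine mul_le_mul ih h2 (by positivity) (by positivity)
          _ = m.factorial * Real.exp (m+1) := by rw [mul_assoc, ← Real.exp_add]
    calc ((m+1:ℕ):ℝ)^(m+1) = ((m+1:ℕ):ℝ)^m * ((m+1:ℕ):ℝ) := by ring
      _ ≤ (m.factorial * Real.exp (m+1)) * ((m+1:ℕ):ℝ) := by
          refine mul_le_mul_of_nonneg_right key (by positivity)
      _ = (m+1).factorial * Real.exp ((m+1:ℕ):ℝ) := by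
          rw [Nat.factorial_succ]
          push_cast
          ring

lemma L_ge {p : ℝ} (hp : 0 < p) (hp1 : p < 1/20) : 3.77 ≤ 1 - Real.log p := by
  have hlp : Real.log p < Real.log (1/16) := Real.log_lt_log hp (by linarith)
  have h16 : Real.log (1/16) = -(4 * Real.log 2) := by
    rw [one_div, Real.log_inv, show (16:ℝ) = 2^4 by norm_num, Real.log_pow]
    push_cast; ring
  have l2 := Real.log_two_gt_d9
  rw [h16] at hlp
  linarith

lemma analytic_core {p N R L lam : ℝ} (hp : 0 < p) (hp1 : p < 1/20) (hN : 1 ≤ N) (hR1 : 1 ≤ R)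
    (hLdef : L = 1 - Real.log p) (hlamdef : lam = 0.09 * p * N / L)
    (hr : R ≤ lam) :
    R * (1 + Real.log N - Real.log R) + 1.9 * p * R ≤ 0.3 * p * N := by
  have hL377 : 3.77 ≤ L := hLdef ▸ L_ge hp hp1
  have hLpos : 0 < L := by linarith
  have hlam_pos : 0 < lam := by
    rw [hlamdef]; positivity
  have hlamL : lam * L = 0.09 * p * N := by
    rw [hlamdef]; field_simp
  have hR0 : (0:ℝ) < R := by linarith
  have hN0 : (0:ℝ) < N := by linarith
  have f1 : R * (Real.log lam - Real.log R) ≤ lam - R := by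
    have h := Real.log_le_sub_one_of_pos (show (0:ℝ) < lam / R by positivity)
    rw [Real.log_div (ne_of_gt hlam_pos) (ne_of_gt hR0)] at h
    have := mul_le_mul_of_nonneg_left h hR0.le
    have heq : R * (lam / R - 1) = lam - R := by field_simp
    linarith [heq ▸ this]
  have f2 : Real.log lam = Real.log 0.09 + Real.log p + Real.log N - Real.log L := by
    rw [hlamdef, Real.log_div (by positivity : (0:ℝ) < 0.09*p*N).ne' hLpos.ne',
      Real.log_mul (by positivity : (0:ℝ) < 0.09*p).ne' hN0.ne',
      Real.log_mul (by norm_num : (0.09:ℝ) ≠ 0) hp.ne']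
  have f3 : Real.log L ≤ L - 1 := Real.log_le_sub_one_of_pos hLpos
  have f6 : Real.log (100/9 : ℝ) ≤ 2.469 := by
    have h1 : (100/9 : ℝ) = (25/18) * 8 := by norm_num
    have h2 : Real.log ((25/18 : ℝ) * 8) = Real.log (25/18 : ℝ) + Real.log 8 :=
      Real.log_mul (by norm_num) (by norm_num)
    have h3 : Real.log (25/18 : ℝ) ≤ 25/18 - 1 := Real.log_le_sub_one_of_pos (by norm_num)
    have h4 : Real.log (8:ℝ) = 3 * Real.log 2 := by
      rw [show (8:ℝ) = 2^3 by norm_num, Real.log_pow]; push_cast; ring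
    have l2 := Real.log_two_lt_d9
    rw [h1, h2]
    rw [h4]
    linarith
  have f5 : Real.log (0.09 : ℝ) = -Real.log (100/9 : ℝ) := by
    rw [show (0.09:ℝ) = ((100:ℝ)/9)⁻¹ by norm_num, Real.log_inv]
  obtain ⟨D, hDdef⟩ : ∃ D, D = Real.log N - Real.log lam := ⟨_, rfl⟩
  have fD : D ≤ 2*L + 0.469 := by
    have : D = -(Real.log 0.09) - Real.log p + Real.log L := by
      rw [hDdef, f2]; ring
    rw [this, f5]
    have hlogp : Real.log p = 1 - L := by rw [hLdef]; ring
    rw [hlogp]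
    linarith
  have fD0 : 0 ≤ D := by
    have hlamN : lam ≤ N := by nlinarith [hlamL, hL377, hp1, hN, hlam_pos]
    have := Real.log_le_log hlam_pos hlamN
    rw [hDdef]; linarith
  have decomp : R * (1 + Real.log N - Real.log R) =
      R * (1 + D) + R * (Real.log lam - Real.log R) := by
    rw [hDdef]; ring
  have g1 : R * (1 + D) ≤ lam * (1 + D) :=
    mul_le_mul_of_nonneg_right hr (by linarith)
  have g3 : 1.9 * p * R ≤ 1.9 * p * lam := by nlinarith [hr, hp]
  have g4 : lam * (1 + D) ≤ lam * (1 + 2*L + 0.469) :=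
    mul_le_mul_of_nonneg_left (by linarith) hlam_pos.le
  have g5 : lam * (2*L + 2.564) ≤ 0.3 * p * N := by
    have h1 : 2*L + 2.564 ≤ (10/3)*L := by linarith
    have h2 : lam * (2*L + 2.564) ≤ lam * ((10/3)*L) :=
      mul_le_mul_of_nonneg_left h1 hlam_pos.le
    have h3 : lam * ((10/3)*L) = (10/3) * (lam * L) := by ring
    rw [h3, hlamL] at h2
    linarith
  have hp095 : 1.9 * p ≤ 0.095 := by linarith
  calc R * (1 + Real.log N - Real.log R) + 1.9 * p * R
      = R * (1 + D) + R * (Real.log lam - Real.log R) + 1.9 * p * R := by rw [decomp]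
    _ ≤ lam * (1 + D) + (lam - R) + 1.9 * p * lam := by linarith [g1, f1, g3]
    _ ≤ lam * (1 + 2*L + 0.469) + lam + 0.095 * lam := by nlinarith [g4, hp095, hlam_pos, hR0]
    _ = lam * (2*L + 2.564) := by ring
    _ ≤ 0.3 * p * N := g5

lemma final_numeric (n r : ℕ) (p : ℝ) (hn : 1 ≤ n) (hp : 0 < p) (hp1 : p < 1/20)
    (hr : (r:ℝ) ≤ 0.09 * p * n / (1 - Real.log p)) :
    (n.choose (n - r) : ℝ) * (p^2 + (1-p)^2)^(n-r) ≤ Real.exp (-(1.6 * n * p)) := by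
  have hL377 : 3.77 ≤ 1 - Real.log p := L_ge hp hp1
  have hLpos : (0:ℝ) < 1 - Real.log p := by linarith
  have hN0 : (0:ℝ) < n := by exact_mod_cast hn
  have hq0 : (0:ℝ) ≤ p^2 + (1-p)^2 := by positivity
  have hq : p^2 + (1-p)^2 ≤ Real.exp (-(1.9*p)) := by
    have h := Real.add_one_le_exp (-(1.9*p))
    nlinarith
  have hrn : r < n := by
    have hrL : (r:ℝ) * (1 - Real.log p) ≤ 0.09 * p * n := (le_div_iff₀ hLpos).1 hr
    have hr0 : (0:ℝ) ≤ r := Nat.cast_nonneg r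
    have : (r:ℝ) < n := by nlinarith
    exact_mod_cast this
  have hpowle : (p^2 + (1-p)^2)^(n-r) ≤ Real.exp (-(1.9 * p * (n - r : ℕ))) := by
    calc (p^2 + (1-p)^2)^(n-r) ≤ (Real.exp (-(1.9*p)))^(n-r) :=
        pow_le_pow_left₀ hq0 hq (n-r)
      _ = Real.exp (((n-r : ℕ):ℝ) * (-(1.9*p))) := by rw [← Real.exp_nat_mul]
      _ = Real.exp (-(1.9 * p * (n - r : ℕ))) := by ring_nf
  have hcast : ((n - r : ℕ):ℝ) = (n:ℝ) - r := by
    rw [Nat.cast_sub hrn.le]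
  rcases Nat.eq_zero_or_pos r with hr0 | hr1
  · subst hr0
    simp only [Nat.sub_zero, Nat.choose_self, Nat.cast_one, one_mul]
    refine le_trans hpowle (Real.exp_le_exp.2 ?_)
    rw [Nat.sub_zero]
    nlinarith
  · have hR1 : (1:ℝ) ≤ r := by exact_mod_cast hr1
    have hchoose_eq : (n.choose (n - r) : ℝ) = (n.choose r : ℝ) := by
      rw [Nat.choose_symm hrn.le]
    have hr0R : (0:ℝ) < r := by linarith
    have hfac : (0:ℝ) < r.factorial := by exact_mod_cast r.factorial_pos
    have hrr : (0:ℝ) < (r:ℝ)^r := by positivity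
    have c1 : (n.choose r : ℝ) ≤ (n:ℝ)^r / r.factorial := Nat.choose_le_pow_div r n
    have c2 := pow_self_le_factorial_mul_exp r
    have c3 : (n.choose r : ℝ) ≤ (n:ℝ)^r * Real.exp r / (r:ℝ)^r := by
      rw [le_div_iff₀ hrr]
      calc (n.choose r : ℝ) * (r:ℝ)^r ≤ ((n:ℝ)^r / r.factorial) * (r:ℝ)^r :=
          mul_le_mul_of_nonneg_right c1 hrr.le
        _ ≤ ((n:ℝ)^r / r.factorial) * (r.factorial * Real.exp r) := by
            refine mul_le_mul_of_nonneg_left c2 (by positivity)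
        _ = (n:ℝ)^r * Real.exp r := by field_simp
    have c4 : (n:ℝ)^r * Real.exp r / (r:ℝ)^r =
        Real.exp ((r:ℝ) * (1 + Real.log n - Real.log r)) := by
      have en : ((n:ℝ))^r = Real.exp ((r:ℝ) * Real.log n) := by
        rw [Real.exp_nat_mul, Real.exp_log hN0]
      have er : ((r:ℝ))^r = Real.exp ((r:ℝ) * Real.log r) := by
        rw [Real.exp_nat_mul, Real.exp_log hr0R]
      rw [en, er, ← Real.exp_add, ← Real.exp_sub]
      congr 1
      ring
    have c5 : (n.choose r : ℝ) ≤ Real.exp ((r:ℝ) * (1 + Real.log n - Real.log r)) := by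
      rw [← c4]; exact c3
    have hana : (r:ℝ) * (1 + Real.log n - Real.log r) + 1.9 * p * r ≤ 0.3 * p * n :=
      analytic_core hp hp1 (by exact_mod_cast hn) hR1 rfl rfl hr
    calc (n.choose (n - r) : ℝ) * (p^2 + (1-p)^2)^(n-r)
        ≤ (n.choose (n-r) : ℝ) * Real.exp (-(1.9 * p * (n - r : ℕ))) := by
          refine mul_le_mul_of_nonneg_left hpowle (Nat.cast_nonneg _)
      _ = (n.choose r : ℝ) * Real.exp (-(1.9 * p * (n - r : ℕ))) := by rw [hchoose_eq]
      _ ≤ Real.exp ((r:ℝ) * (1 + Real.log n - Real.log r)) *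
            Real.exp (-(1.9 * p * (n - r : ℕ))) := by
          refine mul_le_mul_of_nonneg_right c5 (Real.exp_pos _).le
      _ = Real.exp ((r:ℝ) * (1 + Real.log n - Real.log r) + -(1.9 * p * (n - r : ℕ))) := by
          rw [← Real.exp_add]
      _ ≤ Real.exp (-(1.6 * n * p)) := by
          rw [Real.exp_le_exp, hcast]
          nlinarith
end TL

/-- Anti-concentration for vectors with two large coordinates. -/
theorem two_large_coords_anticoncentration :
    ∀ n : ℕ, ∀ p α : ℝ, 0 < p → p < 1 / 20 → 0 < α →
      ∀ x : Fin n → ℝ, α ≤ ordStat x 2 →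
        (∀ (Ω : Type) [MeasurableSpace Ω] (μ : Measure Ω), IsProbabilityMeasure μ →
          ∀ X : Ω → Fin n → ℝ, IsBernoulliVector μ X p →
            levyConc μ (fun ω => ∑ j, x j * X ω j) (α / 2.1) ≤ Real.exp (-(1.9 * p))) ∧
        (∀ (Ω : Type) [MeasurableSpace Ω] (μ : Measure Ω), IsProbabilityMeasure μ →
          ∀ M : Ω → Matrix (Fin n) (Fin n) ℝ, IsBernoulliMatrix μ M p →
            (μ {ω | eNorm ((M ω).mulVec x) ≤
                α * Real.sqrt (p * n) / (7 * Real.sqrt (Real.log (Real.exp 1 / p)))}).toReal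
              ≤ Real.exp (-(1.6 * n * p))) := by
  intro n p α hp hp1 hα x hx2
  classical
  obtain ⟨i₁, i₂, hne, h1, h2⟩ := TL.exists_two hα hx2
  have hp1' : p ≤ 1 := by linarith
  have ht0 : (0:ℝ) < α / 2.1 := by positivity
  have ht : 2 * (α / 2.1) < α := by
    have e : 2 * (α / 2.1) = α * (20/21) := by ring
    rw [e]; linarith
  have hq : p^2 + (1-p)^2 ≤ Real.exp (-(1.9*p)) := by
    have h := Real.add_one_le_exp (-(1.9*p))
    nlinarith
  constructor
  · intro Ω _ μ hμ X hX
    unfold levyConc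
    refine ciSup_le fun lam => ?_
    refine ENNReal.toReal_le_of_le_ofReal (Real.exp_pos _).le ?_
    refine le_trans (TL.vec_reduce μ hp.le hp1' X hX
      (fun v => |(∑ j, x j * v j) - lam| ≤ α / 2.1)) ?_
    refine ENNReal.ofReal_le_ofReal (le_trans ?_ hq)
    exact TL.row_bound hp hp1 x hne h1 h2 ht
  · intro Ω _ μ hμ M hM
    have hn1 : 1 ≤ n := i₁.pos
    have hN0 : (0:ℝ) < n := by exact_mod_cast hn1
    have hLdef : Real.log (Real.exp 1 / p) = 1 - Real.log p := by
      rw [Real.log_div (Real.exp_ne_zero 1) hp.ne', Real.log_exp]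
    have hL377 : 3.77 ≤ 1 - Real.log p := TL.L_ge hp hp1
    have hLpos : (0:ℝ) < 1 - Real.log p := by linarith
    set θ : ℝ := α * Real.sqrt (p * n) / (7 * Real.sqrt (Real.log (Real.exp 1 / p))) with hθdef
    set r : ℕ := ⌊0.09 * p * n / (1 - Real.log p)⌋₊ with hrdef
    have hrle : (r:ℝ) ≤ 0.09 * p * n / (1 - Real.log p) := Nat.floor_le (by positivity)
    have hθsq : θ^2 = α^2 * (p * n) / (49 * (1 - Real.log p)) := by
      rw [hθdef, div_pow, mul_pow, mul_pow,
        Real.sq_sqrt (by positivity : (0:ℝ) ≤ p * n),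
        Real.sq_sqrt (hLdef ▸ hLpos.le)]
      rw [hLdef]
      norm_num
    have hratio : θ^2 / (α/2.1)^2 ≤ 0.09 * p * n / (1 - Real.log p) := by
      have hα' : α ≠ 0 := ne_of_gt hα
      have h1 : θ^2 / (α/2.1)^2 = 0.09 * p * n / (1 - Real.log p) := by
        rw [hθsq]
        rw [div_eq_div_iff (by positivity) hLpos.ne']
        field_simp
        ring
      rw [h1]
    have himp : ∀ B : Fin n → Fin n → Bool,
        eNorm ((Matrix.of fun i j => TL.ind (B i j)).mulVec x) ≤ θ →
        ∃ T ∈ Finset.powersetCard (n - r) (Finset.univ : Finset (Fin n)), ∀ i ∈ T,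
          |(∑ j, x j * TL.ind (B i j)) - 0| ≤ α / 2.1 := by
      intro B hB
      set y : Fin n → ℝ := (Matrix.of fun i j => TL.ind (B i j)).mulVec x with hy
      have hbad := TL.count_bad ht0 y hB
      have hbadr : (Finset.univ.filter fun i => ¬ |y i| ≤ α/2.1).card ≤ r :=
        Nat.le_floor (le_trans hbad hratio)
      have hsplitc : (Finset.univ.filter fun i => |y i| ≤ α/2.1).card +
          (Finset.univ.filter fun i => ¬ |y i| ≤ α/2.1).card = n := by
        rw [Finset.card_filter_add_card_filter_not]
        simp
      have hk : n - r ≤ (Finset.univ.filter fun i => |y i| ≤ α/2.1).card := by omega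
      obtain ⟨T, hTsub, hTcard⟩ := Finset.exists_subset_card_eq hk
      refine ⟨T, Finset.mem_powersetCard.2 ⟨Finset.subset_univ T, hTcard⟩, fun i hiT => ?_⟩
      have hig := hTsub hiT
      rw [Finset.mem_filter] at hig
      have hyi : y i = ∑ j, TL.ind (B i j) * x j := rfl
      have hsum : (∑ j, x j * TL.ind (B i j)) = y i := by
        rw [hyi]
        exact Finset.sum_congr rfl fun j _ => mul_comm _ _
      rw [sub_zero, hsum]
      exact hig.2
    have hrow : (∑ b : Fin n → Bool,
        if |(∑ j, x j * TL.ind (b j)) - 0| ≤ α/2.1 then TL.w p b else 0) ≤ p^2 + (1-p)^2 :=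
      TL.row_bound hp hp1 x hne h1 h2 ht
    have hcore := TL.mat_core hp.le hp1' (by positivity : (0:ℝ) ≤ p^2 + (1-p)^2) (n - r)
      (fun B => eNorm ((Matrix.of fun i j => TL.ind (B i j)).mulVec x) ≤ θ)
      (fun b => |(∑ j, x j * TL.ind (b j)) - 0| ≤ α/2.1) hrow himp
    have hnum : ((n.choose (n - r)) : ℝ) * (p^2 + (1-p)^2)^(n - r) ≤
        Real.exp (-(1.6 * n * p)) := TL.final_numeric n r p hn1 hp hp1 hrle
    refine ENNReal.toReal_le_of_le_ofReal (Real.exp_pos _).le ?_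
    refine le_trans (TL.mat_reduce μ hp.le hp1' M hM (fun A => eNorm (A.mulVec x) ≤ θ)) ?_
    exact ENNReal.ofReal_le_ofReal (le_trans hcore hnum)
end

section
/- Let r, δ, ρ ∈ (0,1) and let g be a growth function. Let n ≥ 6/r and let A be an n×n random matrix (with arbitrary distribution). Then for every t > 0, P{‖Ax‖ ≤ t·‖x‖ for some x ∈ V_n(r, g, δ, ρ)} ≤ (2/(rn)²)·Σ_{i≠j} P{dist(H_i(A), C_i(A)) ≤ t·b_n and dist(H_j(A), C_j(A)) ≤ t·b_n}, where the sum is over all ordered pairs (i, j) with i ≠ j, and b_n = Σ_{i=1}^n g(i). -/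
open MeasureTheory

/-- A growth function: a non-decreasing function `[1,∞) → [1,∞)`. -/
def IsGrowthFunction (g : ℝ → ℝ) : Prop :=
  MonotoneOn g (Set.Ici 1) ∧ ∀ t : ℝ, 1 ≤ t → 1 ≤ g t

/-- The set of gradual non-constant vectors `V_n(r, g, δ, ρ)`. -/
def gradualNonConst (n : ℕ) (r : ℝ) (g : ℝ → ℝ) (δ ρ : ℝ) : Set (Fin n → ℝ) :=
  {x | ordStat x ⌊r * n⌋₊ = 1 ∧
    (∀ i : Fin n, ordStat x ((i : ℕ) + 1) ≤ g ((n : ℝ) / ((i : ℕ) + 1))) ∧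
    ∃ Q₁ Q₂ : Finset (Fin n), δ * n ≤ Q₁.card ∧ δ * n ≤ Q₂.card ∧
      ∀ i ∈ Q₁, ∀ j ∈ Q₂, x j ≤ x i - ρ}

/-- Euclidean distance from a vector to the linear span of a set of vectors. -/
noncomputable def distToSpan {n : ℕ} (v : Fin n → ℝ) (S : Set (Fin n → ℝ)) : ℝ :=
  sInf {r | ∃ w ∈ Submodule.span ℝ S, r = eNorm (fun i => v i - w i)}

lemma eNorm_nonneg {n : ℕ} (x : Fin n → ℝ) : 0 ≤ eNorm x := Real.sqrt_nonneg _

lemma eNorm_smul {n : ℕ} (c : ℝ) (x : Fin n → ℝ) :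
    eNorm (fun i => c * x i) = |c| * eNorm x := by
  unfold eNorm
  rw [show (∑ i, (c * x i)^2) = c^2 * ∑ i, (x i)^2 by rw [Finset.mul_sum]; ring_nf,
    Real.sqrt_mul (sq_nonneg c), Real.sqrt_sq_eq_abs]

lemma eNorm_le_sum_abs {n : ℕ} (x : Fin n → ℝ) : eNorm x ≤ ∑ i, |x i| := by
  unfold eNorm
  have h : (∑ i, (x i)^2) ≤ (∑ i, |x i|)^2 := by
    rw [sq, Finset.sum_mul]
    refine Finset.sum_le_sum fun i _ => ?_
    have h1 : |x i| ≤ ∑ j, |x j| :=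
      Finset.single_le_sum (fun j _ => abs_nonneg (x j)) (Finset.mem_univ i)
    have h2 : (x i)^2 = |x i| * |x i| := by rw [← abs_mul, ← sq, abs_sq]
    rw [h2]
    exact mul_le_mul_of_nonneg_left h1 (abs_nonneg _)
  calc Real.sqrt (∑ i, (x i)^2) ≤ Real.sqrt ((∑ i, |x i|)^2) := Real.sqrt_le_sqrt h
  _ = abs (∑ i, |x i|) := Real.sqrt_sq_eq_abs _
  _ = ∑ i, |x i| := abs_of_nonneg (Finset.sum_nonneg fun i _ => abs_nonneg _)

lemma distToSpan_bddBelow {n : ℕ} (v : Fin n → ℝ) (S : Set (Fin n → ℝ)) :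
    BddBelow {r | ∃ w ∈ Submodule.span ℝ S, r = eNorm (fun i => v i - w i)} :=
  ⟨0, fun r ⟨w, _, hr⟩ => hr ▸ eNorm_nonneg _⟩

lemma dist_col_le_mulVec {n : ℕ} (M : Matrix (Fin n) (Fin n) ℝ) (x : Fin n → ℝ)
    (i : Fin n) (hxi : 1 ≤ |x i|) :
    distToSpan (fun l => M l i) {w | ∃ k : Fin n, k ≠ i ∧ w = fun l => M l k} ≤
      eNorm (M.mulVec x) := by
  have hx0 : x i ≠ 0 := by intro h; rw [h, abs_zero] at hxi; linarith
  set w : Fin n → ℝ := ∑ k ∈ Finset.univ.erase i, (-(x k / x i)) • (fun l => M l k) with hw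
  have hmem : w ∈ Submodule.span ℝ {w | ∃ k : Fin n, k ≠ i ∧ w = fun l => M l k} := by
    refine Submodule.sum_mem _ fun k hk => Submodule.smul_mem _ _ (Submodule.subset_span ?_)
    exact ⟨k, Finset.ne_of_mem_erase hk, rfl⟩
  have hdiff : (fun l => (fun l => M l i) l - w l) = fun l => (x i)⁻¹ * M.mulVec x l := by
    funext l
    have hwl : w l = ∑ k ∈ Finset.univ.erase i, (-(x k / x i)) * M l k := by
      rw [hw, Finset.sum_apply]; rfl
    have hmv : M.mulVec x l = ∑ k ∈ Finset.univ.erase i, M l k * x k + M l i * x i := by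
      rw [Matrix.mulVec, dotProduct, ← Finset.sum_erase_add _ _ (Finset.mem_univ i)]
    have hpull : ∑ k ∈ Finset.univ.erase i, (-(x k / x i)) * M l k =
        (x i)⁻¹ * ∑ k ∈ Finset.univ.erase i, -(M l k * x k) := by
      rw [Finset.mul_sum]
      exact Finset.sum_congr rfl fun k _ => by rw [div_eq_mul_inv]; ring
    have hneg : ∑ k ∈ Finset.univ.erase i, -(M l k * x k) =
        -∑ k ∈ Finset.univ.erase i, M l k * x k := by
      rw [← Finset.sum_neg_distrib]
    rw [hwl, hmv, hpull, hneg]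
    field_simp
    ring
  have hkey : eNorm (fun l => (fun l => M l i) l - w l) ≤ eNorm (M.mulVec x) := by
    rw [hdiff, eNorm_smul]
    have h1 : |(x i)⁻¹| ≤ 1 := by
      rw [abs_inv]; exact inv_le_one_of_one_le₀ hxi
    calc |(x i)⁻¹| * eNorm (M.mulVec x) ≤ 1 * eNorm (M.mulVec x) :=
      mul_le_mul_of_nonneg_right h1 (eNorm_nonneg _)
    _ = eNorm (M.mulVec x) := one_mul _
  refine le_trans (csInf_le (distToSpan_bddBelow _ _) ⟨w, hmem, rfl⟩) hkey

lemma ordStat_bddAbove {n : ℕ} (hn : 0 < n) (x : Fin n → ℝ) {k : ℕ} (hk : 1 ≤ k) :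
    BddAbove {t : ℝ | k ≤ (Finset.univ.filter fun i => t ≤ |x i|).card} := by
  have hne : (Finset.univ : Finset (Fin n)).Nonempty := ⟨⟨0, hn⟩, Finset.mem_univ _⟩
  refine ⟨Finset.univ.sup' hne (fun i => |x i|), fun t ht => ?_⟩
  simp only [Set.mem_setOf_eq] at ht
  have hcard : 0 < (Finset.univ.filter fun i => t ≤ |x i|).card := lt_of_lt_of_le hk ht
  obtain ⟨i, hi⟩ := Finset.card_pos.mp hcard
  rw [Finset.mem_filter] at hi
  exact le_trans hi.2 (Finset.le_sup' (fun i => |x i|) (Finset.mem_univ i))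

lemma card_ge_of_ordStat_eq_one {n : ℕ} (hn : 0 < n) (x : Fin n → ℝ) {m : ℕ}
    (hm1 : 1 ≤ m) (hmn : m ≤ n) (h : ordStat x m = 1) :
    m ≤ (Finset.univ.filter fun i => 1 ≤ |x i|).card := by
  by_contra hcon
  push_neg at hcon
  have hne : (Finset.univ : Finset (Fin n)).Nonempty := ⟨⟨0, hn⟩, Finset.mem_univ _⟩
  set u := Finset.univ.sup' hne (fun i => if |x i| < 1 then |x i| else 0) with hu
  have hu1 : u < 1 := by
    rw [hu, Finset.sup'_lt_iff]
    intro i _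
    split
    · assumption
    · norm_num
  have hTne : (0:ℝ) ∈ {t : ℝ | m ≤ (Finset.univ.filter fun i => t ≤ |x i|).card} := by
    simp only [Set.mem_setOf_eq]
    have : (Finset.univ.filter fun i => (0:ℝ) ≤ |x i|) = Finset.univ :=
      Finset.filter_true_of_mem fun i _ => abs_nonneg _
    rw [this, Finset.card_univ, Fintype.card_fin]
    exact hmn
  have hub : ∀ t ∈ {t : ℝ | m ≤ (Finset.univ.filter fun i => t ≤ |x i|).card}, t ≤ u := by
    intro t ht
    simp only [Set.mem_setOf_eq] at ht
    by_cases hex : ∃ i, t ≤ |x i| ∧ |x i| < 1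
    · obtain ⟨i, h1, h2⟩ := hex
      calc t ≤ |x i| := h1
      _ = (if |x i| < 1 then |x i| else 0) := by rw [if_pos h2]
      _ ≤ u := by
          rw [hu]
          exact Finset.le_sup' (fun i => if |x i| < 1 then |x i| else 0) (Finset.mem_univ i)
    · push_neg at hex
      have hsub : (Finset.univ.filter fun i => t ≤ |x i|) ⊆
          (Finset.univ.filter fun i => 1 ≤ |x i|) := by
        intro i hi
        rw [Finset.mem_filter] at *
        exact ⟨hi.1, le_of_not_gt (by simpa using hex i hi.2)⟩
      have := Finset.card_le_card hsub
      omega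
  have hle : ordStat x m ≤ u := csSup_le ⟨0, hTne⟩ hub
  rw [h] at hle
  linarith

lemma sum_abs_le_sum_ordStat {n : ℕ} (hn : 0 < n) (x : Fin n → ℝ) :
    ∑ i, |x i| ≤ ∑ i : Fin n, ordStat x ((i:ℕ)+1) := by
  set σ := Tuple.sort (fun i => |x i|) with hσ
  have hmono : Monotone ((fun i => |x i|) ∘ σ) := Tuple.monotone_sort _
  have hper : ∀ i : Fin n, |x (σ i)| ≤ ordStat x (n - (i:ℕ)) := by
    intro i
    have hik : 1 ≤ n - (i:ℕ) := by have := i.isLt; omega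
    apply le_csSup (ordStat_bddAbove hn x hik)
    simp only [Set.mem_setOf_eq]
    have hsub : (Finset.Ici i).image σ ⊆
        Finset.univ.filter fun j => |x (σ i)| ≤ |x j| := by
      intro j hj
      simp only [Finset.mem_image, Finset.mem_Ici] at hj
      obtain ⟨i', hii', rfl⟩ := hj
      simp only [Finset.mem_filter, Finset.mem_univ, true_and]
      exact hmono hii'
    have hcard : ((Finset.Ici i).image σ).card = n - (i:ℕ) := by
      rw [Finset.card_image_of_injective _ σ.injective, Fin.card_Ici]
    calc n - (i:ℕ) = ((Finset.Ici i).image σ).card := hcard.symm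
    _ ≤ _ := Finset.card_le_card hsub
  have hre : ∑ i : Fin n, ordStat x (n - (i:ℕ)) = ∑ i : Fin n, ordStat x ((i:ℕ)+1) := by
    rw [← Equiv.sum_comp (Fin.revPerm) (fun i : Fin n => ordStat x (n - (i:ℕ)))]
    refine Finset.sum_congr rfl fun i _ => ?_
    have hrv : n - ((Fin.revPerm i : Fin n) : ℕ) = (i:ℕ)+1 := by
      have := i.isLt
      simp only [Fin.revPerm_apply, Fin.val_rev]
      omega
    rw [hrv]
  calc ∑ i, |x i| = ∑ i, |x (σ i)| := (Equiv.sum_comp σ fun i => |x i|).symm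
  _ ≤ ∑ i : Fin n, ordStat x (n - (i:ℕ)) := Finset.sum_le_sum fun i _ => hper i
  _ = _ := hre

lemma eNorm_le_b {n : ℕ} (hn : 0 < n) (g : ℝ → ℝ) (hg : IsGrowthFunction g) (x : Fin n → ℝ)
    (hx : ∀ i : Fin n, ordStat x ((i:ℕ)+1) ≤ g ((n:ℝ)/((i:ℕ)+1))) :
    eNorm x ≤ ∑ k ∈ Finset.range n, g ((k:ℝ)+1) := by
  have h1 := eNorm_le_sum_abs x
  have h2 := sum_abs_le_sum_ordStat hn x
  have h3 : ∀ i : Fin n, g ((n:ℝ)/((i:ℕ)+1)) ≤ g ((((Fin.rev i : Fin n) : ℕ) : ℝ) + 1) := by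
    intro i
    have hi := i.isLt
    have hnat : (i:ℕ) + ((Fin.rev i : Fin n):ℕ) + 1 = n := by
      simp only [Fin.val_rev]; omega
    have hcast : (((Fin.rev i : Fin n) : ℕ) : ℝ) + 1 = (n:ℝ) - (i:ℕ) := by
      have : ((i:ℕ):ℝ) + (((Fin.rev i : Fin n) : ℕ) : ℝ) + 1 = (n:ℝ) := by exact_mod_cast hnat
      linarith
    have hiR : ((i:ℕ):ℝ) ≤ (n:ℝ) - 1 := by
      have : ((i:ℕ):ℝ) + 1 ≤ (n:ℝ) := by exact_mod_cast hi
      linarith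
    have hiR0 : (0:ℝ) ≤ ((i:ℕ):ℝ) := Nat.cast_nonneg _
    have h1le : (1:ℝ) ≤ (n:ℝ)/((i:ℕ)+1) := by
      rw [le_div_iff₀ (by positivity)]
      linarith
    have h2le : (1:ℝ) ≤ (n:ℝ) - (i:ℕ) := by linarith
    have hle : (n:ℝ)/((i:ℕ)+1) ≤ (n:ℝ) - (i:ℕ) := by
      rw [div_le_iff₀ (by positivity)]
      nlinarith [mul_nonneg hiR0 (show (0:ℝ) ≤ (n:ℝ) - ((i:ℕ):ℝ) - 1 by linarith)]
    rw [hcast]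
    exact hg.1 (Set.mem_Ici.mpr h1le) (Set.mem_Ici.mpr h2le) hle
  have h4 : ∑ i : Fin n, g ((((Fin.rev i : Fin n) : ℕ) : ℝ) + 1) = ∑ k ∈ Finset.range n, g ((k:ℝ)+1) := by
    rw [← Fin.sum_univ_eq_sum_range (fun k => g ((k:ℝ)+1)) n]
    exact Equiv.sum_comp Fin.revPerm (fun i : Fin n => g ((((i : Fin n) : ℕ) : ℝ) + 1))
  calc eNorm x ≤ ∑ i, |x i| := h1
  _ ≤ ∑ i : Fin n, ordStat x ((i:ℕ)+1) := h2
  _ ≤ ∑ i : Fin n, g ((n:ℝ)/((i:ℕ)+1)) := Finset.sum_le_sum fun i _ => hx i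
  _ ≤ ∑ i : Fin n, g ((((Fin.rev i : Fin n) : ℕ) : ℝ) + 1) := Finset.sum_le_sum fun i _ => h3 i
  _ = _ := h4

lemma key_indices {n : ℕ} (r δ ρ : ℝ) (hr : r ∈ Set.Ioo (0:ℝ) 1) (hn6 : 6 / r ≤ (n:ℝ))
    (g : ℝ → ℝ) (hg : IsGrowthFunction g) (M : Matrix (Fin n) (Fin n) ℝ)
    (x : Fin n → ℝ) (hx : x ∈ gradualNonConst n r g δ ρ) (t : ℝ)
    (hAx : eNorm (M.mulVec x) ≤ t * eNorm x) (ht : 0 < t) :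
    ∃ I : Finset (Fin n), ⌊r * n⌋₊ ≤ I.card ∧ ∀ i ∈ I,
      distToSpan (fun l => M l i) {w | ∃ k : Fin n, k ≠ i ∧ w = fun l => M l k} ≤
        t * ∑ k ∈ Finset.range n, g ((k:ℝ)+1) := by
  obtain ⟨hr0, hr1⟩ := hr
  have hrn6 : (6:ℝ) ≤ r * n := by
    rw [div_le_iff₀ hr0] at hn6
    linarith
  have hn6' : (6:ℝ) ≤ (n:ℝ) := by
    calc (6:ℝ) ≤ r * n := hrn6
    _ ≤ 1 * n := by
        apply mul_le_mul_of_nonneg_right (le_of_lt hr1) (Nat.cast_nonneg _)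
    _ = n := one_mul _
  have hn : 0 < n := by exact_mod_cast lt_of_lt_of_le (by norm_num : (0:ℝ) < 6) hn6'
  set m := ⌊r * (n:ℝ)⌋₊ with hm
  have hm6 : 6 ≤ m := Nat.le_floor (by exact_mod_cast hrn6)
  have hmn : m ≤ n := by
    have h1 : (m:ℝ) ≤ r * n := Nat.floor_le (by positivity)
    have h2 : r * n < n := by
      have : 0 < (n:ℝ) := by exact_mod_cast hn
      nlinarith
    exact_mod_cast le_of_lt (lt_of_le_of_lt h1 h2)
  refine ⟨Finset.univ.filter fun i => 1 ≤ |x i|, ?_, ?_⟩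
  · exact card_ge_of_ordStat_eq_one hn x (by omega) hmn hx.1
  · intro i hi
    rw [Finset.mem_filter] at hi
    have hd := dist_col_le_mulVec M x i hi.2
    have hb := eNorm_le_b hn g hg x hx.2.1
    calc distToSpan (fun l => M l i) {w | ∃ k : Fin n, k ≠ i ∧ w = fun l => M l k}
        ≤ eNorm (M.mulVec x) := hd
    _ ≤ t * eNorm x := hAx
    _ ≤ t * ∑ k ∈ Finset.range n, g ((k:ℝ)+1) := mul_le_mul_of_nonneg_left hb (le_of_lt ht)

lemma distToSpan_eq_range {n : ℕ} {ι : Type} [Fintype ι] (v : Fin n → ℝ)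
    (u : ι → (Fin n → ℝ)) :
    distToSpan v (Set.range u) =
      sInf (Set.range fun c : ι → ℝ => eNorm (fun l => v l - ∑ k, c k * u k l)) := by
  unfold distToSpan
  congr 1
  ext s
  simp only [Set.mem_setOf_eq, Set.mem_range]
  constructor
  · rintro ⟨w, hw, rfl⟩
    obtain ⟨c, hc⟩ := (Submodule.mem_span_range_iff_exists_fun ℝ).mp hw
    refine ⟨c, ?_⟩
    congr 1
    funext l
    rw [← hc]
    simp [Finset.sum_apply]
  · rintro ⟨c, rfl⟩
    refine ⟨fun l => ∑ k, c k * u k l, ?_, rfl⟩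
    refine (Submodule.mem_span_range_iff_exists_fun ℝ).mpr ⟨c, ?_⟩
    funext l
    simp [Finset.sum_apply]

lemma measurableSet_distToSpan_le {n : ℕ} {Ω : Type} [MeasurableSpace Ω]
    (A : Ω → Matrix (Fin n) (Fin n) ℝ) (hA : ∀ i j, Measurable fun ω => A ω i j)
    (i : Fin n) (a : ℝ) :
    MeasurableSet {ω | distToSpan (fun l => A ω l i)
      {w | ∃ k : Fin n, k ≠ i ∧ w = fun l => A ω l k} ≤ a} := by
  classical
  set F : Ω → ({k : Fin n // k ≠ i} → ℝ) → ℝ := fun ω c =>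
    eNorm (fun l => (fun l => A ω l i) l - ∑ k : {k : Fin n // k ≠ i}, c k * A ω l (k : Fin n))
    with hF
  have hSrange : ∀ ω : Ω, {w : Fin n → ℝ | ∃ k : Fin n, k ≠ i ∧ w = fun l => A ω l k}
      = Set.range (fun k : {k : Fin n // k ≠ i} => fun l => A ω l (k : Fin n)) := by
    intro ω
    ext w
    constructor
    · rintro ⟨k, hk, rfl⟩; exact ⟨⟨k, hk⟩, rfl⟩
    · rintro ⟨⟨k, hk⟩, rfl⟩; exact ⟨k, hk, rfl⟩
  have hrepr : ∀ ω : Ω, distToSpan (fun l => A ω l i)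
      {w | ∃ k : Fin n, k ≠ i ∧ w = fun l => A ω l k} = sInf (Set.range (F ω)) := by
    intro ω
    rw [hSrange ω, distToSpan_eq_range]
  have hne : ∀ ω, (Set.range (F ω)).Nonempty := fun ω => ⟨F ω 0, ⟨0, rfl⟩⟩
  have hbdd : ∀ ω, BddBelow (Set.range (F ω)) := by
    intro ω
    exact ⟨0, by rintro s ⟨c, rfl⟩; exact eNorm_nonneg _⟩
  have hcont : ∀ ω, Continuous (F ω) := by
    intro ω
    rw [hF]
    unfold eNorm
    apply Real.continuous_sqrt.comp
    apply continuous_finset_sum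
    intro l _
    apply Continuous.pow
    apply Continuous.sub continuous_const
    apply continuous_finset_sum
    intro k _
    exact (continuous_apply k).mul continuous_const
  have hmeasF : ∀ c, Measurable fun ω => F ω c := by
    intro c
    rw [hF]
    unfold eNorm
    apply Measurable.sqrt
    apply Finset.measurable_sum
    intro l _
    apply Measurable.pow_const
    apply Measurable.sub (hA l i)
    apply Finset.measurable_sum
    intro k _
    exact (hA l (k : Fin n)).const_mul (c k)
  obtain ⟨D, hDc, hDd⟩ := TopologicalSpace.exists_countable_dense ({k : Fin n // k ≠ i} → ℝ)
  have heq : {ω | distToSpan (fun l => A ω l i)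
        {w | ∃ k : Fin n, k ≠ i ∧ w = fun l => A ω l k} ≤ a}
      = ⋂ (mi : ℕ), ⋃ c ∈ D, {ω | F ω c < a + 1/(mi+1)} := by
    ext ω
    simp only [Set.mem_setOf_eq, Set.mem_iInter, Set.mem_iUnion, hrepr ω]
    constructor
    · intro h mi
      have hpos : (0:ℝ) < 1/((mi:ℝ)+1) := by positivity
      have hlt : sInf (Set.range (F ω)) < a + 1/((mi:ℝ)+1) := by linarith
      obtain ⟨s, ⟨c0, rfl⟩, hs⟩ := exists_lt_of_csInf_lt (hne ω) hlt
      have hU : IsOpen {c : {k : Fin n // k ≠ i} → ℝ | F ω c < a + 1/((mi:ℝ)+1)} :=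
        isOpen_lt (hcont ω) continuous_const
      obtain ⟨c, hcD, hcU⟩ := hDd.exists_mem_open hU ⟨c0, hs⟩
      exact ⟨c, hcD, hcU⟩
    · intro h
      have hforall : ∀ ε : ℝ, 0 < ε → sInf (Set.range (F ω)) ≤ a + ε := by
        intro ε hε
        obtain ⟨mi, hmi⟩ := exists_nat_one_div_lt hε
        obtain ⟨c, _, hc⟩ := h mi
        have h1 : sInf (Set.range (F ω)) ≤ F ω c := csInf_le (hbdd ω) ⟨c, rfl⟩
        have : (1:ℝ)/((mi:ℝ)+1) < ε := by exact_mod_cast hmi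
        linarith
      exact le_of_forall_pos_le_add hforall
  rw [heq]
  exact MeasurableSet.iInter fun mi =>
    MeasurableSet.biUnion hDc fun c _ => measurableSet_lt (hmeasF c) measurable_const

/-- Invertibility over gradual non-constant vectors via distances of columns to the spans of
the remaining columns. -/
theorem invertibility_via_distance :
    ∀ n : ℕ, ∀ r δ ρ : ℝ,
      r ∈ Set.Ioo (0 : ℝ) 1 → δ ∈ Set.Ioo (0 : ℝ) 1 → ρ ∈ Set.Ioo (0 : ℝ) 1 →
      ∀ g : ℝ → ℝ, IsGrowthFunction g → 6 / r ≤ (n : ℝ) →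
        ∀ (Ω : Type) [MeasurableSpace Ω] (μ : Measure Ω), IsProbabilityMeasure μ →
          ∀ A : Ω → Matrix (Fin n) (Fin n) ℝ, (∀ i j, Measurable fun ω => A ω i j) →
            ∀ t : ℝ, 0 < t →
              (μ {ω | ∃ x ∈ gradualNonConst n r g δ ρ,
                  eNorm ((A ω).mulVec x) ≤ t * eNorm x}).toReal ≤
                2 / (r * n) ^ 2 *
                  ∑ i : Fin n, ∑ j : Fin n,
                    (if i ≠ j then
                      (μ {ω |
                        distToSpan (fun l => A ω l i)
                            {w | ∃ k : Fin n, k ≠ i ∧ w = fun l => A ω l k} ≤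
                          t * (∑ k ∈ Finset.range n, g ((k : ℝ) + 1)) ∧
                        distToSpan (fun l => A ω l j)
                            {w | ∃ k : Fin n, k ≠ j ∧ w = fun l => A ω l k} ≤
                          t * (∑ k ∈ Finset.range n, g ((k : ℝ) + 1))}).toReal
                    else 0) := by
  intro n r δ ρ hr hδ hρ g hg hn6 Ω _ μ hμ A hA t ht
  classical
  set Dset : Fin n → Set Ω := fun i => {ω | distToSpan (fun l => A ω l i)
      {w | ∃ k : Fin n, k ≠ i ∧ w = fun l => A ω l k} ≤
        t * (∑ k ∈ Finset.range n, g ((k : ℝ) + 1))} with hD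
  have hDmeas : ∀ i, MeasurableSet (Dset i) := fun i => measurableSet_distToSpan_le A hA i _
  set S : Fin n → Fin n → Set Ω := fun i j => if i ≠ j then Dset i ∩ Dset j else ∅ with hS
  have hSmeas : ∀ i j, MeasurableSet (S i j) := by
    intro i j
    rw [hS]
    dsimp only
    split
    · exact (hDmeas i).inter (hDmeas j)
    · exact MeasurableSet.empty
  obtain ⟨hr0, hr1⟩ := hr
  have hrn6 : (6:ℝ) ≤ r * n := by rw [div_le_iff₀ hr0] at hn6; linarith
  have hrn0 : (0:ℝ) < r * n := by linarith
  set m := ⌊r * (n:ℝ)⌋₊ with hm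
  have hm6 : 6 ≤ m := Nat.le_floor (by exact_mod_cast hrn6)
  have hmR : r * (n:ℝ) - 1 ≤ (m:ℝ) := le_of_lt (Nat.sub_one_lt_floor _)
  set N : ℕ := m * (m - 1) with hN
  have hNR : (r*n)^2 ≤ 2 * (N:ℝ) := by
    have hcast : (N:ℝ) = (m:ℝ) * ((m:ℝ) - 1) := by
      rw [hN]
      push_cast [Nat.cast_sub (by omega : 1 ≤ m)]
      ring
    have hm6R : (6:ℝ) ≤ (m:ℝ) := by exact_mod_cast hm6
    rw [hcast]
    nlinarith [hmR, hrn6, hm6R]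
  set E := {ω | ∃ x ∈ gradualNonConst n r g δ ρ, eNorm ((A ω).mulVec x) ≤ t * eNorm x}
    with hE
  set f : Ω → ENNReal := fun ω => ∑ i : Fin n, ∑ j : Fin n, (S i j).indicator 1 ω with hf
  have hfmeas : Measurable f := by
    apply Finset.measurable_sum
    intro i _
    apply Finset.measurable_sum
    intro j _
    exact measurable_const.indicator (hSmeas i j)
  have hEsub : E ⊆ {ω | (N : ENNReal) ≤ f ω} := by
    intro ω hω
    obtain ⟨x, hx, hAx⟩ := hω
    obtain ⟨I, hIcard, hIdist⟩ := key_indices r δ ρ ⟨hr0, hr1⟩ hn6 g hg (A ω) x hx t hAx ht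
    have hωD : ∀ i ∈ I, ω ∈ Dset i := fun i hi => hIdist i hi
    have hcount : ∀ i ∈ I, ∀ j ∈ I.erase i, (S i j).indicator (1 : Ω → ENNReal) ω = 1 := by
      intro i hi j hj
      have hji : j ≠ i := Finset.ne_of_mem_erase hj
      have hmem : ω ∈ S i j := by
        rw [hS]
        dsimp only
        rw [if_pos hji.symm]
        exact ⟨hωD i hi, hωD j (Finset.mem_of_mem_erase hj)⟩
      simp [Set.indicator_of_mem hmem]
    have hlb : (N : ENNReal) ≤ ∑ i ∈ I, ∑ j ∈ I.erase i, (S i j).indicator 1 ω := by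
      have h1 : ∑ i ∈ I, ∑ j ∈ I.erase i, (S i j).indicator (1 : Ω → ENNReal) ω
          = ∑ i ∈ I, ∑ _j ∈ I.erase i, (1 : ENNReal) :=
        Finset.sum_congr rfl fun i hi => Finset.sum_congr rfl (hcount i hi)
      rw [h1]
      have h2 : ∑ i ∈ I, ∑ _j ∈ I.erase i, (1 : ENNReal) = ((I.card * (I.card - 1) : ℕ) : ENNReal) := by
        have he : ∀ i ∈ I, ∑ _j ∈ I.erase i, (1:ENNReal) = ((I.card - 1 : ℕ) : ENNReal) := by
          intro i hi
          rw [Finset.sum_const, Finset.card_erase_of_mem hi, nsmul_eq_mul, mul_one]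
        rw [Finset.sum_congr rfl he, Finset.sum_const, nsmul_eq_mul, Nat.cast_mul]
      rw [h2]
      have h3 : N ≤ I.card * (I.card - 1) := Nat.mul_le_mul hIcard (by omega)
      exact_mod_cast Nat.cast_le.mpr h3
    refine le_trans hlb ?_
    rw [hf]
    dsimp only [Set.mem_setOf_eq]
    refine le_trans (Finset.sum_le_sum fun i _ =>
        Finset.sum_le_sum_of_subset (Finset.subset_univ (I.erase i)))
      (Finset.sum_le_sum_of_subset (Finset.subset_univ I))
  have hmark : (N : ENNReal) * μ E ≤ ∑ i : Fin n, ∑ j : Fin n, μ (S i j) := by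
    have h1 : (N : ENNReal) * μ E ≤ (N : ENNReal) * μ {ω | (N : ENNReal) ≤ f ω} :=
      mul_le_mul_right (measure_mono hEsub) _
    have h2 := mul_meas_ge_le_lintegral₀ (μ := μ) hfmeas.aemeasurable (N : ENNReal)
    have h3 : ∫⁻ ω, f ω ∂μ = ∑ i : Fin n, ∑ j : Fin n, μ (S i j) := by
      show ∫⁻ ω, ∑ i : Fin n, ∑ j : Fin n, (S i j).indicator 1 ω ∂μ
        = ∑ i : Fin n, ∑ j : Fin n, μ (S i j)
      rw [lintegral_finset_sum (μ := μ) Finset.univ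
        (f := fun i ω => ∑ j : Fin n, (S i j).indicator 1 ω)
        (fun i _ => Finset.measurable_sum _
          fun j _ => measurable_const.indicator (hSmeas i j))]
      refine Finset.sum_congr rfl fun i _ => ?_
      rw [lintegral_finset_sum (μ := μ) Finset.univ
        (f := fun j ω => (S i j).indicator 1 ω)
        (fun j _ => measurable_const.indicator (hSmeas i j))]
      exact Finset.sum_congr rfl fun j _ => lintegral_indicator_one (hSmeas i j)
    calc (N : ENNReal) * μ E ≤ (N : ENNReal) * μ {ω | (N : ENNReal) ≤ f ω} := h1
    _ ≤ ∫⁻ ω, f ω ∂μ := h2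
    _ = _ := h3
  have hfin : (∑ i : Fin n, ∑ j : Fin n, μ (S i j)) ≠ ⊤ := by
    refine (ENNReal.sum_lt_top.mpr fun i _ => ENNReal.sum_lt_top.mpr fun j _ => ?_).ne
    exact (measure_lt_top μ _)
  have hreal : (N:ℝ) * (μ E).toReal ≤ ∑ i : Fin n, ∑ j : Fin n, (μ (S i j)).toReal := by
    have h1 := ENNReal.toReal_mono hfin hmark
    simp only [ENNReal.toReal_mul, ENNReal.toReal_natCast] at h1
    rw [ENNReal.toReal_sum (fun i _ => (ENNReal.sum_lt_top.mpr
      fun j _ => measure_lt_top μ _).ne)] at h1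
    refine le_trans h1 (le_of_eq ?_)
    exact Finset.sum_congr rfl fun i _ =>
      ENNReal.toReal_sum fun j _ => (measure_lt_top μ _).ne
  have hterm : ∀ i j : Fin n, (μ (S i j)).toReal =
      (if i ≠ j then
        (μ {ω |
          distToSpan (fun l => A ω l i)
              {w | ∃ k : Fin n, k ≠ i ∧ w = fun l => A ω l k} ≤
            t * (∑ k ∈ Finset.range n, g ((k : ℝ) + 1)) ∧
          distToSpan (fun l => A ω l j)
              {w | ∃ k : Fin n, k ≠ j ∧ w = fun l => A ω l k} ≤
            t * (∑ k ∈ Finset.range n, g ((k : ℝ) + 1))}).toReal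
      else 0) := by
    intro i j
    rw [hS]
    dsimp only
    split
    · rfl
    · simp
  rw [show (∑ i : Fin n, ∑ j : Fin n, (μ (S i j)).toReal) = _ from
    Finset.sum_congr rfl fun i _ => Finset.sum_congr rfl fun j _ => hterm i j] at hreal
  set SS : ℝ := ∑ i : Fin n, ∑ j : Fin n,
      (if i ≠ j then
        (μ {ω |
          distToSpan (fun l => A ω l i)
              {w | ∃ k : Fin n, k ≠ i ∧ w = fun l => A ω l k} ≤
            t * (∑ k ∈ Finset.range n, g ((k : ℝ) + 1)) ∧
          distToSpan (fun l => A ω l j)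
              {w | ∃ k : Fin n, k ≠ j ∧ w = fun l => A ω l k} ≤
            t * (∑ k ∈ Finset.range n, g ((k : ℝ) + 1))}).toReal
      else 0) with hSS
  have hp0 : 0 ≤ (μ E).toReal := ENNReal.toReal_nonneg
  have hfinal : (μ E).toReal ≤ (2 * SS) / (r * n)^2 := by
    rw [le_div_iff₀ (by positivity)]
    nlinarith [mul_le_mul_of_nonneg_left hNR hp0, hreal]
  calc (μ E).toReal ≤ (2 * SS) / (r * n)^2 := hfinal
  _ = 2 / (r * n)^2 * SS := by ring
end

section
/- Let ℓ ≥ 1 be an integer and p ∈ (0, 1/2] satisfy p·ℓ ≤ 1/32, and let M be an n×n Bernoulli(p) random matrix. Then with probability at least 1 − 2·binom(n, ℓ)·exp(−nℓp/4), for every J ⊆ {1,…,n} with |J| = ℓ one has ℓpn/16 ≤ |I(J, M)| ≤ 2ℓnp, where I(J, M) := {i ≤ n : the i-th row of M has exactly one entry equal to 1 among the components indexed by J}. -/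
open MeasureTheory

open Finset
open scoped ENNReal

namespace RSC

variable {n : ℕ}

def g (p : ℝ) (b : Bool) : ℝ := if b then p else 1 - p

def rho (p : ℝ) (r : Fin n → Bool) : ℝ := ∏ j, g p (r j)

def W (p : ℝ) (f : Fin n → Fin n → Bool) : ℝ := ∏ i, rho p (f i)

def cnt (J : Finset (Fin n)) (f : Fin n → Fin n → Bool) : ℕ :=
  (univ.filter fun i => (J.filter fun j => f i j).card = 1).card

def SJ (J : Finset (Fin n)) : Finset (Fin n → Bool) :=
  univ.filter fun r : Fin n → Bool => (J.filter fun j => r j).card = 1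

lemma g_nonneg {p : ℝ} (h0 : 0 ≤ p) (h1 : p ≤ 1) (b : Bool) : 0 ≤ g p b := by
  cases b <;> simp [g] <;> linarith

lemma rho_nonneg {p : ℝ} (h0 : 0 ≤ p) (h1 : p ≤ 1) (r : Fin n → Bool) : 0 ≤ rho p r :=
  Finset.prod_nonneg fun j _ => g_nonneg h0 h1 _

lemma W_nonneg {p : ℝ} (h0 : 0 ≤ p) (h1 : p ≤ 1) (f : Fin n → Fin n → Bool) : 0 ≤ W p f :=
  Finset.prod_nonneg fun i _ => rho_nonneg h0 h1 _

lemma sum_pi {m : ℕ} (t : Fin m → Finset Bool) (h : Fin m → Bool → ℝ) :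
    ∑ r ∈ Fintype.piFinset t, ∏ j, h j (r j) = ∏ j, ∑ b ∈ t j, h j b :=
  (Finset.prod_univ_sum t h).symm

lemma sum_rho {p : ℝ} : ∑ r : Fin n → Bool, rho p r = 1 := by
  have := sum_pi (fun _ : Fin n => (univ : Finset Bool)) (fun _ b => g p b)
  simp only [Fintype.piFinset_univ] at this
  rw [show (∑ r : Fin n → Bool, rho p r) = ∑ r : Fin n → Bool, ∏ j, g p (r j) from rfl, this]
  simp [g]

def tJ (J : Finset (Fin n)) (j0 j : Fin n) : Finset Bool :=
  if j = j0 then {true} else if j ∈ J then {false} else univ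

lemma S_eq (J : Finset (Fin n)) :
    (univ.filter fun r : Fin n → Bool => (J.filter fun j => r j).card = 1)
      = J.biUnion (fun j0 => Fintype.piFinset (tJ J j0)) := by
  ext r
  simp only [mem_filter, mem_univ, true_and, mem_biUnion, Fintype.mem_piFinset]
  constructor
  · intro hc
    obtain ⟨j0, hj0⟩ := Finset.card_eq_one.1 hc
    have hj0J : j0 ∈ J ∧ r j0 = true := by
      have : j0 ∈ J.filter fun j => r j := hj0 ▸ Finset.mem_singleton_self j0
      simpa using this
    refine ⟨j0, hj0J.1, fun j => ?_⟩
    unfold tJ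
    split_ifs with h1 h2
    · simp [h1, hj0J.2]
    · have : r j = false := by
        by_contra hrj
        have hrj' : r j = true := by revert hrj; cases r j <;> simp
        have : j ∈ J.filter fun j => r j := Finset.mem_filter.2 ⟨h2, hrj'⟩
        rw [hj0] at this
        exact h1 (Finset.mem_singleton.1 this)
      simp [this]
    · simp
  · rintro ⟨j0, hj0J, hr⟩
    have h1 : r j0 = true := by have := hr j0; simpa [tJ] using this
    have h2 : ∀ j ∈ J, j ≠ j0 → r j = false := by
      intro j hj hne
      have := hr j; simpa [tJ, hne, hj] using this
    have : (J.filter fun j => r j) = {j0} := by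
      ext j
      simp only [mem_filter, mem_singleton]
      constructor
      · rintro ⟨hj, hrj⟩
        by_contra hne
        rw [h2 j hj hne] at hrj
        exact Bool.false_ne_true hrj
      · rintro rfl; exact ⟨hj0J, h1⟩
    rw [this, Finset.card_singleton]

lemma sum_rho_S {p : ℝ} {l : ℕ} (J : Finset (Fin n)) (hJ : J.card = l) :
    ∑ r ∈ SJ J, rho p r = l * (p * (1 - p) ^ (l - 1)) := by
  rw [SJ, S_eq]
  rw [Finset.sum_biUnion ?hd]
  case hd =>
    intro a ha b hb hne
    simp only [Function.onFun]
    rw [Finset.disjoint_left]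
    intro r hra hrb
    have h1 : r a = true := by
      have := (Fintype.mem_piFinset.1 hra) a; simpa [tJ] using this
    have h2 : r a = false := by
      have := (Fintype.mem_piFinset.1 hrb) a
      simpa [tJ, (by simpa using hne : a ≠ b), (by simpa using ha : a ∈ J)] using this
    rw [h1] at h2; exact Bool.noConfusion h2
  have key : ∀ j0 ∈ J, ∑ r ∈ Fintype.piFinset (tJ J j0), rho p r = p * (1 - p) ^ (l - 1) := by
    intro j0 hj0
    rw [show (∑ r ∈ Fintype.piFinset (tJ J j0), rho p r)
        = ∑ r ∈ Fintype.piFinset (tJ J j0), ∏ j, g p (r j) from rfl, sum_pi]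
    have hsub : J ⊆ univ := Finset.subset_univ J
    rw [← Finset.prod_subset hsub ?hout]
    case hout =>
      intro j _ hj
      have hne : j ≠ j0 := fun h => hj (h ▸ hj0)
      simp [tJ, hne, hj, g]
    rw [← Finset.mul_prod_erase J _ hj0]
    have e1 : ∑ b ∈ tJ J j0 j0, g p b = p := by simp [tJ, g]
    have e2 : ∀ j ∈ J.erase j0, (∑ b ∈ tJ J j0 j, g p b) = 1 - p := by
      intro j hj
      have h1 := Finset.ne_of_mem_erase hj
      have h2 := Finset.mem_of_mem_erase hj
      simp [tJ, h1, h2, g]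
    rw [e1, Finset.prod_congr rfl e2, Finset.prod_const, Finset.card_erase_of_mem hj0, hJ]
  rw [Finset.sum_congr rfl key, Finset.sum_const, hJ, nsmul_eq_mul]

lemma mgf (p c : ℝ) (J : Finset (Fin n)) :
    ∑ f : Fin n → Fin n → Bool, W p f * c ^ cnt J f
      = ((1 - ∑ r ∈ SJ J, rho p r) + (∑ r ∈ SJ J, rho p r) * c) ^ n := by
  have step1 : ∀ f : Fin n → Fin n → Bool, W p f * c ^ cnt J f
      = ∏ i, (rho p (f i) * (if (J.filter fun j => f i j).card = 1 then c else 1)) := by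
    intro f
    unfold W cnt
    rw [Finset.prod_mul_distrib, Finset.prod_ite, Finset.prod_const,
      Finset.prod_const_one, mul_one]
  rw [Finset.sum_congr rfl fun f _ => step1 f]
  have := Finset.prod_univ_sum (fun _ : Fin n => (univ : Finset (Fin n → Bool)))
    (fun _ r => rho p r * (if (J.filter fun j => r j).card = 1 then c else 1))
  rw [Fintype.piFinset_univ] at this
  rw [← this, Finset.prod_const, Finset.card_fin]
  congr 1
  rw [Finset.sum_congr rfl (fun r _ => show rho p r * (if (J.filter fun j => r j).card = 1 then c else 1)
      = (if (J.filter fun j => r j).card = 1 then rho p r * c else rho p r * 1) from by split_ifs <;> ring)]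
  rw [Finset.sum_ite]
  have hsplit := Finset.sum_filter_add_sum_filter_not (univ : Finset (Fin n → Bool))
    (fun r => (J.filter fun j => r j).card = 1) (rho p)
  rw [sum_rho] at hsplit
  rw [← Finset.sum_mul]
  simp only [mul_one]
  have : ∑ x ∈ filter (fun r : Fin n → Bool => ¬(J.filter fun j => r j).card = 1) univ, rho p x
      = 1 - ∑ r ∈ SJ J, rho p r := by
    unfold SJ; linarith [hsplit]
  rw [this]
  unfold SJ
  ring

lemma chernoff_upper {p : ℝ} (hp0 : 0 ≤ p) (hp1 : p ≤ 1) {c : ℝ} (hc : 1 ≤ c) (a : ℝ)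
    (J : Finset (Fin n)) :
    ∑ f ∈ univ.filter (fun f : Fin n → Fin n → Bool => a ≤ (cnt J f : ℝ)), W p f
      ≤ c ^ (-a) * ((1 - ∑ r ∈ SJ J, rho p r) + (∑ r ∈ SJ J, rho p r) * c) ^ n := by
  have hc0 : (0:ℝ) < c := lt_of_lt_of_le one_pos hc
  have key : ∀ f ∈ univ.filter (fun f : Fin n → Fin n → Bool => a ≤ (cnt J f : ℝ)),
      W p f ≤ c ^ (-a) * (W p f * c ^ cnt J f) := by
    intro f hf
    have ha : a ≤ (cnt J f : ℝ) := (Finset.mem_filter.1 hf).2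
    have h1 : (1:ℝ) ≤ c ^ ((cnt J f : ℝ) + -a) := by
      have := Real.rpow_le_rpow_of_exponent_le hc (by linarith : (0:ℝ) ≤ (cnt J f : ℝ) + -a)
      rwa [Real.rpow_zero] at this
    have : c ^ (-a) * (W p f * c ^ cnt J f) = W p f * c ^ ((cnt J f : ℝ) + -a) := by
      rw [Real.rpow_add hc0, ← Real.rpow_natCast c (cnt J f)]
      ring
    rw [this]
    nlinarith [W_nonneg hp0 hp1 f, mul_le_mul_of_nonneg_left h1 (W_nonneg hp0 hp1 f)]
  calc ∑ f ∈ univ.filter (fun f : Fin n → Fin n → Bool => a ≤ (cnt J f : ℝ)), W p f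
      ≤ ∑ f ∈ univ.filter (fun f : Fin n → Fin n → Bool => a ≤ (cnt J f : ℝ)),
          c ^ (-a) * (W p f * c ^ cnt J f) := Finset.sum_le_sum key
    _ = c ^ (-a) * ∑ f ∈ univ.filter (fun f : Fin n → Fin n → Bool => a ≤ (cnt J f : ℝ)),
          W p f * c ^ cnt J f := by rw [Finset.mul_sum]
    _ ≤ c ^ (-a) * ∑ f : Fin n → Fin n → Bool, W p f * c ^ cnt J f := by
        apply mul_le_mul_of_nonneg_left _ (Real.rpow_nonneg hc0.le _)
        apply Finset.sum_le_sum_of_subset_of_nonneg (Finset.filter_subset _ _)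
        intro f _ _
        exact mul_nonneg (W_nonneg hp0 hp1 f) (pow_nonneg hc0.le _)
    _ = c ^ (-a) * ((1 - ∑ r ∈ SJ J, rho p r) + (∑ r ∈ SJ J, rho p r) * c) ^ n := by
        rw [mgf]

lemma chernoff_lower {p : ℝ} (hp0 : 0 ≤ p) (hp1 : p ≤ 1) {c : ℝ} (hc0 : 0 < c) (hc : c ≤ 1)
    (a : ℝ) (J : Finset (Fin n)) :
    ∑ f ∈ univ.filter (fun f : Fin n → Fin n → Bool => (cnt J f : ℝ) ≤ a), W p f
      ≤ c ^ (-a) * ((1 - ∑ r ∈ SJ J, rho p r) + (∑ r ∈ SJ J, rho p r) * c) ^ n := by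
  have key : ∀ f ∈ univ.filter (fun f : Fin n → Fin n → Bool => (cnt J f : ℝ) ≤ a),
      W p f ≤ c ^ (-a) * (W p f * c ^ cnt J f) := by
    intro f hf
    have ha : (cnt J f : ℝ) ≤ a := (Finset.mem_filter.1 hf).2
    have h1 : (1:ℝ) ≤ c ^ ((cnt J f : ℝ) + -a) := by
      have := Real.rpow_le_rpow_of_exponent_ge hc0 hc (by linarith : (cnt J f : ℝ) + -a ≤ 0)
      rwa [Real.rpow_zero] at this
    have : c ^ (-a) * (W p f * c ^ cnt J f) = W p f * c ^ ((cnt J f : ℝ) + -a) := by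
      rw [Real.rpow_add hc0, ← Real.rpow_natCast c (cnt J f)]
      ring
    rw [this]
    nlinarith [W_nonneg hp0 hp1 f, mul_le_mul_of_nonneg_left h1 (W_nonneg hp0 hp1 f)]
  calc ∑ f ∈ univ.filter (fun f : Fin n → Fin n → Bool => (cnt J f : ℝ) ≤ a), W p f
      ≤ ∑ f ∈ univ.filter (fun f : Fin n → Fin n → Bool => (cnt J f : ℝ) ≤ a),
          c ^ (-a) * (W p f * c ^ cnt J f) := Finset.sum_le_sum key
    _ = c ^ (-a) * ∑ f ∈ univ.filter (fun f : Fin n → Fin n → Bool => (cnt J f : ℝ) ≤ a),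
          W p f * c ^ cnt J f := by rw [Finset.mul_sum]
    _ ≤ c ^ (-a) * ∑ f : Fin n → Fin n → Bool, W p f * c ^ cnt J f := by
        apply mul_le_mul_of_nonneg_left _ (Real.rpow_nonneg hc0.le _)
        apply Finset.sum_le_sum_of_subset_of_nonneg (Finset.filter_subset _ _)
        intro f _ _
        exact mul_nonneg (W_nonneg hp0 hp1 f) (pow_nonneg hc0.le _)
    _ = c ^ (-a) * ((1 - ∑ r ∈ SJ J, rho p r) + (∑ r ∈ SJ J, rho p r) * c) ^ n := by
        rw [mgf]

lemma sum_union_le {β : Type*} [DecidableEq β] (s t : Finset β) (f : β → ℝ)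
    (hf : ∀ b, 0 ≤ f b) :
    ∑ x ∈ s ∪ t, f x ≤ ∑ x ∈ s, f x + ∑ x ∈ t, f x := by
  have h1 := Finset.sum_union_inter (s₁ := s) (s₂ := t) (f := f)
  have h2 : 0 ≤ ∑ x ∈ s ∩ t, f x := Finset.sum_nonneg fun b _ => hf b
  linarith

lemma sum_biUnion_le' {α β : Type*} [DecidableEq β] (s : Finset α) (t : α → Finset β)
    (f : β → ℝ) (hf : ∀ b, 0 ≤ f b) :
    ∑ x ∈ s.biUnion t, f x ≤ ∑ a ∈ s, ∑ x ∈ t a, f x := by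
  classical
  induction s using Finset.induction_on with
  | empty => simp
  | insert a s ha ih =>
    rw [Finset.biUnion_insert, Finset.sum_insert ha]
    calc ∑ x ∈ t a ∪ s.biUnion t, f x ≤ ∑ x ∈ t a, f x + ∑ x ∈ s.biUnion t, f x :=
          sum_union_le _ _ f hf
      _ ≤ ∑ x ∈ t a, f x + ∑ a ∈ s, ∑ x ∈ t a, f x := by linarith

lemma q_bounds {l : ℕ} (hl : 1 ≤ l) {p : ℝ} (hp : 0 < p) (hp2 : p ≤ 1/2)
    (hpl : p * l ≤ 1/32) (J : Finset (Fin n)) (hJ : J.card = l) :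
    (31/32) * ((l:ℝ) * p) ≤ ∑ r ∈ SJ J, rho p r ∧ (∑ r ∈ SJ J, rho p r) ≤ (l:ℝ) * p := by
  have hq := sum_rho_S (p := p) J hJ
  have hL1 : (1:ℝ) ≤ (l:ℝ) := by exact_mod_cast hl
  have hp1 : p ≤ 1 := by linarith
  have hpow_le : (1 - p) ^ (l - 1) ≤ 1 := pow_le_one₀ (by linarith) (by linarith)
  have hpow_ge : (1:ℝ) - 1/32 ≤ (1 - p) ^ (l - 1) := by
    have hcast : ((l - 1 : ℕ) : ℝ) = (l:ℝ) - 1 := by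
      rw [Nat.cast_sub hl]; norm_num
    have hb := one_add_mul_le_pow (by linarith : (-2:ℝ) ≤ -p) (l - 1)
    have : (1:ℝ) + ((l - 1 : ℕ) : ℝ) * (-p) = 1 - ((l:ℝ) - 1) * p := by
      rw [hcast]; ring
    rw [this] at hb
    have h32 : ((l:ℝ) - 1) * p ≤ 1/32 := by
      have : (l:ℝ) * p ≤ 1/32 := by rw [mul_comm]; exact hpl
      nlinarith
    calc (1:ℝ) - 1/32 ≤ 1 - ((l:ℝ) - 1) * p := by linarith
      _ ≤ (1 + (-p)) ^ (l - 1) := hb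
      _ = (1 - p) ^ (l - 1) := by ring_nf
  have hlp0 : (0:ℝ) ≤ (l:ℝ) * p := mul_nonneg (by linarith) hp.le
  constructor
  · rw [hq]
    nlinarith [mul_le_mul_of_nonneg_left hpow_ge hlp0]
  · rw [hq]
    nlinarith [mul_le_mul_of_nonneg_left hpow_le hlp0]

lemma tail_up {l : ℕ} (hl : 1 ≤ l) {p : ℝ} (hp : 0 < p) (hp2 : p ≤ 1/2)
    (hpl : p * l ≤ 1/32) (J : Finset (Fin n)) (hJ : J.card = l) :
    ∑ f ∈ univ.filter (fun f : Fin n → Fin n → Bool =>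
        2 * (l:ℝ) * n * p ≤ (cnt J f : ℝ)), W p f
      ≤ Real.exp (-((n:ℝ) * l * p / 4)) := by
  have hp1 : p ≤ 1 := by linarith
  obtain ⟨hqlb, hqub⟩ := q_bounds hl hp hp2 hpl J hJ
  set q := ∑ r ∈ SJ J, rho p r with hqdef
  have hq0 : 0 ≤ q := Finset.sum_nonneg fun r _ => rho_nonneg hp.le hp1 r
  have hN : (0:ℝ) ≤ n := Nat.cast_nonneg n
  have hL1 : (1:ℝ) ≤ (l:ℝ) := by exact_mod_cast hl
  calc ∑ f ∈ univ.filter (fun f : Fin n → Fin n → Bool =>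
          2 * (l:ℝ) * n * p ≤ (cnt J f : ℝ)), W p f
      ≤ (2:ℝ) ^ (-(2 * (l:ℝ) * n * p)) * ((1 - q) + q * 2) ^ n :=
        chernoff_upper hp.le hp1 (by norm_num) _ J
    _ ≤ Real.exp (-((n:ℝ) * l * p / 4)) := by
        have h1 : ((1 - q) + q * 2) ^ n ≤ Real.exp ((n:ℝ) * q) := by
          have e1 : (1 - q) + q * 2 = 1 + q := by ring
          rw [e1, Real.exp_nat_mul]
          exact pow_le_pow_left₀ (by linarith) (by linarith [Real.add_one_le_exp q]) n
        have h2 : (2:ℝ) ^ (-(2 * (l:ℝ) * n * p)) =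
            Real.exp (Real.log 2 * -(2 * (l:ℝ) * n * p)) :=
          Real.rpow_def_of_pos (by norm_num) _
        have hbase : (0:ℝ) ≤ (1 - q) + q * 2 := by linarith
        calc (2:ℝ) ^ (-(2 * (l:ℝ) * n * p)) * ((1 - q) + q * 2) ^ n
            ≤ Real.exp (Real.log 2 * -(2 * (l:ℝ) * n * p)) * Real.exp ((n:ℝ) * q) := by
              rw [h2]
              exact mul_le_mul_of_nonneg_left h1 (Real.exp_nonneg _)
          _ = Real.exp (Real.log 2 * -(2 * (l:ℝ) * n * p) + (n:ℝ) * q) :=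
              (Real.exp_add _ _).symm
          _ ≤ Real.exp (-((n:ℝ) * l * p / 4)) := by
              rw [Real.exp_le_exp]
              have hlog := Real.log_two_gt_d9
              have hnq : (n:ℝ) * q ≤ (n:ℝ) * ((l:ℝ) * p) :=
                mul_le_mul_of_nonneg_left hqub hN
              nlinarith [mul_nonneg (mul_nonneg hN (by linarith : (0:ℝ) ≤ (l:ℝ))) hp.le]

lemma tail_low {l : ℕ} (hl : 1 ≤ l) {p : ℝ} (hp : 0 < p) (hp2 : p ≤ 1/2)
    (hpl : p * l ≤ 1/32) (J : Finset (Fin n)) (hJ : J.card = l) :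
    ∑ f ∈ univ.filter (fun f : Fin n → Fin n → Bool =>
        (cnt J f : ℝ) ≤ (l:ℝ) * p * n / 16), W p f
      ≤ Real.exp (-((n:ℝ) * l * p / 4)) := by
  have hp1 : p ≤ 1 := by linarith
  obtain ⟨hqlb, hqub⟩ := q_bounds hl hp hp2 hpl J hJ
  set q := ∑ r ∈ SJ J, rho p r with hqdef
  have hq0 : 0 ≤ q := Finset.sum_nonneg fun r _ => rho_nonneg hp.le hp1 r
  have hN : (0:ℝ) ≤ n := Nat.cast_nonneg n
  have hL1 : (1:ℝ) ≤ (l:ℝ) := by exact_mod_cast hl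
  have hq32 : q ≤ 1/32 := by
    have : (l:ℝ) * p ≤ 1/32 := by rw [mul_comm] at hpl; exact hpl
    linarith
  calc ∑ f ∈ univ.filter (fun f : Fin n → Fin n → Bool =>
          (cnt J f : ℝ) ≤ (l:ℝ) * p * n / 16), W p f
      ≤ (1/16 : ℝ) ^ (-((l:ℝ) * p * n / 16)) * ((1 - q) + q * (1/16)) ^ n :=
        chernoff_lower hp.le hp1 (by norm_num) (by norm_num) _ J
    _ ≤ Real.exp (-((n:ℝ) * l * p / 4)) := by
        have h1 : ((1 - q) + q * (1/16)) ^ n ≤ Real.exp ((n:ℝ) * (-(15/16) * q)) := by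
          have e1 : (1 - q) + q * (1/16) = 1 + (-(15/16) * q) := by ring
          rw [e1, Real.exp_nat_mul]
          exact pow_le_pow_left₀ (by linarith) (by linarith [Real.add_one_le_exp (-(15/16) * q)]) n
        have h2 : (1/16 : ℝ) ^ (-((l:ℝ) * p * n / 16)) =
            Real.exp (Real.log (1/16 : ℝ) * -((l:ℝ) * p * n / 16)) :=
          Real.rpow_def_of_pos (by norm_num) _
        have hlog16 : Real.log (1/16 : ℝ) = -(4 * Real.log 2) := by
          rw [one_div, Real.log_inv, show (16:ℝ) = 2 ^ (4:ℕ) by norm_num, Real.log_pow]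
          norm_num
        calc (1/16 : ℝ) ^ (-((l:ℝ) * p * n / 16)) * ((1 - q) + q * (1/16)) ^ n
            ≤ Real.exp (Real.log (1/16 : ℝ) * -((l:ℝ) * p * n / 16)) *
                Real.exp ((n:ℝ) * (-(15/16) * q)) := by
              rw [h2]
              exact mul_le_mul_of_nonneg_left h1 (Real.exp_nonneg _)
          _ = Real.exp (Real.log (1/16 : ℝ) * -((l:ℝ) * p * n / 16) +
                (n:ℝ) * (-(15/16) * q)) := (Real.exp_add _ _).symm
          _ ≤ Real.exp (-((n:ℝ) * l * p / 4)) := by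
              rw [Real.exp_le_exp, hlog16]
              have hlog := Real.log_two_lt_d9
              have hlog0 := Real.log_pos (by norm_num : (1:ℝ) < 2)
              have hnq : (n:ℝ) * ((31/32) * ((l:ℝ) * p)) ≤ (n:ℝ) * q :=
                mul_le_mul_of_nonneg_left hqlb hN
              nlinarith [mul_nonneg (mul_nonneg hN (by linarith : (0:ℝ) ≤ (l:ℝ))) hp.le]

theorem model (n l : ℕ) (hl : 1 ≤ l) (p : ℝ) (hp : 0 < p) (hp2 : p ≤ 1/2)
    (hpl : p * l ≤ 1/32) :
    ∑ f ∈ univ.filter (fun f : Fin n → Fin n → Bool =>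
        ¬ ∀ J : Finset (Fin n), J.card = l →
          ((l:ℝ) * p * n / 16 ≤ (cnt J f : ℝ) ∧ (cnt J f : ℝ) ≤ 2 * (l:ℝ) * n * p)), W p f
      ≤ 2 * (n.choose l : ℝ) * Real.exp (-((n:ℝ) * l * p / 4)) := by
  classical
  have hp1 : p ≤ 1 := by linarith
  set lo := fun J : Finset (Fin n) =>
    univ.filter (fun f : Fin n → Fin n → Bool => (cnt J f : ℝ) ≤ (l:ℝ) * p * n / 16) with hlo
  set hi := fun J : Finset (Fin n) =>
    univ.filter (fun f : Fin n → Fin n → Bool => 2 * (l:ℝ) * n * p ≤ (cnt J f : ℝ)) with hhi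
  have hsub : (univ.filter (fun f : Fin n → Fin n → Bool =>
      ¬ ∀ J : Finset (Fin n), J.card = l →
        ((l:ℝ) * p * n / 16 ≤ (cnt J f : ℝ) ∧ (cnt J f : ℝ) ≤ 2 * (l:ℝ) * n * p)))
      ⊆ (powersetCard l (univ : Finset (Fin n))).biUnion (fun J => lo J ∪ hi J) := by
    intro f hf
    simp only [mem_filter, mem_univ, true_and] at hf
    push_neg at hf
    obtain ⟨J, hJcard, hJ⟩ := hf
    apply Finset.mem_biUnion.2
    refine ⟨J, Finset.mem_powersetCard_univ.2 hJcard, ?_⟩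
    by_cases hlow : (l:ℝ) * p * n / 16 ≤ (cnt J f : ℝ)
    · exact Finset.mem_union_right _
        (Finset.mem_filter.2 ⟨Finset.mem_univ f, (hJ hlow).le⟩)
    · exact Finset.mem_union_left _
        (Finset.mem_filter.2 ⟨Finset.mem_univ f, (not_le.1 hlow).le⟩)
  calc ∑ f ∈ univ.filter (fun f : Fin n → Fin n → Bool =>
        ¬ ∀ J : Finset (Fin n), J.card = l →
          ((l:ℝ) * p * n / 16 ≤ (cnt J f : ℝ) ∧ (cnt J f : ℝ) ≤ 2 * (l:ℝ) * n * p)), W p f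
      ≤ ∑ f ∈ (powersetCard l (univ : Finset (Fin n))).biUnion (fun J => lo J ∪ hi J),
          W p f :=
        Finset.sum_le_sum_of_subset_of_nonneg hsub (fun f _ _ => W_nonneg hp.le hp1 f)
    _ ≤ ∑ J ∈ powersetCard l (univ : Finset (Fin n)), ∑ f ∈ lo J ∪ hi J, W p f :=
        sum_biUnion_le' _ _ _ (W_nonneg hp.le hp1)
    _ ≤ ∑ J ∈ powersetCard l (univ : Finset (Fin n)),
          2 * Real.exp (-((n:ℝ) * l * p / 4)) := by
        apply Finset.sum_le_sum
        intro J hJ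
        have hJc : J.card = l := Finset.mem_powersetCard_univ.1 hJ
        have h1 := tail_low hl hp hp2 hpl J hJc
        have h2 := tail_up hl hp hp2 hpl J hJc
        have h3 := sum_union_le (lo J) (hi J) (W p) (W_nonneg hp.le hp1)
        rw [hlo, hhi] at h3 ⊢
        simp only at h1 h2 h3 ⊢
        linarith
    _ = 2 * (n.choose l : ℝ) * Real.exp (-((n:ℝ) * l * p / 4)) := by
        rw [Finset.sum_const, Finset.card_powersetCard, Finset.card_univ, Fintype.card_fin,
          nsmul_eq_mul]
        ring

def emb (f : Fin n → Fin n → Bool) : Matrix (Fin n) (Fin n) ℝ :=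
  Matrix.of fun i j => if f i j then 1 else 0

lemma emb_entries (f : Fin n → Fin n → Bool) : ∀ i j, emb f i j = 0 ∨ emb f i j = 1 := by
  intro i j
  by_cases h : f i j <;> simp [emb, h]

lemma W_eq (p : ℝ) (f : Fin n → Fin n → Bool) :
    W p f = p ^ (Finset.univ.filter
        (fun ij : Fin n × Fin n => emb f ij.1 ij.2 = 1)).card *
      (1 - p) ^ (Finset.univ.filter
        (fun ij : Fin n × Fin n => emb f ij.1 ij.2 = 0)).card := by
  have h1 : (Finset.univ.filter (fun ij : Fin n × Fin n => emb f ij.1 ij.2 = 1))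
      = Finset.univ.filter (fun ij : Fin n × Fin n => f ij.1 ij.2 = true) := by
    apply Finset.filter_congr
    intro ij _
    by_cases h : f ij.1 ij.2 <;> simp [emb, h]
  have h0 : (Finset.univ.filter (fun ij : Fin n × Fin n => emb f ij.1 ij.2 = 0))
      = Finset.univ.filter (fun ij : Fin n × Fin n => ¬ f ij.1 ij.2 = true) := by
    apply Finset.filter_congr
    intro ij _
    by_cases h : f ij.1 ij.2 <;> simp [emb, h]
  have hW : W p f = ∏ ij : Fin n × Fin n, g p (f ij.1 ij.2) := by
    rw [W]
    rw [Fintype.prod_prod_type]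
    rfl
  rw [hW, h1, h0]
  have : ∀ ij : Fin n × Fin n, g p (f ij.1 ij.2)
      = if f ij.1 ij.2 = true then p else (1 - p) := by
    intro ij; rfl
  rw [Finset.prod_congr rfl fun ij _ => this ij, Finset.prod_ite, Finset.prod_const,
    Finset.prod_const]

end RSC

/-- With high probability, for every `J` of cardinality `ℓ`, the number of rows having exactly
one `1` in the columns indexed by `J` lies in `[ℓpn/16, 2ℓnp]`. -/
theorem row_support_count :
    ∀ n l : ℕ, 1 ≤ l → ∀ p : ℝ, 0 < p → p ≤ 1 / 2 → p * l ≤ 1 / 32 →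
      ∀ (Ω : Type) [MeasurableSpace Ω] (μ : Measure Ω), IsProbabilityMeasure μ →
        ∀ M : Ω → Matrix (Fin n) (Fin n) ℝ, IsBernoulliMatrix μ M p →
          1 - 2 * (n.choose l : ℝ) * Real.exp (-((n : ℝ) * l * p / 4)) ≤
            (μ {ω | ∀ J : Finset (Fin n), J.card = l →
                (l : ℝ) * p * n / 16 ≤
                    ((Finset.univ.filter fun i : Fin n =>
                      (J.filter fun j => M ω i j ≠ 0).card = 1).card : ℝ) ∧
                  ((Finset.univ.filter fun i : Fin n =>
                      (J.filter fun j => M ω i j ≠ 0).card = 1).card : ℝ) ≤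
                    2 * l * n * p}).toReal := by
  classical
  intro n l hl p hp hp2 hpl Ω _ μ hμ M hM
  obtain ⟨hM01, hMA⟩ := hM
  set E := {ω | ∀ J : Finset (Fin n), J.card = l →
      (l : ℝ) * p * n / 16 ≤
          ((Finset.univ.filter fun i : Fin n =>
            (J.filter fun j => M ω i j ≠ 0).card = 1).card : ℝ) ∧
        ((Finset.univ.filter fun i : Fin n =>
            (J.filter fun j => M ω i j ≠ 0).card = 1).card : ℝ) ≤
          2 * l * n * p} with hE
  set badF : Finset (Fin n → Fin n → Bool) := Finset.univ.filter
    (fun f : Fin n → Fin n → Bool =>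
      ¬ ∀ J : Finset (Fin n), J.card = l →
        ((l:ℝ) * p * n / 16 ≤ (RSC.cnt J f : ℝ) ∧
          (RSC.cnt J f : ℝ) ≤ 2 * (l:ℝ) * n * p)) with hbadF
  set B : ℝ := ∑ f ∈ badF, RSC.W p f with hBdef
  have hp1 : p ≤ 1 := by linarith
  have hB0 : 0 ≤ B := Finset.sum_nonneg fun f _ => RSC.W_nonneg hp.le hp1 f
  have hBle : B ≤ 2 * (n.choose l : ℝ) * Real.exp (-((n : ℝ) * l * p / 4)) :=
    RSC.model n l hl p hp hp2 hpl
  -- complement is covered by bad matrices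
  have hEc : Eᶜ ⊆ ⋃ f ∈ badF, {ω | M ω = RSC.emb f} := by
    intro ω hω
    simp only [hE, Set.mem_compl_iff, Set.mem_setOf_eq] at hω
    set f : Fin n → Fin n → Bool := fun i j => decide (M ω i j = 1) with hf
    have hfM : M ω = RSC.emb f := by
      funext i j
      rcases hM01 ω i j with h | h <;>
        simp [RSC.emb, hf, h]
    have hcnt : ∀ J : Finset (Fin n),
        RSC.cnt J f = (Finset.univ.filter fun i : Fin n =>
          (J.filter fun j => M ω i j ≠ 0).card = 1).card := by
      intro J
      unfold RSC.cnt
      congr 1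
      apply Finset.filter_congr
      intro i _
      have : (J.filter fun j => f i j) = (J.filter fun j => M ω i j ≠ 0) := by
        apply Finset.filter_congr
        intro j _
        rcases hM01 ω i j with h | h <;> simp [hf, h]
      rw [this]
    have hfbad : f ∈ badF := by
      rw [hbadF]
      simp only [Finset.mem_filter, Finset.mem_univ, true_and]
      intro hcon
      apply hω
      intro J hJ
      have := hcon J hJ
      rw [hcnt J] at this
      exact this
    exact Set.mem_biUnion hfbad (by simpa using hfM)
  have hmeas : ∀ f : Fin n → Fin n → Bool,
      μ {ω | M ω = RSC.emb f} = ENNReal.ofReal (RSC.W p f) := by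
    intro f
    rw [hMA (RSC.emb f) (RSC.emb_entries f), ← RSC.W_eq]
  have hEcB : μ Eᶜ ≤ ENNReal.ofReal B := by
    calc μ Eᶜ ≤ μ (⋃ f ∈ badF, {ω | M ω = RSC.emb f}) := measure_mono hEc
      _ ≤ ∑ f ∈ badF, μ {ω | M ω = RSC.emb f} := measure_biUnion_finset_le _ _
      _ = ∑ f ∈ badF, ENNReal.ofReal (RSC.W p f) :=
          Finset.sum_congr rfl fun f _ => hmeas f
      _ = ENNReal.ofReal B := by
          rw [hBdef, ENNReal.ofReal_sum_of_nonneg fun f _ => RSC.W_nonneg hp.le hp1 f]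
  have hunion : (1 : ℝ≥0∞) ≤ μ E + ENNReal.ofReal B := by
    calc (1 : ℝ≥0∞) = μ Set.univ := (measure_univ).symm
      _ = μ (E ∪ Eᶜ) := by rw [Set.union_compl_self]
      _ ≤ μ E + μ Eᶜ := measure_union_le _ _
      _ ≤ μ E + ENNReal.ofReal B := add_le_add_right hEcB _
  have hfin : μ E ≠ ⊤ := measure_ne_top μ E
  have h1 : (1 : ℝ) ≤ (μ E).toReal + B := by
    have := ENNReal.toReal_mono
      (by simp [hfin, ENNReal.add_ne_top] : μ E + ENNReal.ofReal B ≠ ⊤) hunion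
    rwa [ENNReal.toReal_one, ENNReal.toReal_add hfin ENNReal.ofReal_ne_top,
      ENNReal.toReal_ofReal hB0] at this
  linarith
end

section
/- Let z be a nonzero complex number, let ε ∈ [0, |z|/2], and let W be a complex-valued random variable with E W = 0 and |W| ≤ ε almost surely. Then |E|z + W| − |z|| ≤ ε²/|z|. -/
open MeasureTheory

lemma ptwise_bound (z w : ℂ) (ε : ℝ) (hz : z ≠ 0) (hε : ε ≤ ‖z‖ / 2)
    (hw : ‖w‖ ≤ ε) :
    0 ≤ ‖z + w‖ - ‖z‖ - ((starRingEnd ℂ) z * w).re / ‖z‖ ∧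
    ‖z + w‖ - ‖z‖ - ((starRingEnd ℂ) z * w).re / ‖z‖
      ≤ ε ^ 2 / ‖z‖ := by
  set a := ‖z‖ with ha_def
  have ha : 0 < a := norm_pos_iff.mpr hz
  set s := ‖z + w‖ with hs_def
  have hs0 : 0 ≤ s := norm_nonneg _
  set r := ((starRingEnd ℂ) z * w).re with hr_def
  have hre : ((starRingEnd ℂ) z * w).re = (z * (starRingEnd ℂ) w).re := by
    simp [Complex.mul_re]
  have hsq : s ^ 2 = a ^ 2 + 2 * r + (‖w‖) ^ 2 := by
    rw [hs_def, Complex.sq_norm, Complex.normSq_add, ← Complex.sq_norm, ← Complex.sq_norm,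
      hr_def, hre]
    ring
  have hrb : |r| ≤ a * ‖w‖ := by
    calc |r| ≤ ‖(starRingEnd ℂ) z * w‖ := Complex.abs_re_le_norm _
    _ = a * ‖w‖ := by rw [norm_mul, Complex.norm_conj]
  have hw0 : 0 ≤ ‖w‖ := norm_nonneg _
  have hr2 : r ^ 2 ≤ a ^ 2 * (‖w‖) ^ 2 := by
    nlinarith [abs_nonneg r, sq_abs r]
  have hεa : ε ≤ a / 2 := hε
  have hw2 : (‖w‖) ^ 2 ≤ ε ^ 2 := by nlinarith
  have haux1 : a ^ 2 / 2 ≤ a ^ 2 + r := by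
    have h1 : a * ‖w‖ ≤ a * ε := mul_le_mul_of_nonneg_left hw ha.le
    have h2 : a * ε ≤ a * (a / 2) := mul_le_mul_of_nonneg_left hεa ha.le
    have h3 := abs_le.mp hrb
    nlinarith
  have haux2 : 0 < a ^ 2 + r + a * s := by nlinarith [mul_nonneg ha.le hs0]
  have hsq2 : (a * s) ^ 2 = (a ^ 2 + r) ^ 2 + (a ^ 2 * (‖w‖) ^ 2 - r ^ 2) := by
    linear_combination a ^ 2 * hsq
  have hA : a ^ 2 + r ≤ a * s := by nlinarith [hr2, haux2, hsq2]
  have hkey : (a * s - a ^ 2 - r) * (a * s + a ^ 2 + r)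
      = a ^ 2 * (‖w‖) ^ 2 - r ^ 2 := by linear_combination hsq2
  have hnn : 0 ≤ a * s - a ^ 2 - r := by linarith
  have hsum : a ^ 2 ≤ a * s + a ^ 2 + r := by linarith
  have hB : a * s - a ^ 2 - r ≤ ε ^ 2 := by
    have hm := mul_le_mul_of_nonneg_right hsum hnn
    nlinarith [hkey, hr2, hw2, hm, pow_pos ha 2, sq_nonneg r]
  have h1 : s - a - r / a = (a * s - a ^ 2 - r) / a := by field_simp
  constructor
  · rw [h1]; exact div_nonneg hnn ha.le
  · rw [h1]; gcongr

theorem expectation_abs_perturbation :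
    ∀ (Ω : Type) [MeasurableSpace Ω] (μ : Measure Ω), IsProbabilityMeasure μ →
      ∀ (z : ℂ) (ε : ℝ), z ≠ 0 → 0 ≤ ε → ε ≤ ‖z‖ / 2 →
        ∀ W : Ω → ℂ, Measurable W → (∫ ω, W ω ∂μ) = 0 →
          (∀ᵐ ω ∂μ, ‖W ω‖ ≤ ε) →
          |(∫ ω, ‖z + W ω‖ ∂μ) - ‖z‖| ≤ ε ^ 2 / ‖z‖ := by
  intro Ω _ μ hμ z ε hz hε0 hε W hWm hEW hWb
  set a := ‖z‖ with ha_def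
  have ha : 0 < a := norm_pos_iff.mpr hz
  have hW_int : Integrable W μ := by
    refine Integrable.mono' (integrable_const ε) hWm.aestronglyMeasurable ?_
    filter_upwards [hWb] with ω hω
    simpa using hω
  have h_abs_int : Integrable (fun ω => ‖z + W ω‖) μ := by
    refine Integrable.mono' (integrable_const (a + ε)) ?_ ?_
    · exact (continuous_norm.measurable.comp
        ((measurable_const.add hWm))).aestronglyMeasurable
    · filter_upwards [hWb] with ω hω
      have := norm_add_le z (W ω)
      simp only [Real.norm_eq_abs, abs_of_nonneg (norm_nonneg _)]
      linarith
  set t : Ω → ℝ := fun ω => ((starRingEnd ℂ) z * W ω).re / a with ht_def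
  have h_cz_int : Integrable (fun ω => (starRingEnd ℂ) z * W ω) μ := hW_int.const_mul _
  have h_t_int : Integrable t μ := by
    have : Integrable (fun ω => ((starRingEnd ℂ) z * W ω).re) μ := h_cz_int.re
    exact this.div_const a
  have h_t_zero : (∫ ω, t ω ∂μ) = 0 := by
    have h1 : (∫ ω, ((starRingEnd ℂ) z * W ω).re ∂μ)
        = ((∫ ω, (starRingEnd ℂ) z * W ω ∂μ) : ℂ).re := by
      exact_mod_cast (integral_re h_cz_int)
    have h2 : (∫ ω, (starRingEnd ℂ) z * W ω ∂μ) = 0 := by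
      rw [integral_const_mul, hEW, mul_zero]
    simp only [ht_def]
    rw [integral_div, h1, h2]
    simp
  have hsub_int : Integrable (fun ω => ‖z + W ω‖ - a) μ :=
    h_abs_int.sub (integrable_const a)
  have hg_int : Integrable (fun ω => ‖z + W ω‖ - a - t ω) μ :=
    hsub_int.sub h_t_int
  have key : (∫ ω, (‖z + W ω‖ - a - t ω) ∂μ)
      = (∫ ω, ‖z + W ω‖ ∂μ) - a := by
    rw [integral_sub hsub_int h_t_int, h_t_zero,
      integral_sub h_abs_int (integrable_const a), integral_const]
    simp [measure_univ]
  rw [← key, abs_le]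
  have hptw : ∀ᵐ ω ∂μ, 0 ≤ ‖z + W ω‖ - a - t ω ∧
      ‖z + W ω‖ - a - t ω ≤ ε ^ 2 / a := by
    filter_upwards [hWb] with ω hω
    exact ptwise_bound z (W ω) ε hz hε hω
  constructor
  · have h1 : 0 ≤ ∫ ω, (‖z + W ω‖ - a - t ω) ∂μ :=
      integral_nonneg_of_ae (hptw.mono fun ω h => h.1)
    have : 0 ≤ ε ^ 2 / a := by positivity
    linarith
  · calc (∫ ω, (‖z + W ω‖ - a - t ω) ∂μ) ≤ ∫ _, ε ^ 2 / a ∂μ :=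
        integral_mono_ae hg_int (integrable_const _) (hptw.mono fun ω h => h.2)
    _ = ε ^ 2 / a := by simp [measure_univ]
end
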